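/- arXiv:math/0511226 — 8 statements merged into one kernel-verified Lean document; each statement's English description precedes it below -/
import Mathlib

section
/- For every p ∈ (0,1), q = 1−p, every positive integer n, and every real r > 0, the r-th inverse moment of the positive binomial distribution admits the integral representation f_r(n) = (n·p/Γ(r+1)) ∫₀^∞ x^r e^{−x} (q + p·e^{−x})^{n−1} dx. -/
open MeasureTheory Real Finset

lemma aux_integrable (r : ℝ) (hr : 0 < r) (k : ℕ) :
    IntegrableOn (fun x : ℝ => x ^ r * Real.exp (-(((k : ℝ) + 1) * x))) (Set.Ioi 0) := by
  have h := Real.GammaIntegral_convergent (s := r + 1) (by linarith)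
  simp only [add_sub_cancel_right] at h
  refine Integrable.mono' h ?_ ?_
  · apply Measurable.aestronglyMeasurable
    fun_prop
  · filter_upwards [ae_restrict_mem measurableSet_Ioi] with x hx
    have hx0 : (0:ℝ) < x := hx
    have h1 : Real.exp (-(((k : ℝ) + 1) * x)) ≤ Real.exp (-x) := by
      apply Real.exp_le_exp.mpr
      nlinarith [Nat.cast_nonneg (α := ℝ) k]
    have h2 : (0:ℝ) ≤ x ^ r := Real.rpow_nonneg hx0.le r
    rw [Real.norm_eq_abs, abs_of_nonneg (by positivity)]
    calc x ^ r * Real.exp (-(((k : ℝ) + 1) * x)) ≤ x ^ r * Real.exp (-x) :=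
          mul_le_mul_of_nonneg_left h1 h2
      _ = Real.exp (-x) * x ^ r := mul_comm _ _

lemma aux_key (r : ℝ) (hr : 0 < r) (k : ℕ) :
    ∫ x in Set.Ioi (0:ℝ), x ^ r * Real.exp (-(((k : ℝ) + 1) * x))
      = (1 / ((k : ℝ) + 1)) ^ (r + 1) * Real.Gamma (r + 1) := by
  have := Real.integral_rpow_mul_exp_neg_mul_Ioi (a := r + 1) (r := (k : ℝ) + 1)
    (by linarith) (by positivity)
  simpa [add_sub_cancel_right] using this

/-- For `p ∈ (0,1)`, `q = 1 - p`, positive integer `n` and real `r > 0`,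
the `r`-th inverse moment of the positive binomial distribution satisfies
`f_r(n) = (np/Γ(r+1)) ∫₀^∞ x^r e^{-x} (q + p e^{-x})^{n-1} dx`. -/
theorem inverse_moment_binomial_integral_repr'
    (p q : ℝ) (hp : p ∈ Set.Ioo (0:ℝ) 1) (hq : q = 1 - p)
    (n : ℕ) (hn : 0 < n) (r : ℝ) (hr : 0 < r) :
    ∑ i ∈ Finset.Icc 1 n, (n.choose i : ℝ) * p ^ i * q ^ (n - i) / (i : ℝ) ^ r
      = ((n : ℝ) * p / Real.Gamma (r + 1)) *
        ∫ x in Set.Ioi (0:ℝ),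
          x ^ r * Real.exp (-x) * (q + p * Real.exp (-x)) ^ (n - 1) := by
  obtain ⟨m, rfl⟩ : ∃ m, n = m + 1 := ⟨n - 1, by omega⟩
  obtain ⟨hp0, hp1⟩ := hp
  have hΓ : 0 < Real.Gamma (r + 1) := Real.Gamma_pos_of_pos (by linarith)
  -- expand the integral
  have hint : ∫ x in Set.Ioi (0:ℝ),
        x ^ r * Real.exp (-x) * (q + p * Real.exp (-x)) ^ (m + 1 - 1)
      = ∑ k ∈ Finset.range (m + 1),
          ((m.choose k : ℝ) * p ^ k * q ^ (m - k)) *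
            ((1 / ((k : ℝ) + 1)) ^ (r + 1) * Real.Gamma (r + 1)) := by
    have hfun : ∀ x : ℝ,
        x ^ r * Real.exp (-x) * (q + p * Real.exp (-x)) ^ (m + 1 - 1)
          = ∑ k ∈ Finset.range (m + 1),
              ((m.choose k : ℝ) * p ^ k * q ^ (m - k)) *
                (x ^ r * Real.exp (-(((k : ℝ) + 1) * x))) := by
      intro x
      rw [show (m + 1 - 1) = m from rfl, add_comm q, add_pow, Finset.mul_sum]
      refine Finset.sum_congr rfl fun k hk => ?_
      have he : Real.exp (-(((k : ℝ) + 1) * x)) = Real.exp (-x) ^ (k + 1) := by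
        rw [← Real.exp_nat_mul]
        congr 1
        push_cast
        ring
      rw [he, pow_succ, mul_pow]
      ring
    calc ∫ x in Set.Ioi (0:ℝ),
          x ^ r * Real.exp (-x) * (q + p * Real.exp (-x)) ^ (m + 1 - 1)
        = ∫ x in Set.Ioi (0:ℝ), ∑ k ∈ Finset.range (m + 1),
            ((m.choose k : ℝ) * p ^ k * q ^ (m - k)) *
              (x ^ r * Real.exp (-(((k : ℝ) + 1) * x))) := by
          exact integral_congr_ae (ae_of_all _ hfun)
      _ = ∑ k ∈ Finset.range (m + 1), ∫ x in Set.Ioi (0:ℝ),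
            ((m.choose k : ℝ) * p ^ k * q ^ (m - k)) *
              (x ^ r * Real.exp (-(((k : ℝ) + 1) * x))) :=
          integral_finset_sum _ (fun k _ => (aux_integrable r hr k).const_mul _)
      _ = ∑ k ∈ Finset.range (m + 1),
            ((m.choose k : ℝ) * p ^ k * q ^ (m - k)) *
              ((1 / ((k : ℝ) + 1)) ^ (r + 1) * Real.Gamma (r + 1)) := by
          refine Finset.sum_congr rfl fun k _ => ?_
          rw [MeasureTheory.integral_const_mul, aux_key r hr k]
  rw [hint]
  -- reindex the LHS
  have hmap : Finset.Icc 1 (m + 1)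
      = Finset.map ⟨fun k => k + 1, Nat.succ_injective⟩ (Finset.range (m + 1)) := by
    ext i
    simp only [Finset.mem_Icc, Finset.mem_map, Finset.mem_range, Function.Embedding.coeFn_mk]
    constructor
    · rintro ⟨h1, h2⟩
      exact ⟨i - 1, by omega, by omega⟩
    · rintro ⟨a, ha, rfl⟩
      omega
  rw [hmap, Finset.sum_map, Finset.mul_sum]
  refine Finset.sum_congr rfl fun k hk => ?_
  simp only [Function.Embedding.coeFn_mk]
  have hk' : k ≤ m := by simpa using Nat.lt_succ_iff.mp (Finset.mem_range.mp hk)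
  have hch : ((m + 1 : ℕ) : ℝ) * (m.choose k : ℝ)
      = ((m + 1).choose (k + 1) : ℝ) * ((k : ℝ) + 1) := by
    exact_mod_cast Nat.add_one_mul_choose_eq m k
  have hsub : m + 1 - (k + 1) = m - k := by omega
  have hk1 : (0:ℝ) < (k : ℝ) + 1 := by positivity
  have hrpow : ((k : ℝ) + 1) ^ (r + 1) = ((k : ℝ) + 1) ^ r * ((k : ℝ) + 1) := by
    rw [Real.rpow_add hk1, Real.rpow_one]
  have hone : (1 / ((k : ℝ) + 1)) ^ (r + 1) = 1 / (((k : ℝ) + 1) ^ (r + 1)) := by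
    rw [one_div, Real.inv_rpow hk1.le, one_div]
  have hcast : ((k + 1 : ℕ) : ℝ) = (k : ℝ) + 1 := by push_cast; ring
  rw [hsub, hone, hrpow, hcast]
  have hrk : (0:ℝ) < ((k : ℝ) + 1) ^ r := Real.rpow_pos_of_pos hk1 r
  field_simp
  push_cast at hch ⊢
  linear_combination (- p ^ (k + 1) * q ^ (m - k)) * hch
end

section
/- Fix a positive integer n and an integer k ≥ 1. Define M_k : (0,1) → ℝ by M_k(p) = Σ_{i=0}^n C(n,i) p^i (1−p)^{n−i} (i − np)^k, the k-th central moment of the binomial distribution viewed as a function of p. Then M_k is differentiable on (0,1) and for all p ∈ (0,1): M_{k+1}(p) = p(1−p)·( M_k′(p) + n·k·M_{k−1}(p) ). -/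
open Real Finset

private lemma term_id (n i k : ℕ) (hi : i ≤ n) (hn : 0 < n) (hk : 1 ≤ k) (p c : ℝ) :
    c * p ^ i * (1 - p) ^ (n - i) * ((i : ℝ) - n * p) ^ (k + 1)
    = p * (1 - p) *
      ((c * (↑i * p ^ (i - 1)) * (1 - p) ^ (n - i) * ((i : ℝ) - n * p) ^ k
        + c * p ^ i * (↑(n - i) * (1 - p) ^ (n - i - 1) * (-1)) * ((i : ℝ) - n * p) ^ k
        + c * p ^ i * (1 - p) ^ (n - i) * (↑k * ((i : ℝ) - n * p) ^ (k - 1) * (-(n : ℝ))))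
       + (n : ℝ) * k * (c * p ^ i * (1 - p) ^ (n - i) * ((i : ℝ) - n * p) ^ (k - 1))) := by
  obtain ⟨m, rfl⟩ : ∃ m, k = m + 1 := ⟨k - 1, (Nat.succ_pred_eq_of_pos hk).symm⟩
  simp only [Nat.add_sub_cancel]
  rcases Nat.eq_zero_or_pos i with rfl | hi0
  · obtain ⟨b, rfl⟩ : ∃ b, n = b + 1 := ⟨n - 1, (Nat.succ_pred_eq_of_pos hn).symm⟩
    simp only [Nat.sub_zero, Nat.add_sub_cancel, Nat.cast_zero, pow_zero, Nat.cast_add,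
      Nat.cast_one]
    ring
  · obtain ⟨a, rfl⟩ : ∃ a, i = a + 1 := ⟨i - 1, (Nat.succ_pred_eq_of_pos hi0).symm⟩
    rcases eq_or_lt_of_le hi with rfl | hlt
    · simp only [Nat.sub_self, Nat.cast_zero, pow_zero, Nat.add_sub_cancel, Nat.zero_sub,
        Nat.cast_add, Nat.cast_one]
      ring
    · obtain ⟨b, rfl⟩ : ∃ b, n = (a + 1) + b + 1 := by
        refine ⟨n - (a + 1) - 1, ?_⟩
        omega
      have h1 : (a + 1) + b + 1 - (a + 1) = b + 1 := by omega
      have h2 : (a + 1) + b + 1 - (a + 1) - 1 = b := by omega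
      simp only [h1, h2, Nat.add_sub_cancel]
      push_cast
      ring

/-- The central moments of the binomial distribution, as functions of `p`,
are differentiable on `(0,1)` and satisfy the recursion
`M_{k+1}(p) = p(1-p) (M_k'(p) + n k M_{k-1}(p))`. -/
theorem binomial_central_moment_recursion_in_p
    (n : ℕ) (hn : 0 < n) (k : ℕ) (hk : 1 ≤ k)
    (M : ℕ → ℝ → ℝ)
    (hM : ∀ (j : ℕ) (p : ℝ), M j p =
      ∑ i ∈ Finset.range (n + 1),
        (n.choose i : ℝ) * p ^ i * (1 - p) ^ (n - i) * ((i : ℝ) - n * p) ^ j) :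
    DifferentiableOn ℝ (M k) (Set.Ioo (0:ℝ) 1) ∧
    ∀ p ∈ Set.Ioo (0:ℝ) 1,
      M (k + 1) p = p * (1 - p) * (deriv (M k) p + n * k * M (k - 1) p) := by
  have key : ∀ p : ℝ, HasDerivAt (M k)
      (∑ i ∈ Finset.range (n + 1),
        ((n.choose i : ℝ) * (↑i * p ^ (i - 1)) * (1 - p) ^ (n - i) * ((i : ℝ) - n * p) ^ k
         + (n.choose i : ℝ) * p ^ i * (↑(n - i) * (1 - p) ^ (n - i - 1) * (-1)) * ((i : ℝ) - n * p) ^ k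
         + (n.choose i : ℝ) * p ^ i * (1 - p) ^ (n - i) * (↑k * ((i : ℝ) - n * p) ^ (k - 1) * (-(n : ℝ))))) p := by
    intro p
    have hMk : M k = fun p => ∑ i ∈ Finset.range (n + 1),
        (n.choose i : ℝ) * p ^ i * (1 - p) ^ (n - i) * ((i : ℝ) - n * p) ^ k := funext (hM k)
    rw [hMk]
    apply HasDerivAt.fun_sum
    intro i _
    have h1 : HasDerivAt (fun p : ℝ => (n.choose i : ℝ) * p ^ i)
        ((n.choose i : ℝ) * (↑i * p ^ (i - 1))) p := (hasDerivAt_pow i p).const_mul _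
    have h2 : HasDerivAt (fun p : ℝ => (1 - p) ^ (n - i))
        (↑(n - i) * (1 - p) ^ (n - i - 1) * (-1)) p := by
      have := (hasDerivAt_pow (n - i) (1 - p)).comp p
        ((hasDerivAt_const p (1 : ℝ)).sub (hasDerivAt_id p))
      simpa [Function.comp_def] using this
    have h3 : HasDerivAt (fun p : ℝ => ((i : ℝ) - n * p) ^ k)
        (↑k * ((i : ℝ) - n * p) ^ (k - 1) * (-(n : ℝ))) p := by
      have := (hasDerivAt_pow k ((i : ℝ) - n * p)).comp p
        ((hasDerivAt_const p ((i : ℝ))).sub ((hasDerivAt_id p).const_mul (n : ℝ)))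
      simpa [mul_comm, Function.comp_def] using this
    have h := (h1.fun_mul h2).fun_mul h3
    convert h using 1
    · rfl
    ring
  constructor
  · exact fun p _ => (key p).differentiableAt.differentiableWithinAt
  · intro p hp
    rw [hM (k + 1), hM (k - 1), (key p).deriv, Finset.mul_sum, ← Finset.sum_add_distrib,
      Finset.mul_sum]
    refine Finset.sum_congr rfl fun i hi => ?_
    exact term_id n i k (by simpa using Nat.lt_succ_iff.mp (Finset.mem_range.mp hi)) hn hk p _
end

section
/- For every p ∈ (0,1) and every integer k ≥ 0, there exists a real polynomial Q of degree at most ⌊k/2⌋ such that for all positive integers n: Σ_{i=0}^n C(n,i) p^i (1−p)^{n−i} (i − np)^k = Q(n). That is, the k-th central moment of the binomial distribution is a polynomial of degree at most ⌊k/2⌋ in n. -/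
open Finset Polynomial

lemma antideriv : ∀ (d : ℕ) (R : Polynomial ℝ), R.natDegree ≤ d →
    ∃ P : Polynomial ℝ, P.natDegree ≤ d + 1 ∧ ∀ x : ℝ, P.eval (x+1) - P.eval x = R.eval x := by
  intro d
  induction d with
  | zero =>
    intro R hR
    refine ⟨Polynomial.C (R.coeff 0) * X, ?_, ?_⟩
    · calc (Polynomial.C (R.coeff 0) * X).natDegree ≤ _ + _ := natDegree_mul_le
        _ ≤ 1 := by simp
    · intro x
      rw [Polynomial.eq_C_of_natDegree_le_zero hR]
      simp; ring
  | succ d ih =>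
    intro R hR
    set a := R.coeff (d+1) with ha
    set D : Polynomial ℝ := Polynomial.C (a / (d+2)) * ((X+1)^(d+2) - X^(d+2)) with hD
    have hd2 : ((d:ℝ) + 2) ≠ 0 := by positivity
    have hDcoeff : ∀ N, d < N → D.coeff N = if N = d + 1 then a else 0 := by
      intro N hN
      rw [hD, Polynomial.coeff_C_mul, Polynomial.coeff_sub, Polynomial.coeff_X_add_one_pow,
        Polynomial.coeff_X_pow]
      rcases Nat.lt_trichotomy N (d+2) with h | h | h
      · have hN1 : N = d + 1 := by omega
        subst hN1
        rw [if_pos rfl, if_neg (by omega : ¬ d + 1 = d + 2)]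
        have hc : (d+2).choose (d+1) = d + 2 := Nat.choose_succ_self_right (d+1)
        rw [hc]
        push_cast
        field_simp
        ring
      · subst h
        simp [if_neg (by omega : ¬ (d + 2 = d + 1))]
      · rw [Nat.choose_eq_zero_of_lt h]
        simp [if_neg (by omega : ¬ N = d + 2), if_neg (by omega : ¬ N = d + 1)]
    have hDdeg : D.natDegree ≤ d + 1 := by
      rw [Polynomial.natDegree_le_iff_coeff_eq_zero]
      intro N hN
      rw [hDcoeff N (by omega)]
      simp [if_neg (by omega : ¬ N = d + 1)]
    have hRD : (R - D).natDegree ≤ d := by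
      rw [Polynomial.natDegree_le_iff_coeff_eq_zero]
      intro N hN
      rw [Polynomial.coeff_sub, hDcoeff N hN]
      rcases eq_or_ne N (d+1) with h | h
      · subst h; simp [← ha]
      · rw [if_neg h, Polynomial.coeff_eq_zero_of_natDegree_lt (by omega : R.natDegree < N), sub_zero]
    obtain ⟨P1, hP1deg, hP1⟩ := ih (R - D) hRD
    refine ⟨Polynomial.C (a / (d+2)) * X^(d+2) + P1, ?_, ?_⟩
    · apply le_trans (Polynomial.natDegree_add_le _ _)
      apply max_le _ (by omega)
      calc (Polynomial.C (a / (d+2)) * X^(d+2)).natDegree ≤ _ + _ := natDegree_mul_le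
        _ ≤ d + 2 := by simp
    · intro x
      have h1 := hP1 x
      have hDe : Polynomial.eval x D = a/(d+2) * ((x+1)^(d+2) - x^(d+2)) := by
        rw [hD]; simp
      rw [Polynomial.eval_sub, hDe] at h1
      simp only [Polynomial.eval_add, Polynomial.eval_mul, Polynomial.eval_pow,
        Polynomial.eval_C, Polynomial.eval_X]
      linarith

noncomputable def Sc (p : ℝ) (k n : ℕ) : ℝ :=
  ∑ i ∈ Finset.range (n + 1),
    (n.choose i : ℝ) * p ^ i * (1 - p) ^ (n - i) * ((i : ℝ) - n * p) ^ k

lemma Sc_succ (p : ℝ) (k m : ℕ) :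
    Sc p k (m + 1) = ∑ j ∈ Finset.range (k + 1),
      (k.choose j : ℝ) * ((1 - p) * (-p) ^ (k - j) + p * (1 - p) ^ (k - j)) * Sc p j m := by
  have claim0 : Sc p k (m+1) = ∑ i ∈ range (m+1),
      (m.choose i : ℝ) * p ^ i * (1-p) ^ (m-i) *
        ((1-p) * (((i:ℝ) - m*p) - p)^k + p * (((i:ℝ) - m*p) + (1-p))^k) := by
    have hRHS : ∑ i ∈ range (m+1),
        (m.choose i : ℝ) * p ^ i * (1-p) ^ (m-i) *
          ((1-p) * (((i:ℝ) - m*p) - p)^k + p * (((i:ℝ) - m*p) + (1-p))^k)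
        = (∑ i ∈ range (m+1), (m.choose i : ℝ) * p ^ i * (1-p) ^ (m-i) *
            ((1-p) * (((i:ℝ) - m*p) - p)^k))
          + ∑ i ∈ range (m+1), (m.choose i : ℝ) * p ^ i * (1-p) ^ (m-i) *
            (p * (((i:ℝ) - m*p) + (1-p))^k) := by
      rw [← Finset.sum_add_distrib]
      exact Finset.sum_congr rfl fun i _ => by ring
    rw [hRHS]
    unfold Sc
    rw [Finset.sum_range_succ']
    push_cast
    have hsplit : ∀ i ∈ range (m+1),
        ((m+1).choose (i+1) : ℝ) * p ^ (i+1) * (1-p) ^ (m-i) * ((i:ℝ) + 1 - ((m:ℝ)+1) * p) ^ k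
        = (m.choose (i+1) : ℝ) * p ^ (i+1) * (1-p) ^ (m-i) * ((i:ℝ) + 1 - ((m:ℝ)+1) * p) ^ k
          + (m.choose i : ℝ) * p ^ i * (1-p) ^ (m-i) * (p * ((i:ℝ) - (m:ℝ)*p + (1-p))^k) := by
      intro i hi
      rw [Nat.choose_succ_succ']
      push_cast
      ring
    rw [Finset.sum_congr rfl hsplit, Finset.sum_add_distrib]
    have key : (∑ i ∈ range (m+1), (m.choose (i+1) : ℝ) * p ^ (i+1) * (1-p) ^ (m-i) *
          ((i:ℝ) + 1 - ((m:ℝ)+1) * p) ^ k)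
        + ((m+1).choose 0 : ℝ) * p ^ 0 * (1-p) ^ (m+1) * ((0:ℝ) - ((m:ℝ)+1) * p) ^ k
        = ∑ i ∈ range (m+1), (m.choose i : ℝ) * p ^ i * (1-p) ^ (m-i) *
          ((1-p) * ((i:ℝ) - (m:ℝ)*p - p)^k) := by
      conv_rhs => rw [Finset.sum_range_succ']
      rw [Finset.sum_range_succ]
      have hBm : (m.choose (m+1) : ℝ) * p ^ (m+1) * (1-p) ^ (m-m) *
          ((m:ℝ) + 1 - ((m:ℝ)+1) * p) ^ k = 0 := by
        rw [Nat.choose_succ_self]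
        push_cast
        ring
      rw [hBm, add_zero]
      congr 1
      · apply Finset.sum_congr rfl
        intro i hi
        have hi' : i < m := Finset.mem_range.mp hi
        have h2 : m - i = (m - (i+1)) + 1 := by omega
        rw [h2]
        push_cast
        ring
      · have h3 : m + 1 = (m - 0) + 1 := by omega
        rw [h3, Nat.choose_zero_right, Nat.choose_zero_right]
        push_cast
        ring
    linarith [key]
  rw [claim0]
  have expand : ∀ i : ℕ,
      (m.choose i : ℝ) * p ^ i * (1-p) ^ (m-i) *
        ((1-p) * (((i:ℝ) - m*p) - p)^k + p * (((i:ℝ) - m*p) + (1-p))^k)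
      = ∑ j ∈ range (k+1), (k.choose j : ℝ) * ((1-p)*(-p)^(k-j) + p*(1-p)^(k-j)) *
          ((m.choose i : ℝ) * p ^ i * (1-p) ^ (m-i) * ((i:ℝ) - m*p)^j) := by
    intro i
    have h1 : (((i:ℝ) - m*p) - p)^k
        = ∑ j ∈ range (k+1), ((i:ℝ)-m*p)^j * (-p)^(k-j) * (k.choose j : ℝ) := by
      rw [← add_pow]
      ring_nf
    have h2 : (((i:ℝ) - m*p) + (1-p))^k
        = ∑ j ∈ range (k+1), ((i:ℝ)-m*p)^j * (1-p)^(k-j) * (k.choose j : ℝ) := by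
      rw [← add_pow]
    rw [h1, h2, Finset.mul_sum, Finset.mul_sum, ← Finset.sum_add_distrib, Finset.mul_sum]
    apply Finset.sum_congr rfl
    intro j _
    ring
  rw [Finset.sum_congr rfl (fun i _ => expand i), Finset.sum_comm]
  apply Finset.sum_congr rfl
  intro j _
  rw [← Finset.mul_sum]
  rfl


lemma Sc_diff (p : ℝ) (l m : ℕ) :
    Sc p (l+1) (m + 1) = Sc p (l+1) m + ∑ j ∈ Finset.range l,
      ((l+1).choose j : ℝ) * ((1 - p) * (-p) ^ (l+1 - j) + p * (1 - p) ^ (l+1 - j)) * Sc p j m := by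
  rw [Sc_succ, Finset.sum_range_succ, Finset.sum_range_succ]
  have h1 : ((l+1).choose (l+1) : ℝ) * ((1 - p) * (-p) ^ (l+1 - (l+1)) + p * (1 - p) ^ (l+1 - (l+1)))
      * Sc p (l+1) m = Sc p (l+1) m := by
    rw [Nat.choose_self, Nat.sub_self]
    push_cast; ring
  have h2 : ((l+1).choose l : ℝ) * ((1 - p) * (-p) ^ (l+1 - l) + p * (1 - p) ^ (l+1 - l))
      * Sc p l m = 0 := by
    have : l + 1 - l = 1 := by omega
    rw [this]
    ring_nf
  rw [h1, h2]
  ring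

lemma Sc_zero (p : ℝ) (n : ℕ) : Sc p 0 n = 1 := by
  rw [Sc]
  calc ∑ i ∈ Finset.range (n+1), (n.choose i : ℝ) * p ^ i * (1-p) ^ (n-i) * ((i:ℝ) - n*p) ^ 0
      = ∑ i ∈ Finset.range (n+1), p ^ i * (1-p) ^ (n-i) * (n.choose i : ℝ) :=
        Finset.sum_congr rfl fun i _ => by ring
    _ = (p + (1-p)) ^ n := (add_pow p (1-p) n).symm
    _ = 1 := by norm_num

lemma Sc_poly (p : ℝ) : ∀ k : ℕ, ∃ Q : Polynomial ℝ, Q.natDegree ≤ k / 2 ∧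
    ∀ n : ℕ, Sc p k n = Q.eval (n:ℝ) := by
  intro k
  induction k using Nat.strong_induction_on with
  | _ k ih =>
    match k with
    | 0 =>
      refine ⟨1, by simp, fun n => ?_⟩
      rw [Sc_zero]; simp
    | (l+1) =>
      set k := l + 1 with hk
      -- choose polynomials for smaller indices
      have hQf : ∀ j, ∃ Q : Polynomial ℝ, (j < k → Q.natDegree ≤ j / 2 ∧ ∀ n : ℕ, Sc p j n = Q.eval (n:ℝ)) := by
        intro j
        by_cases h : j < k
        · obtain ⟨Q, hQ⟩ := ih j h
          exact ⟨Q, fun _ => hQ⟩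
        · exact ⟨0, fun h' => absurd h' h⟩
      choose Qf hQf using hQf
      set R : Polynomial ℝ := ∑ j ∈ Finset.range l,
        Polynomial.C ((k.choose j : ℝ) * ((1 - p) * (-p) ^ (k - j) + p * (1 - p) ^ (k - j))) * Qf j
        with hR
      have hRdeg : R.natDegree ≤ (l - 1) / 2 := by
        apply Polynomial.natDegree_sum_le_of_forall_le
        intro j hj
        have hj' : j < l := Finset.mem_range.mp hj
        calc (Polynomial.C _ * Qf j).natDegree ≤ (Qf j).natDegree := natDegree_C_mul_le _ _
          _ ≤ j / 2 := (hQf j (by omega)).1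
          _ ≤ (l - 1) / 2 := Nat.div_le_div_right (by omega)
      have hReval : ∀ n : ℕ, R.eval (n:ℝ) = ∑ j ∈ Finset.range l,
          (k.choose j : ℝ) * ((1 - p) * (-p) ^ (k - j) + p * (1 - p) ^ (k - j)) * Sc p j n := by
        intro n
        rw [hR, Polynomial.eval_finset_sum]
        apply Finset.sum_congr rfl
        intro j hj
        have hj' : j < l := Finset.mem_range.mp hj
        rw [Polynomial.eval_mul, Polynomial.eval_C, (hQf j (by omega)).2 n]
      have hP : ∃ P : Polynomial ℝ, P.natDegree ≤ k / 2 ∧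
          ∀ x : ℝ, P.eval (x+1) - P.eval x = R.eval x := by
        rcases Nat.eq_zero_or_pos l with hl | hl
        · refine ⟨0, by simp, fun x => ?_⟩
          subst hl
          rw [hR]
          simp
        · obtain ⟨P, hPd, hPe⟩ := antideriv ((l-1)/2) R hRdeg
          exact ⟨P, by omega, hPe⟩
      obtain ⟨P, hPdeg, hPe⟩ := hP
      refine ⟨P + Polynomial.C (Sc p k 0 - P.eval 0), ?_, ?_⟩
      · apply le_trans (Polynomial.natDegree_add_le _ _)
        simp [hPdeg]
      · intro n
        induction n with
        | zero => simp
        | succ n ihn =>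
          have hd := Sc_diff p l n
          rw [hd, ihn, ← hk, ← hReval n]
          have := hPe n
          push_cast
          simp only [Polynomial.eval_add, Polynomial.eval_C] at *
          linarith

open Real Finset

/-- For fixed `p ∈ (0,1)` and `k`, the `k`-th central moment of the binomial
distribution is a polynomial of degree at most `⌊k/2⌋` in `n`. -/
theorem binomial_central_moment_polynomial_in_n
    (p : ℝ) (hp : p ∈ Set.Ioo (0:ℝ) 1) (k : ℕ) :
    ∃ Q : Polynomial ℝ, Q.natDegree ≤ k / 2 ∧
      ∀ n : ℕ, 0 < n →
        ∑ i ∈ Finset.range (n + 1),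
            (n.choose i : ℝ) * p ^ i * (1 - p) ^ (n - i) * ((i : ℝ) - n * p) ^ k
          = Q.eval (n : ℝ) := by
  obtain ⟨Q, h1, h2⟩ := Sc_poly p k
  exact ⟨Q, h1, fun n _ => h2 n⟩
end

section
/- For every p ∈ (0,1), q = 1−p, and every integer k ≥ 1, the 2k-th central moment of the binomial distribution satisfies lim_{n→∞} μ_{2k}(n)/n^k = (2k−1)!! · (pq)^k, where (2k−1)!! = 1·3·5⋯(2k−1). Equivalently, the leading order in n of μ_{2k}(n) is (2k−1)!!(pqn)^k + O(n^{k−1}). -/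
open Real Finset Filter

namespace BinomMoment

noncomputable def mu (p q : ℝ) (m n : ℕ) : ℝ :=
  ∑ i ∈ Finset.range (n + 1),
    (n.choose i : ℝ) * p ^ i * q ^ (n - i) * ((i : ℝ) - n * p) ^ m

noncomputable def c (p q : ℝ) (j : ℕ) : ℝ := q * (-p) ^ j + p * q ^ j

lemma binom_succ_sum (p q : ℝ) (f : ℕ → ℝ) (n : ℕ) :
    ∑ i ∈ Finset.range (n + 2), ((n + 1).choose i : ℝ) * p ^ i * q ^ (n + 1 - i) * f i
      = ∑ i ∈ Finset.range (n + 1),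
          (n.choose i : ℝ) * p ^ i * q ^ (n - i) * (q * f i + p * f (i + 1)) := by
  have h1 : ∑ i ∈ Finset.range (n + 2), ((n + 1).choose i : ℝ) * p ^ i * q ^ (n + 1 - i) * f i
      = (∑ i ∈ Finset.range (n + 1),
          ((n.choose i : ℝ) + (n.choose (i+1) : ℝ)) * p ^ (i+1) * q ^ (n - i) * f (i+1))
        + q ^ (n + 1) * f 0 := by
    rw [Finset.sum_range_succ' (fun i => ((n + 1).choose i : ℝ) * p ^ i * q ^ (n + 1 - i) * f i)]
    congr 1
    · apply Finset.sum_congr rfl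
      intro i _
      rw [Nat.choose_succ_succ, Nat.succ_sub_succ]
      push_cast
      ring
    · simp
  have h2 : ∑ i ∈ Finset.range (n + 2), (n.choose i : ℝ) * p ^ i * q ^ (n + 1 - i) * f i
      = (∑ i ∈ Finset.range (n + 1),
          (n.choose (i+1) : ℝ) * p ^ (i+1) * q ^ (n - i) * f (i+1))
        + q ^ (n + 1) * f 0 := by
    rw [Finset.sum_range_succ' (fun i => (n.choose i : ℝ) * p ^ i * q ^ (n + 1 - i) * f i)]
    congr 1
    · apply Finset.sum_congr rfl
      intro i _
      rw [Nat.succ_sub_succ]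
    · simp
  have h3 : ∑ i ∈ Finset.range (n + 2), (n.choose i : ℝ) * p ^ i * q ^ (n + 1 - i) * f i
      = q * ∑ i ∈ Finset.range (n + 1), (n.choose i : ℝ) * p ^ i * q ^ (n - i) * f i := by
    rw [Finset.sum_range_succ, Nat.choose_succ_self, Finset.mul_sum]
    simp only [Nat.cast_zero, zero_mul, mul_zero, zero_mul, add_zero]
    apply Finset.sum_congr rfl
    intro i hi
    have hi' : i ≤ n := Nat.lt_succ_iff.mp (Finset.mem_range.mp hi)
    rw [show n + 1 - i = (n - i) + 1 by omega, pow_succ]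
    ring
  have h4 : ∑ i ∈ Finset.range (n + 1), (n.choose (i+1) : ℝ) * p ^ (i+1) * q ^ (n - i) * f (i+1)
      = q * (∑ i ∈ Finset.range (n + 1), (n.choose i : ℝ) * p ^ i * q ^ (n - i) * f i)
        - q ^ (n + 1) * f 0 := by
    rw [← h3, h2]; ring
  rw [h1]
  have expand : ∀ i ∈ Finset.range (n+1),
      ((n.choose i : ℝ) + (n.choose (i+1) : ℝ)) * p ^ (i+1) * q ^ (n - i) * f (i+1)
      = p * ((n.choose i : ℝ) * p ^ i * q ^ (n - i) * f (i+1))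
        + (n.choose (i+1) : ℝ) * p ^ (i+1) * q ^ (n - i) * f (i+1) := by
    intro i _
    ring
  rw [Finset.sum_congr rfl expand, Finset.sum_add_distrib, h4, ← Finset.mul_sum]
  have h5 : ∑ i ∈ Finset.range (n + 1),
      (n.choose i : ℝ) * p ^ i * q ^ (n - i) * (q * f i + p * f (i + 1))
      = q * (∑ i ∈ Finset.range (n + 1), (n.choose i : ℝ) * p ^ i * q ^ (n - i) * f i)
        + p * (∑ i ∈ Finset.range (n + 1), (n.choose i : ℝ) * p ^ i * q ^ (n - i) * f (i + 1)) := by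
    rw [Finset.mul_sum, Finset.mul_sum, ← Finset.sum_add_distrib]
    apply Finset.sum_congr rfl
    intro i _
    ring
  rw [h5]
  ring

lemma step (p q : ℝ) (hq : q = 1 - p) (m n : ℕ) :
    mu p q m (n + 1) =
      ∑ j ∈ Finset.range (m + 1), (m.choose j : ℝ) * c p q (m - j) * mu p q j n := by
  have hB : ∀ i : ℕ,
      q * (((i : ℝ)) - (n + 1 : ℕ) * p) ^ m + p * (((i + 1 : ℕ) : ℝ) - (n + 1 : ℕ) * p) ^ m
      = ∑ j ∈ Finset.range (m + 1),
          (m.choose j : ℝ) * c p q (m - j) * ((i : ℝ) - n * p) ^ j := by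
    intro i
    have e1 : ((i : ℝ)) - (n + 1 : ℕ) * p = ((i : ℝ) - n * p) + (-p) := by push_cast; ring
    have e2 : (((i + 1 : ℕ) : ℝ)) - (n + 1 : ℕ) * p = ((i : ℝ) - n * p) + q := by
      push_cast; rw [hq]; ring
    rw [e1, e2, add_pow, add_pow, Finset.mul_sum, Finset.mul_sum, ← Finset.sum_add_distrib]
    apply Finset.sum_congr rfl
    intro j _
    simp only [c]
    ring
  have hA := binom_succ_sum p q (fun i => ((i : ℝ) - (n + 1 : ℕ) * p) ^ m) n
  calc mu p q m (n + 1)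
      = ∑ i ∈ Finset.range (n + 2),
          ((n + 1).choose i : ℝ) * p ^ i * q ^ (n + 1 - i) * ((i : ℝ) - (n + 1 : ℕ) * p) ^ m := by
        simp only [mu]
    _ = ∑ i ∈ Finset.range (n + 1), (n.choose i : ℝ) * p ^ i * q ^ (n - i) *
          (q * ((i : ℝ) - (n + 1 : ℕ) * p) ^ m + p * (((i + 1 : ℕ) : ℝ) - (n + 1 : ℕ) * p) ^ m) := hA
    _ = ∑ i ∈ Finset.range (n + 1), ∑ j ∈ Finset.range (m + 1),
          (m.choose j : ℝ) * c p q (m - j) *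
            ((n.choose i : ℝ) * p ^ i * q ^ (n - i) * ((i : ℝ) - n * p) ^ j) := by
        apply Finset.sum_congr rfl
        intro i _
        rw [hB i, Finset.mul_sum]
        apply Finset.sum_congr rfl
        intro j _
        ring
    _ = ∑ j ∈ Finset.range (m + 1), (m.choose j : ℝ) * c p q (m - j) * mu p q j n := by
        rw [Finset.sum_comm]
        apply Finset.sum_congr rfl
        intro j _
        rw [mu, Finset.mul_sum]

lemma c_zero (p q : ℝ) (hq : q = 1 - p) : c p q 0 = 1 := by simp [c, hq]

lemma c_one (p q : ℝ) : c p q 1 = 0 := by simp [c]; ring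

lemma c_two (p q : ℝ) (hq : q = 1 - p) : c p q 2 = p * q := by
  simp only [c, hq]; ring

lemma mu_zero (p q : ℝ) (hq : q = 1 - p) (n : ℕ) : mu p q 0 n = 1 := by
  induction n with
  | zero => simp [mu]
  | succ n ih =>
    rw [step p q hq 0 n]
    simp [c_zero p q hq, ih]

lemma mu_one (p q : ℝ) (hq : q = 1 - p) (n : ℕ) : mu p q 1 n = 0 := by
  induction n with
  | zero => simp [mu]
  | succ n ih =>
    rw [step p q hq 1 n]
    simp [Finset.sum_range_succ, c_zero p q hq, c_one p q, ih]

lemma tendsto_pow_div_pow_nat (a b : ℕ) (hab : a ≤ b) :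
    Tendsto (fun n : ℕ => (n : ℝ) ^ a / (n : ℝ) ^ b) atTop
      (nhds (if a = b then 1 else 0)) := by
  rcases eq_or_lt_of_le hab with h | h
  · subst h
    rw [if_pos rfl]
    apply Tendsto.congr' _ tendsto_const_nhds
    filter_upwards [Filter.eventually_ge_atTop 1] with n hn
    rw [div_self (pow_ne_zero _ (by exact_mod_cast Nat.one_le_iff_ne_zero.mp hn))]
  · rw [if_neg h.ne]
    exact (tendsto_pow_div_pow_atTop_zero h).comp tendsto_natCast_atTop_atTop

lemma stolz (t : ℕ) (d : ℕ → ℝ) (A : ℝ)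
    (h : Tendsto (fun n : ℕ => d n / (n : ℝ) ^ t) atTop (nhds A)) :
    Tendsto (fun n : ℕ => (∑ i ∈ Finset.range n, d i) / (n : ℝ) ^ (t + 1)) atTop
      (nhds (A / (t + 1))) := by
  set w : ℕ → ℝ := fun n => ((n + 1 : ℕ) : ℝ) ^ (t + 1) - ((n : ℕ) : ℝ) ^ (t + 1) with hw
  have hw_pos : ∀ n : ℕ, 0 < w n := by
    intro n
    have : ((n : ℕ) : ℝ) < ((n + 1 : ℕ) : ℝ) := by push_cast; linarith
    have := pow_lt_pow_left₀ this (by positivity) (Nat.succ_ne_zero t)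
    simpa [hw] using sub_pos.mpr this
  have hw_sum : ∀ n : ℕ, ∑ i ∈ Finset.range n, w i = (n : ℝ) ^ (t + 1) := by
    intro n
    rw [hw]
    rw [Finset.sum_range_sub (fun i : ℕ => ((i : ℕ) : ℝ) ^ (t + 1))]
    simp
  have hw_lim : Tendsto (fun n : ℕ => w n / (n : ℝ) ^ t) atTop (nhds ((t : ℝ) + 1)) := by
    have hexp : ∀ n : ℕ, w n = ∑ j ∈ Finset.range (t + 1),
        ((t + 1).choose j : ℝ) * ((n : ℝ) ^ j) := by
      intro n
      have := add_pow (R := ℝ) (n : ℝ) 1 (t + 1)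
      rw [hw]
      push_cast
      rw [this, Finset.sum_range_succ]
      simp only [one_pow, mul_one, Nat.choose_self, Nat.cast_one, Nat.sub_self, pow_zero]
      rw [add_sub_cancel_right]
      apply Finset.sum_congr rfl
      intro j _
      ring
    have : Tendsto (fun n : ℕ => ∑ j ∈ Finset.range (t + 1),
        ((t + 1).choose j : ℝ) * ((n : ℝ) ^ j / (n : ℝ) ^ t)) atTop
        (nhds (∑ j ∈ Finset.range (t + 1),
          ((t + 1).choose j : ℝ) * (if j = t then (1 : ℝ) else 0))) := by
      apply tendsto_finset_sum
      intro j hj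
      exact (tendsto_pow_div_pow_nat j t (Nat.lt_succ_iff.mp (Finset.mem_range.mp hj))).const_mul _
    have hval : ∑ j ∈ Finset.range (t + 1),
        ((t + 1).choose j : ℝ) * (if j = t then (1 : ℝ) else 0) = (t : ℝ) + 1 := by
      rw [Finset.sum_eq_single t]
      · simp [Nat.choose_succ_self_right]
      · intro j _ hjt; simp [hjt]
      · intro habs; exact absurd (Finset.self_mem_range_succ t) habs
    rw [← hval]
    apply this.congr
    intro n
    rw [hexp n, Finset.sum_div]
    apply Finset.sum_congr rfl
    intro j _
    ring
  have ht1 : ((t : ℝ) + 1) ≠ 0 := by positivity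
  set e : ℕ → ℝ := fun n => d n - A / ((t : ℝ) + 1) * w n with he_def
  have he : Tendsto (fun n : ℕ => e n / (n : ℝ) ^ t) atTop (nhds 0) := by
    have := h.sub ((hw_lim.const_mul (A / ((t : ℝ) + 1))))
    have h0 : A - A / ((t : ℝ) + 1) * ((t : ℝ) + 1) = 0 := by field_simp; ring
    rw [h0] at this
    apply this.congr
    intro n
    simp only [he_def]
    ring
  have he_o : e =o[atTop] w := by
    rw [Asymptotics.isLittleO_iff_tendsto (fun n hn => absurd hn (hw_pos n).ne')]
    have hinv : Tendsto (fun n : ℕ => ((n : ℝ) ^ t / w n)) atTop (nhds (((t : ℝ) + 1)⁻¹)) := by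
      have := hw_lim.inv₀ ht1
      apply this.congr'
      filter_upwards [Filter.eventually_ge_atTop 1] with n hn
      have hn' : ((n : ℝ) ^ t) ≠ 0 := pow_ne_zero _ (by exact_mod_cast Nat.one_le_iff_ne_zero.mp hn)
      rw [inv_div]
    have := he.mul hinv
    rw [zero_mul] at this
    apply this.congr'
    filter_upwards [Filter.eventually_ge_atTop 1] with n hn
    have hn' : ((n : ℝ) ^ t) ≠ 0 := pow_ne_zero _ (by exact_mod_cast Nat.one_le_iff_ne_zero.mp hn)
    field_simp
  have hsum_atTop : Tendsto (fun n : ℕ => ∑ i ∈ Finset.range n, w i) atTop atTop := by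
    have : Tendsto (fun n : ℕ => (n : ℝ) ^ (t + 1)) atTop atTop :=
      (tendsto_pow_atTop (Nat.succ_ne_zero t)).comp tendsto_natCast_atTop_atTop
    exact this.congr fun n => (hw_sum n).symm
  have hsum_o := he_o.sum_range (fun i => (hw_pos i).le) hsum_atTop
  have hsum_e : Tendsto (fun n : ℕ => (∑ i ∈ Finset.range n, e i) / (n : ℝ) ^ (t + 1)) atTop
      (nhds 0) := by
    have h1 : (fun n : ℕ => ∑ i ∈ Finset.range n, e i) =o[atTop]
        fun n : ℕ => (n : ℝ) ^ (t + 1) := by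
      apply hsum_o.congr' (by rfl)
      filter_upwards with n using hw_sum n
    rw [Asymptotics.isLittleO_iff_tendsto'] at h1
    · exact h1
    · filter_upwards [Filter.eventually_ge_atTop 1] with n hn habs
      exact absurd habs (pow_ne_zero _ (by exact_mod_cast Nat.one_le_iff_ne_zero.mp hn))
  have key : Tendsto (fun n : ℕ =>
      (∑ i ∈ Finset.range n, e i) / (n : ℝ) ^ (t + 1)
        + A / ((t : ℝ) + 1) * ((∑ i ∈ Finset.range n, w i) / (n : ℝ) ^ (t + 1))) atTop
      (nhds (0 + A / ((t : ℝ) + 1) * 1)) := by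
    apply hsum_e.add
    apply Tendsto.const_mul
    have : Tendsto (fun n : ℕ => (n : ℝ) ^ (t + 1) / (n : ℝ) ^ (t + 1)) atTop (nhds 1) := by
      have := tendsto_pow_div_pow_nat (t + 1) (t + 1) le_rfl
      simpa using this
    apply this.congr
    intro n
    rw [hw_sum n]
  rw [zero_add, mul_one] at key
  have : (A / ((t : ℝ) + 1)) = A / ((t : ℕ) + 1 : ℝ) := by norm_num
  apply key.congr
  intro n
  simp only [he_def]
  rw [Finset.sum_sub_distrib, ← Finset.mul_sum]
  ring

lemma main (p q : ℝ) (hq : q = 1 - p) :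
    ∀ m : ℕ, ∃ L : ℝ,
      Tendsto (fun n : ℕ => mu p q m n / (n : ℝ) ^ (m / 2)) atTop (nhds L) ∧
      ∀ k : ℕ, m = 2 * k → L = ((2 * k - 1).doubleFactorial : ℝ) * (p * q) ^ k := by
  intro m
  induction m using Nat.strong_induction_on with
  | _ m ih =>
  match m, ih with
  | 0, _ =>
    refine ⟨1, ?_, ?_⟩
    · apply Tendsto.congr (f₁ := fun _ : ℕ => (1 : ℝ)) _ tendsto_const_nhds
      intro n
      simp [mu_zero p q hq]
    · intro k hk
      have : k = 0 := by omega
      subst this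
      simp
  | 1, _ =>
    refine ⟨0, ?_, ?_⟩
    · apply Tendsto.congr (f₁ := fun _ : ℕ => (0 : ℝ)) _ tendsto_const_nhds
      intro n
      simp [mu_one p q hq]
    · intro k hk
      omega
  | (m' + 2), ih =>
    set t := m' / 2 with ht_def
    set coeff : ℕ → ℝ := fun j => ((m' + 2).choose j : ℝ) * c p q (m' + 2 - j) with hcoeff_def
    set L' : ℕ → ℝ := fun j => if h : j < m' + 2 then (ih j h).choose else 0 with hL'_def
    have hL't : ∀ j, j < m' + 2 →
        Tendsto (fun n : ℕ => mu p q j n / (n : ℝ) ^ (j / 2)) atTop (nhds (L' j)) := by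
      intro j h
      have := (ih j h).choose_spec.1
      simpa [hL'_def, dif_pos h] using this
    have hL'v : ∀ j, ∀ hj : j < m' + 2, ∀ k : ℕ, j = 2 * k →
        L' j = ((2 * k - 1).doubleFactorial : ℝ) * (p * q) ^ k := by
      intro j hj k hk
      have := (ih j hj).choose_spec.2 k hk
      simpa [hL'_def, dif_pos hj] using this
    set d : ℕ → ℝ := fun n => ∑ j ∈ Finset.range (m' + 1), coeff j * mu p q j n with hd_def
    have hrec : ∀ n : ℕ, mu p q (m' + 2) (n + 1) = mu p q (m' + 2) n + d n := by
      intro n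
      rw [step p q hq (m' + 2) n, Finset.sum_range_succ, Finset.sum_range_succ]
      rw [show m' + 2 - (m' + 1) = 1 from by omega, show m' + 2 - (m' + 2) = 0 from by omega,
        c_one, c_zero p q hq, Nat.choose_self]
      simp only [hd_def, hcoeff_def]
      push_cast
      ring
    set A : ℝ := ∑ j ∈ Finset.range (m' + 1),
      coeff j * L' j * (if j / 2 = t then (1 : ℝ) else 0) with hA_def
    have hd_lim : Tendsto (fun n : ℕ => d n / (n : ℝ) ^ t) atTop (nhds A) := by
      have haux : Tendsto (fun n : ℕ => ∑ j ∈ Finset.range (m' + 1),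
          coeff j * (mu p q j n / (n : ℝ) ^ (j / 2)) * ((n : ℝ) ^ (j / 2) / (n : ℝ) ^ t))
          atTop (nhds A) := by
        rw [hA_def]
        apply tendsto_finset_sum
        intro j hj
        have hj1 : j < m' + 1 := Finset.mem_range.mp hj
        have hle : j / 2 ≤ t := by omega
        exact ((hL't j (by omega)).const_mul (coeff j)).mul
          (tendsto_pow_div_pow_nat (j / 2) t hle)
      apply haux.congr'
      filter_upwards [Filter.eventually_ge_atTop 1] with n hn
      rw [hd_def]
      simp only
      rw [Finset.sum_div]
      apply Finset.sum_congr rfl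
      intro j _
      have hb : ((n : ℝ) ^ (j / 2)) ≠ 0 :=
        pow_ne_zero _ (by exact_mod_cast Nat.one_le_iff_ne_zero.mp hn)
      field_simp
    have hmain := stolz t d A hd_lim
    have hsum_d : ∀ n : ℕ, ∑ i ∈ Finset.range n, d i
        = mu p q (m' + 2) n - mu p q (m' + 2) 0 := by
      intro n
      rw [← Finset.sum_range_sub (fun i => mu p q (m' + 2) i) n]
      apply Finset.sum_congr rfl
      intro i _
      rw [hrec i]
      ring
    have h2 : Tendsto (fun n : ℕ =>
        (mu p q (m' + 2) n - mu p q (m' + 2) 0) / (n : ℝ) ^ (t + 1)) atTop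
        (nhds (A / ((t : ℝ) + 1))) := by
      apply hmain.congr
      intro n
      rw [hsum_d n]
    have h3 : Tendsto (fun n : ℕ => mu p q (m' + 2) 0 / (n : ℝ) ^ (t + 1)) atTop (nhds 0) :=
      Tendsto.div_atTop tendsto_const_nhds
        ((tendsto_pow_atTop (Nat.succ_ne_zero t)).comp tendsto_natCast_atTop_atTop)
    have h4 : Tendsto (fun n : ℕ => mu p q (m' + 2) n / (n : ℝ) ^ ((m' + 2) / 2)) atTop
        (nhds (A / ((t : ℝ) + 1))) := by
      rw [show (m' + 2) / 2 = t + 1 from by omega]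
      have := h2.add h3
      rw [add_zero] at this
      apply this.congr
      intro n
      ring
    refine ⟨A / ((t : ℝ) + 1), h4, ?_⟩
    intro k hk
    have hk1 : 1 ≤ k := by omega
    have hm' : m' = 2 * (k - 1) := by omega
    have ht' : t = k - 1 := by omega
    have hA2 : A = coeff (2 * (k - 1)) * L' (2 * (k - 1)) := by
      rw [hA_def, Finset.sum_eq_single (2 * (k - 1))]
      · rw [if_pos (by omega), mul_one]
      · intro j hj hne
        have := Finset.mem_range.mp hj
        rw [if_neg (by omega), mul_zero]
      · intro habs
        exact absurd (Finset.mem_range.mpr (by omega)) habs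
    have hLv : L' (2 * (k - 1)) = ((2 * (k - 1) - 1).doubleFactorial : ℝ) * (p * q) ^ (k - 1) :=
      hL'v (2 * (k - 1)) (by omega) (k - 1) rfl
    have hc2 : coeff (2 * (k - 1)) = ((2 * k).choose 2 : ℝ) * (p * q) := by
      rw [hcoeff_def]
      simp only
      rw [show m' + 2 - 2 * (k - 1) = 2 from by omega, c_two p q hq,
        show m' + 2 = 2 * k from by omega, show 2 * (k - 1) = 2 * k - 2 from by omega,
        Nat.choose_symm (by omega)]
    have hch : ((2 * k).choose 2 : ℕ) = k * (2 * k - 1) := by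
      rw [Nat.choose_two_right, show 2 * k * (2 * k - 1) = k * (2 * k - 1) * 2 from by ring,
        Nat.mul_div_cancel _ (by norm_num)]
    have hdf : (2 * k - 1).doubleFactorial = (2 * k - 1) * (2 * (k - 1) - 1).doubleFactorial := by
      match k, hk1 with
      | 1, _ => simp [Nat.doubleFactorial]
      | (j + 2), _ =>
        rw [show 2 * (j + 2) - 1 = (2 * j + 1) + 2 from by omega, Nat.doubleFactorial_add_two,
          show 2 * (j + 2 - 1) - 1 = 2 * j + 1 from by omega]
    have hcast : ((t : ℝ) + 1) = (k : ℝ) := by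
      rw [ht']
      have : ((k - 1 : ℕ) : ℝ) = (k : ℝ) - 1 := by
        rw [Nat.cast_sub hk1]; norm_num
      rw [this]; ring
    have hk0 : (k : ℝ) ≠ 0 := by positivity
    have hdfR : ((2 * k - 1).doubleFactorial : ℝ)
        = ((2 * k - 1 : ℕ) : ℝ) * ((2 * (k - 1) - 1).doubleFactorial : ℝ) := by
      rw [hdf]; push_cast; ring
    have hchR : ((2 * k).choose 2 : ℝ) = (k : ℝ) * ((2 * k - 1 : ℕ) : ℝ) := by
      rw [hch]; push_cast; ring
    have hpq : (p * q) ^ k = (p * q) * (p * q) ^ (k - 1) := by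
      rw [← pow_succ']
      congr 1
      omega
    rw [hA2, hLv, hc2, hcast, hdfR, hchR, hpq]
    field_simp

end BinomMoment

/-- For `p ∈ (0,1)`, `q = 1 - p` and `k ≥ 1`, the `2k`-th central moment of the
binomial distribution satisfies `lim_{n→∞} μ_{2k}(n)/n^k = (2k-1)!! (pq)^k`. -/
theorem binomial_central_moment_leading_order
    (p q : ℝ) (hp : p ∈ Set.Ioo (0:ℝ) 1) (hq : q = 1 - p)
    (k : ℕ) (hk : 1 ≤ k) :
    Filter.Tendsto
      (fun n : ℕ =>
        (∑ i ∈ Finset.range (n + 1),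
            (n.choose i : ℝ) * p ^ i * q ^ (n - i) * ((i : ℝ) - n * p) ^ (2 * k))
          / (n : ℝ) ^ k)
      Filter.atTop
      (nhds ((Nat.doubleFactorial (2 * k - 1) : ℝ) * (p * q) ^ k)) := by
  obtain ⟨L, hL, hLv⟩ := BinomMoment.main p q hq (2 * k)
  rw [hLv k rfl] at hL
  have hdiv : (2 * k) / 2 = k := by omega
  rw [hdiv] at hL
  exact hL
end

section
/- Fix p ∈ (0,1), q = 1−p, a real r > 0, and an integer m ≥ 1. Then there exist a constant C > 0 and a positive integer N such that for all integers n ≥ N: | f_r(n) − (np/(np+q)^{r+1}) · Σ_{k=0}^{m−1} (−1)^k · C(r+k,k) · μ_k(n−1)/(np+q)^k | ≤ C · (np/(np+q)^{r+1}) · n^{−⌈m/2⌉}. That is, f_r(n) admits the asymptotic expansion f_r(n) = (np/(np+q)^{r+1}) { Σ_{k=0}^{m−1} (−1)^k C(r+k,k) μ_k(n−1)/(np+q)^k + O(1/n^{⌈m/2⌉}) }. -/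
open Real Finset



private def binw (p q : ℝ) (N i : ℕ) : ℝ := (N.choose i : ℝ) * p ^ i * q ^ (N - i)

private def bmu (p q : ℝ) (k N : ℕ) : ℝ :=
  ∑ i ∈ range (N + 1), binw p q N i * ((i : ℝ) - (N : ℝ) * p) ^ k

private lemma sum_binw (p q : ℝ) (hpq : p + q = 1) (N : ℕ) :
    ∑ i ∈ range (N + 1), binw p q N i = 1 := by
  have h := add_pow p q N
  rw [hpq, one_pow] at h
  rw [h]
  apply Finset.sum_congr rfl
  intro i _
  simp [binw]; ring

private lemma bmu_zero (p q : ℝ) (hpq : p + q = 1) (N : ℕ) : bmu p q 0 N = 1 := by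
  simp only [bmu, pow_zero, mul_one]
  exact sum_binw p q hpq N

private lemma bmu_rec (p q : ℝ) (hpq : p + q = 1) (k N : ℕ) :
    bmu p q k (N + 1) = ∑ i ∈ range (N + 1), binw p q N i *
      (q * (((i : ℝ) - (N : ℝ) * p) - p) ^ k + p * (((i : ℝ) - (N : ℝ) * p) + q) ^ k) := by
  have key : bmu p q k (N + 1)
      = (∑ i ∈ range (N + 1),
          (N.choose i : ℝ) * p ^ (i+1) * q ^ (N - i) * (((i:ℝ)+1) - ((N:ℝ)+1) * p) ^ k)
        + ∑ i ∈ range (N + 2),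
          (N.choose i : ℝ) * p ^ i * q ^ (N + 1 - i) * ((i:ℝ) - ((N:ℝ)+1) * p) ^ k := by
    rw [bmu]
    rw [Finset.sum_range_succ' (fun i => binw p q (N+1) i * ((i : ℝ) - ((N+1 : ℕ) : ℝ) * p) ^ k) (N+1)]
    rw [Finset.sum_range_succ' (fun i => (N.choose i : ℝ) * p ^ i * q ^ (N + 1 - i) * ((i:ℝ) - ((N:ℝ)+1) * p) ^ k) (N+1)]
    have hsplit : ∀ i ∈ range (N + 1),
        binw p q (N+1) (i+1) * (((i+1 : ℕ) : ℝ) - ((N+1 : ℕ) : ℝ) * p) ^ k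
        = (N.choose i : ℝ) * p ^ (i+1) * q ^ (N - i) * (((i:ℝ)+1) - ((N:ℝ)+1) * p) ^ k
          + (N.choose (i+1) : ℝ) * p ^ (i+1) * q ^ (N + 1 - (i+1)) * (((i+1:ℕ):ℝ) - ((N:ℝ)+1) * p) ^ k := by
      intro i hi
      rw [Finset.mem_range] at hi
      have h1 : (N+1).choose (i+1) = N.choose i + N.choose (i+1) := Nat.choose_succ_succ N i
      have h2 : N + 1 - (i+1) = N - i := by omega
      simp only [binw, h1, h2]
      push_cast
      ring
    rw [Finset.sum_congr rfl hsplit, Finset.sum_add_distrib]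
    simp only [binw]
    push_cast
    simp only [Nat.choose_zero_right]
    ring
  rw [key, Finset.sum_range_succ (fun i => (N.choose i : ℝ) * p ^ i * q ^ (N + 1 - i) * ((i:ℝ) - ((N:ℝ)+1) * p) ^ k) (N+1)]
  have hlast : (N.choose (N+1) : ℝ) * p ^ (N+1) * q ^ (N + 1 - (N+1)) * (((N+1:ℕ):ℝ) - ((N:ℝ)+1) * p) ^ k = 0 := by
    simp [Nat.choose_succ_self]
  rw [hlast, add_zero, ← Finset.sum_add_distrib]
  apply Finset.sum_congr rfl
  intro i hi
  rw [Finset.mem_range] at hi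
  have h2 : N + 1 - i = (N - i) + 1 := by omega
  have hq1 : q = 1 - p := by linarith
  subst hq1
  simp only [binw, h2, pow_succ]
  push_cast
  ring

private lemma bmu_rec' (p q : ℝ) (hpq : p + q = 1) (k N : ℕ) :
    bmu p q k (N + 1) = ∑ j ∈ range (k + 1),
      (k.choose j : ℝ) * (q * (-p) ^ j + p * q ^ j) * bmu p q (k - j) N := by
  have expand : ∀ x : ℝ, q * (x - p) ^ k + p * (x + q) ^ k
      = ∑ j ∈ range (k + 1), (k.choose j : ℝ) * (q * (-p) ^ j + p * q ^ j) * x ^ (k - j) := by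
    intro x
    have h1 : (x - p) ^ k = ((-p) + x) ^ k := by ring_nf
    have h2 : (x + q) ^ k = (q + x) ^ k := by ring_nf
    rw [h1, h2, add_pow, add_pow, Finset.mul_sum, Finset.mul_sum, ← Finset.sum_add_distrib]
    apply Finset.sum_congr rfl; intro j _; ring
  rw [bmu_rec p q hpq k N]
  calc ∑ i ∈ range (N+1), binw p q N i *
          (q * (((i:ℝ) - (N:ℝ)*p) - p) ^ k + p * (((i:ℝ) - (N:ℝ)*p) + q) ^ k)
      = ∑ i ∈ range (N+1), ∑ j ∈ range (k+1),
          (k.choose j : ℝ) * (q * (-p) ^ j + p * q ^ j) * (binw p q N i * ((i:ℝ) - (N:ℝ)*p) ^ (k-j)) := by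
        apply Finset.sum_congr rfl; intro i _
        rw [expand, Finset.mul_sum]
        apply Finset.sum_congr rfl; intro j _; ring
    _ = ∑ j ∈ range (k+1), ∑ i ∈ range (N+1),
          (k.choose j : ℝ) * (q * (-p) ^ j + p * q ^ j) * (binw p q N i * ((i:ℝ) - (N:ℝ)*p) ^ (k-j)) :=
        Finset.sum_comm
    _ = _ := by
        apply Finset.sum_congr rfl; intro j _
        rw [bmu, ← Finset.mul_sum]

private lemma bmu_one (p q : ℝ) (hpq : p + q = 1) (N : ℕ) : bmu p q 1 N = 0 := by
  induction N with
  | zero => simp [bmu, binw]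
  | succ N ih =>
      rw [bmu_rec' p q hpq 1 N]
      simp only [Finset.sum_range_succ, Finset.sum_range_zero]
      rw [ih, bmu_zero p q hpq]
      norm_num
      nlinarith [hpq]

private lemma choose_le_two_pow (k j : ℕ) (h : j ≤ k) : (k.choose j) ≤ 2 ^ k := by
  rw [← Nat.sum_range_choose k]
  exact Finset.single_le_sum (f := fun j => k.choose j) (fun _ _ => Nat.zero_le _)
    (Finset.mem_range.mpr (by omega))

private lemma bmu_bound (p q : ℝ) (hp0 : 0 < p) (hp1 : p < 1) (hq : q = 1 - p) :
    ∀ N k, |bmu p q k N| ≤ 3 ^ (k ^ 2) * ((N : ℝ) + 1) ^ (k / 2) := by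
  have hq0 : 0 < q := by rw [hq]; linarith
  have hq1 : q < 1 := by rw [hq]; linarith
  have hpq : p + q = 1 := by rw [hq]; ring
  intro N
  induction N with
  | zero =>
      intro k
      have h0 : bmu p q k 0 = (0:ℝ) ^ k := by simp [bmu, binw]
      have h1 : |(0:ℝ) ^ k| ≤ 1 := by
        rcases Nat.eq_zero_or_pos k with hk | hk
        · simp [hk]
        · rw [zero_pow (by omega : k ≠ 0)]; simp
      rw [h0]
      refine h1.trans ?_
      have : (((0:ℕ):ℝ) + 1) ^ (k / 2) = 1 := by norm_num
      rw [this, mul_one]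
      exact one_le_pow₀ (by norm_num)
  | succ N ih =>
      intro k
      match k with
      | 0 =>
          rw [bmu_zero p q hpq]
          simp only [abs_one, pow_zero, Nat.zero_div, mul_one]
          norm_num
      | 1 =>
          rw [bmu_one p q hpq]
          simp only [abs_zero]
          positivity
      | (k + 2) =>
          have hrec : bmu p q (k+2) (N + 1) = ∑ j ∈ range (k+1+1+1),
              ((k+2).choose j : ℝ) * (q * (-p) ^ j + p * q ^ j) * bmu p q (k+2-j) N :=
            bmu_rec' p q hpq (k+2) N
          rw [Finset.sum_range_succ' _ (k+1+1), Finset.sum_range_succ' _ (k+1)] at hrec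
          have hj0 : ((k+2).choose 0 : ℝ) * (q * (-p) ^ 0 + p * q ^ 0) * bmu p q (k+2-0) N
              = bmu p q (k+2) N := by
            simp only [Nat.choose_zero_right, pow_zero, mul_one, Nat.sub_zero, Nat.cast_one]
            rw [show q + p = 1 by linarith]
            ring
          have hj1 : ((k+2).choose (0+1) : ℝ) * (q * (-p) ^ (0+1) + p * q ^ (0+1)) * bmu p q (k+2-(0+1)) N
              = 0 := by
            have : q * (-p) ^ (0+1) + p * q ^ (0+1) = 0 := by ring
            rw [this]; ring
          rw [hj1, add_zero, hj0] at hrec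
          have hN1 : (1:ℝ) ≤ (N:ℝ) + 1 := by have := Nat.cast_nonneg (α := ℝ) N; linarith
          have hterm : ∀ j ∈ range (k + 1),
              |((k+2).choose (j+1+1) : ℝ) * (q * (-p) ^ (j+1+1) + p * q ^ (j+1+1)) * bmu p q (k+2 - (j+1+1)) N|
              ≤ (2:ℝ) ^ (k+2) * 3 ^ (k ^ 2) * ((N:ℝ) + 1) ^ ((k+2) / 2 - 1) := by
            intro j hj
            rw [Finset.mem_range] at hj
            rw [abs_mul, abs_mul]
            have hb1 : |(((k+2).choose (j+1+1) : ℕ) : ℝ)| ≤ (2:ℝ) ^ (k+2) := by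
              rw [abs_of_nonneg (by positivity)]
              have := choose_le_two_pow (k+2) (j+1+1) (by omega)
              exact_mod_cast this
            have hb2 : |q * (-p) ^ (j+1+1) + p * q ^ (j+1+1)| ≤ 1 := by
              have h1 : |q * (-p) ^ (j+1+1)| ≤ q := by
                rw [abs_mul, abs_pow, abs_neg, abs_of_nonneg hp0.le, abs_of_nonneg hq0.le]
                nlinarith [pow_le_one₀ hp0.le hp1.le (n := j+1+1)]
              have h2 : |p * q ^ (j+1+1)| ≤ p := by
                rw [abs_mul, abs_pow, abs_of_nonneg hp0.le, abs_of_nonneg hq0.le]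
                nlinarith [pow_le_one₀ hq0.le hq1.le (n := j+1+1)]
              calc |q * (-p) ^ (j+1+1) + p * q ^ (j+1+1)|
                  ≤ |q * (-p) ^ (j+1+1)| + |p * q ^ (j+1+1)| := abs_add_le _ _
                _ ≤ q + p := add_le_add h1 h2
                _ = 1 := by linarith
            have hb3 : |bmu p q (k+2 - (j+1+1)) N| ≤ 3 ^ (k ^ 2) * ((N:ℝ) + 1) ^ ((k+2) / 2 - 1) := by
              refine (ih (k+2 - (j+1+1))).trans ?_
              apply mul_le_mul
              · apply pow_le_pow_right₀ (by norm_num)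
                exact Nat.pow_le_pow_left (by omega) 2
              · apply pow_le_pow_right₀ hN1
                omega
              · positivity
              · positivity
            calc |(((k+2).choose (j+1+1) : ℕ) : ℝ)| * |q * (-p) ^ (j+1+1) + p * q ^ (j+1+1)| * |bmu p q (k+2 - (j+1+1)) N|
                ≤ ((2:ℝ) ^ (k+2) * 1) * (3 ^ (k ^ 2) * ((N:ℝ) + 1) ^ ((k+2) / 2 - 1)) :=
                  mul_le_mul (mul_le_mul hb1 hb2 (abs_nonneg _) (by positivity)) hb3 (abs_nonneg _) (by positivity)
              _ = (2:ℝ) ^ (k+2) * 3 ^ (k ^ 2) * ((N:ℝ) + 1) ^ ((k+2) / 2 - 1) := by ring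
          have hsum : |∑ j ∈ range (k + 1),
              ((k+2).choose (j+1+1) : ℝ) * (q * (-p) ^ (j+1+1) + p * q ^ (j+1+1)) * bmu p q (k+2 - (j+1+1)) N|
              ≤ (k + 1 : ℝ) * ((2:ℝ) ^ (k+2) * 3 ^ (k ^ 2) * ((N:ℝ) + 1) ^ ((k+2) / 2 - 1)) := by
            refine (Finset.abs_sum_le_sum_abs _ _).trans ?_
            refine (Finset.sum_le_sum hterm).trans ?_
            rw [Finset.sum_const, Finset.card_range, nsmul_eq_mul]
            push_cast
            ring_nf
            exact le_refl _
          have hconst : (k + 1 : ℝ) * ((2:ℝ) ^ (k+2) * 3 ^ (k ^ 2)) ≤ 3 ^ ((k+2) ^ 2) := by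
            have h1 : (k + 1) * 2 ^ (k+2) * 3 ^ (k ^ 2) ≤ 3 ^ ((k+2) ^ 2) := by
              calc (k + 1) * 2 ^ (k+2) * 3 ^ (k ^ 2) ≤ 3 ^ (k+2) * 3 ^ (k+2) * 3 ^ (k ^ 2) := by
                    apply Nat.mul_le_mul
                    apply Nat.mul_le_mul
                    · calc k + 1 ≤ 2 ^ (k+1) := Nat.lt_two_pow_self.le
                        _ ≤ 2 ^ (k+2) := Nat.pow_le_pow_right (by norm_num) (by omega)
                        _ ≤ 3 ^ (k+2) := Nat.pow_le_pow_left (by norm_num) _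
                    · exact Nat.pow_le_pow_left (by norm_num) _
                    · exact Nat.le_refl _
                _ = 3 ^ ((k+2) + (k+2) + k ^ 2) := by rw [← pow_add, ← pow_add]
                _ ≤ 3 ^ ((k+2) ^ 2) := by
                    apply Nat.pow_le_pow_right (by norm_num)
                    nlinarith [sq_nonneg k]
            calc (k + 1 : ℝ) * ((2:ℝ) ^ (k+2) * 3 ^ (k ^ 2))
                = (((k+1) * 2 ^ (k+2) * 3 ^ (k^2) : ℕ) : ℝ) := by push_cast; ring
              _ ≤ (((3:ℕ) ^ ((k+2) ^ 2) : ℕ) : ℝ) := by exact_mod_cast h1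
              _ = 3 ^ ((k+2) ^ 2) := by push_cast; ring
          have hstep : ((N:ℝ) + 1) ^ ((k+2) / 2) + ((N:ℝ) + 1) ^ ((k+2) / 2 - 1)
              ≤ ((N:ℝ) + 2) ^ ((k+2) / 2) := by
            obtain ⟨h, hh⟩ : ∃ h, (k+2) / 2 = h + 1 := ⟨(k+2) / 2 - 1, by omega⟩
            rw [hh, show h + 1 - 1 = h from rfl]
            have h3 : ((N:ℝ) + 1) ^ h ≤ ((N:ℝ) + 2) ^ h :=
              pow_le_pow_left₀ (by positivity) (by linarith) h
            rw [pow_succ, pow_succ]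
            nlinarith [pow_nonneg (by positivity : (0:ℝ) ≤ (N:ℝ)+1) h,
              pow_nonneg (by positivity : (0:ℝ) ≤ (N:ℝ)+2) h]
          rw [hrec]
          refine (abs_add_le _ _).trans ?_
          have hfin : (k + 1 : ℝ) * ((2:ℝ) ^ (k+2) * 3 ^ (k ^ 2) * ((N:ℝ) + 1) ^ ((k+2) / 2 - 1))
              ≤ 3 ^ ((k+2) ^ 2) * ((N:ℝ) + 1) ^ ((k+2) / 2 - 1) := by
            have := mul_le_mul_of_nonneg_right hconst
              (by positivity : (0:ℝ) ≤ ((N:ℝ) + 1) ^ ((k+2) / 2 - 1))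
            calc (k + 1 : ℝ) * ((2:ℝ) ^ (k+2) * 3 ^ (k ^ 2) * ((N:ℝ) + 1) ^ ((k+2) / 2 - 1))
                = (k + 1 : ℝ) * ((2:ℝ) ^ (k+2) * 3 ^ (k ^ 2)) * ((N:ℝ) + 1) ^ ((k+2) / 2 - 1) := by
                  ring
              _ ≤ _ := this
          calc _ ≤ (k + 1 : ℝ) * ((2:ℝ) ^ (k+2) * 3 ^ (k ^ 2) * ((N:ℝ) + 1) ^ ((k+2) / 2 - 1))
                + |bmu p q (k+2) N| := add_le_add hsum (le_refl _)
            _ ≤ 3 ^ ((k+2) ^ 2) * ((N:ℝ) + 1) ^ ((k+2) / 2 - 1)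
                + 3 ^ ((k+2) ^ 2) * ((N:ℝ) + 1) ^ ((k+2) / 2) := add_le_add hfin (ih (k+2))
            _ = 3 ^ ((k+2) ^ 2) * (((N:ℝ) + 1) ^ ((k+2) / 2) + ((N:ℝ) + 1) ^ ((k+2) / 2 - 1)) := by
                ring
            _ ≤ 3 ^ ((k+2) ^ 2) * ((N:ℝ) + 2) ^ ((k+2) / 2) := by
                exact mul_le_mul_of_nonneg_left hstep (by positivity)
            _ = 3 ^ ((k+2) ^ 2) * ((((N+1):ℕ):ℝ) + 1) ^ ((k+2) / 2) := by push_cast; ring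

private noncomputable def cgen (s : ℝ) (k : ℕ) : ℝ :=
  (∏ j ∈ range k, (s + j)) / (Nat.factorial k : ℝ)

private noncomputable def brem (s : ℝ) (M : ℕ) (x : ℝ) : ℝ :=
  (1 + x) ^ (-s) - ∑ k ∈ range M, (-1:ℝ) ^ k * cgen s k * x ^ k

private lemma cgen_zero (s : ℝ) : cgen s 0 = 1 := by simp [cgen]

private lemma cgen_mul_succ (s : ℝ) (k : ℕ) :
    cgen s (k+1) * ((k:ℝ)+1) = s * cgen (s+1) k := by
  simp only [cgen]
  rw [Finset.prod_range_succ' (fun j => s + (j:ℝ)) k]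
  have hcongr : ∏ j ∈ range k, (s + ((j+1 : ℕ):ℝ)) = ∏ j ∈ range k, ((s+1) + (j:ℝ)) :=
    Finset.prod_congr rfl (fun j _ => by push_cast; ring)
  rw [hcongr, Nat.factorial_succ]
  have h1 : ((Nat.factorial k : ℕ) : ℝ) ≠ 0 := by
    exact_mod_cast Nat.factorial_ne_zero k
  have h2 : ((k:ℝ) + 1) ≠ 0 := by positivity
  push_cast
  field_simp
  ring

private lemma brem_hasDerivAt (s : ℝ) (M : ℕ) (x : ℝ) (hx : 0 < 1 + x) :
    HasDerivAt (brem s (M+1)) (-s * brem (s+1) M x) x := by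
  have hg : HasDerivAt (fun y : ℝ => 1 + y) 1 x := (hasDerivAt_id x).const_add 1
  have h1 : HasDerivAt (fun y : ℝ => (1 + y) ^ (-s)) ((-s) * (1+x) ^ (-s-1)) x := by
    have h := Real.hasDerivAt_rpow_const (x := 1 + x) (p := -s) (Or.inl (ne_of_gt hx))
    have := h.comp x hg
    simpa [Function.comp_def] using this
  have h2 : HasDerivAt (fun y : ℝ => ∑ k ∈ range (M+1), (-1:ℝ) ^ k * cgen s k * y ^ k)
      (∑ k ∈ range (M+1), (-1:ℝ) ^ k * cgen s k * ((k:ℝ) * x ^ (k-1))) x := by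
    apply HasDerivAt.fun_sum
    intro k _
    exact (hasDerivAt_pow k x).const_mul ((-1:ℝ) ^ k * cgen s k)
  have h3 := h1.sub h2
  have heq : (-s) * (1+x) ^ (-s-1) - (∑ k ∈ range (M+1), (-1:ℝ) ^ k * cgen s k * ((k:ℝ) * x ^ (k-1)))
      = -s * brem (s+1) M x := by
    rw [brem]
    rw [Finset.sum_range_succ' (fun k => (-1:ℝ) ^ k * cgen s k * ((k:ℝ) * x ^ (k-1))) M]
    have hsum : ∑ k ∈ range M, (-1:ℝ) ^ (k+1) * cgen s (k+1) * (((k+1:ℕ):ℝ) * x ^ (k+1-1))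
        = ∑ k ∈ range M, (-(s * ((-1:ℝ) ^ k * cgen (s+1) k * x ^ k))) := by
      apply Finset.sum_congr rfl
      intro k _
      have := cgen_mul_succ s k
      push_cast
      linear_combination ((-1:ℝ)) ^ (k+1) * x ^ k * this
    rw [hsum]
    have hf0 : (-1:ℝ) ^ 0 * cgen s 0 * (((0:ℕ):ℝ) * x ^ (0-1)) = 0 := by simp
    rw [hf0, add_zero]
    rw [show ∑ k ∈ range M, (-(s * ((-1:ℝ) ^ k * cgen (s+1) k * x ^ k)))
        = -(s * ∑ k ∈ range M, ((-1:ℝ) ^ k * cgen (s+1) k * x ^ k)) by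
      rw [Finset.mul_sum]; exact Finset.sum_neg_distrib _]
    rw [show (1+x) ^ (-(s+1)) = (1+x) ^ (-s-1) by rw [show -(s+1) = -s-1 by ring]]
    ring
  rw [← heq]
  exact h3

private lemma brem_zero_eq (s : ℝ) (M : ℕ) : brem s (M+1) 0 = 0 := by
  rw [brem]
  have h1 : (1 + (0:ℝ)) ^ (-s) = 1 := by norm_num
  have h2 : ∑ k ∈ range (M+1), (-1:ℝ) ^ k * cgen s k * (0:ℝ) ^ k = 1 := by
    rw [Finset.sum_eq_single 0]
    · simp [cgen_zero]
    · intro k _ hk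
      rw [zero_pow hk, mul_zero]
    · intro h; exact absurd (Finset.mem_range.mpr (by omega)) h
  rw [h1, h2]; ring

private lemma brem_bound : ∀ (M : ℕ) (s : ℝ), 0 < s → ∀ x : ℝ, |x| ≤ 1/2 →
    |brem s M x| ≤ (∏ j ∈ range M, (s + (j:ℝ))) * (2:ℝ) ^ (s + M) * |x| ^ M := by
  intro M
  induction M with
  | zero =>
      intro s hs x hx
      have hx1 : (1:ℝ)/2 ≤ 1 + x := by
        rcases abs_le.mp hx with ⟨h1, _⟩; linarith
    /- |brem s 0 x| = (1+x)^(-s) ≤ (1/2)^(-s) = 2^s -/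
      have h0 : brem s 0 x = (1 + x) ^ (-s) := by simp [brem]
      rw [h0, abs_of_nonneg (Real.rpow_nonneg (by linarith) _)]
      have h1 : (1 + x) ^ (-s) ≤ ((1:ℝ)/2) ^ (-s) :=
        Real.rpow_le_rpow_of_nonpos (by norm_num) hx1 (by linarith)
      have h2 : ((1:ℝ)/2) ^ (-s) = (2:ℝ) ^ s := by
        rw [one_div, Real.inv_rpow (by norm_num), Real.rpow_neg (by norm_num), inv_inv]
      have h3 : ((2:ℝ)) ^ (s + (0:ℕ)) = (2:ℝ) ^ s := by norm_num
      rw [Finset.range_zero, Finset.prod_empty, h3, pow_zero, one_mul, mul_one]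
      linarith [h1, h2.le, h2.ge]
  | succ M ih =>
      intro s hs x hx
      set D := Set.uIcc (0:ℝ) x with hD
      have hmemabs : ∀ t ∈ D, |t| ≤ |x| := by
        intro t ht
        rw [hD, Set.mem_uIcc] at ht
        rcases ht with ⟨h1, h2⟩ | ⟨h1, h2⟩
        · rw [abs_le]; constructor
          · linarith [neg_abs_le x, abs_nonneg x]
          · exact h2.trans (le_abs_self x)
        · rw [abs_le]; constructor
          · linarith [neg_abs_le x]
          · linarith [abs_nonneg x]
      have hpos : ∀ t ∈ D, 0 < 1 + t := by
        intro t ht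
        have := hmemabs t ht
        have h1 := (abs_le.mp (this.trans hx)).1
        linarith
      have hderiv : ∀ t ∈ D, HasDerivWithinAt (brem s (M+1)) (-s * brem (s+1) M t) D t :=
        fun t ht => (brem_hasDerivAt s M t (hpos t ht)).hasDerivWithinAt
      have hbound : ∀ t ∈ D, ‖-s * brem (s+1) M t‖
          ≤ s * ((∏ j ∈ range M, ((s+1) + (j:ℝ))) * (2:ℝ) ^ ((s+1) + M) * |x| ^ M) := by
        intro t ht
        rw [norm_mul, norm_neg, Real.norm_eq_abs, Real.norm_eq_abs, abs_of_pos hs]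
        apply mul_le_mul_of_nonneg_left _ hs.le
        refine (ih (s+1) (by linarith) t ((hmemabs t ht).trans hx)).trans ?_
        apply mul_le_mul_of_nonneg_left _ ?_
        · exact pow_le_pow_left₀ (abs_nonneg t) (hmemabs t ht) M
        · positivity
      have hmvt := Convex.norm_image_sub_le_of_norm_hasDerivWithin_le hderiv hbound
        (convex_uIcc 0 x) (Set.left_mem_uIcc) (Set.right_mem_uIcc)
      rw [brem_zero_eq s M, sub_zero, Real.norm_eq_abs, Real.norm_eq_abs, sub_zero] at hmvt
      refine hmvt.trans (le_of_eq ?_)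
      have hprod : (∏ j ∈ range (M+1), (s + (j:ℝ)))
          = s * ∏ j ∈ range M, ((s+1) + (j:ℝ)) := by
        rw [Finset.prod_range_succ' (fun j => s + (j:ℝ)) M]
        have : ∏ j ∈ range M, (s + ((j+1:ℕ):ℝ)) = ∏ j ∈ range M, ((s+1) + (j:ℝ)) :=
          Finset.prod_congr rfl (fun j _ => by push_cast; ring)
        rw [this]
        push_cast
        ring
      have hexp : (2:ℝ) ^ ((s+1) + (M:ℕ)) = (2:ℝ) ^ (s + ((M+1:ℕ):ℝ)) := by
        congr 1
        push_cast
        ring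
      rw [hprod, hexp]
      rw [pow_succ]
      ring

private lemma step_a (p q : ℝ) (r : ℝ) (n : ℕ) (hn : 1 ≤ n) :
    ∑ i ∈ Finset.Icc 1 n, (n.choose i : ℝ) * p ^ i * q ^ (n - i) / (i : ℝ) ^ r
    = (n:ℝ) * p * ∑ i ∈ range n, binw p q (n-1) i * ((i:ℝ)+1) ^ (-(r+1)) := by
  rw [← Finset.Ico_add_one_right_eq_Icc, Finset.sum_Ico_eq_sum_range, show n + 1 - 1 = n from rfl]
  rw [Finset.mul_sum]
  apply Finset.sum_congr rfl
  intro i hi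
  rw [Finset.mem_range] at hi
  have hc : (n.choose (1+i) : ℝ) * ((i:ℝ)+1) = (n:ℝ) * ((n-1).choose i : ℝ) := by
    have h1 : n * ((n-1).choose i) = n.choose (i+1) * (i+1) := by
      have := Nat.add_one_mul_choose_eq (n-1) i
      rw [show n - 1 + 1 = n by omega] at this
      exact this
    rw [show 1 + i = i + 1 by ring]
    exact_mod_cast h1.symm
  have hipos : (0:ℝ) < (i:ℝ) + 1 := by positivity
  have hpow : ((i:ℝ)+1) ^ (-(r+1)) = (((i:ℝ)+1) ^ r * ((i:ℝ)+1))⁻¹ := by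
    rw [Real.rpow_neg hipos.le, Real.rpow_add hipos, Real.rpow_one]
  have hsub : n - (1+i) = n - 1 - i := by omega
  rw [hsub, hpow, binw]
  have hr0 : ((1+i : ℕ):ℝ) ^ r ≠ 0 := by
    apply ne_of_gt
    apply Real.rpow_pos_of_pos
    push_cast; positivity
  have hcast : ((1+i : ℕ):ℝ) ^ r = ((i:ℝ)+1) ^ r := by
    congr 1; push_cast; ring
  rw [hcast] at hr0 ⊢
  field_simp
  rw [show p ^ (1+i) = p * p ^ i by rw [pow_add, pow_one]]
  linear_combination (p * p ^ i * q ^ (n-1-i)) * hc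

set_option maxHeartbeats 1000000 in
private lemma key_est (p q : ℝ) (hp0 : 0 < p) (hp1 : p < 1) (hq : q = 1 - p)
    (r : ℝ) (hr : 0 < r) (m : ℕ) (hm : 1 ≤ m) :
    ∃ C > (0:ℝ), ∀ n : ℕ, 1 ≤ n →
      |((n:ℝ)*p + q) ^ (r+1) * (∑ i ∈ range n, binw p q (n-1) i * ((i:ℝ)+1) ^ (-(r+1)))
        - ∑ k ∈ range m, (-1:ℝ)^k * cgen (r+1) k * bmu p q k (n-1) / ((n:ℝ)*p+q)^k|
      ≤ C / (n:ℝ) ^ ((m+1)/2) := by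
  have hq0 : 0 < q := by rw [hq]; linarith
  have hq1 : q < 1 := by rw [hq]; linarith
  set s : ℝ := r + 1 with hs_def
  have hs : 0 < s := by simp [hs_def]; linarith
  set h : ℕ := (m+1)/2 with hh_def
  set M : ℕ := 2 * h with hM_def
  have hMeven : Even M := ⟨h, by omega⟩
  have hMm : m ≤ M := by omega
  have hMm' : M = m ∨ M = m + 1 := by omega
  have hh1 : 1 ≤ h := by omega
  set cs : ℕ := ⌈s⌉₊ with hcs_def
  set M' : ℕ := 2 * (h + M + cs) with hM'_def
  have hM'even : Even M' := ⟨h + M + cs, by omega⟩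
  have hcgen_pos : ∀ k, 0 < cgen s k := by
    intro k
    apply div_pos
    · apply Finset.prod_pos; intro j _; positivity
    · exact_mod_cast Nat.factorial_pos k
  set K : ℝ := (∏ j ∈ range M, (s + (j:ℝ))) * (2:ℝ) ^ (s + (M:ℕ)) with hK_def
  have hKpos : 0 < K := by
    apply mul_pos
    · apply Finset.prod_pos; intro j _; positivity
    · exact Real.rpow_pos_of_pos (by norm_num) _
  set Cg : ℝ := ∑ k ∈ range M, cgen s k with hCg_def
  have hCg0 : 0 ≤ Cg := Finset.sum_nonneg (fun k _ => (hcgen_pos k).le)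
  set C1 : ℝ := cgen s m * 3 ^ (m^2) / p ^ m with hC1_def
  set C2 : ℝ := K * 3 ^ (M^2) / p ^ M with hC2_def
  set C3 : ℝ := ((2:ℝ) ^ s + Cg) * 2 ^ M' * 3 ^ (M'^2) / p ^ M' with hC3_def
  have hC1pos : 0 < C1 := by
    apply div_pos (mul_pos (hcgen_pos m) (by positivity)) (by positivity)
  have hC2pos : 0 < C2 := by
    apply div_pos (mul_pos hKpos (by positivity)) (by positivity)
  have hC3pos : 0 < C3 := by
    apply div_pos ?_ (by positivity)
    apply mul_pos (mul_pos ?_ (by positivity)) (by positivity)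
    have := Real.rpow_pos_of_pos (show (0:ℝ) < 2 by norm_num) s
    linarith
  refine ⟨C1 + C2 + C3, by linarith, ?_⟩
  intro n hn
  set N : ℕ := n - 1 with hN_def
  have hnN : n = N + 1 := by omega
  have hn1 : (1:ℝ) ≤ (n:ℝ) := by exact_mod_cast hn
  have hnpos : (0:ℝ) < (n:ℝ) := by linarith
  set a : ℝ := (n:ℝ)*p + q with ha_def
  have haN : a = (N:ℝ)*p + 1 := by
    rw [ha_def, hq, hnN]; push_cast; ring
  have ha1 : 1 ≤ a := by
    rw [haN]; have : (0:ℝ) ≤ (N:ℝ)*p := by positivity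
    linarith
  have ha0 : 0 < a := by linarith
  have hanp : (n:ℝ)*p < a := by rw [ha_def]; linarith
  have hnp0 : 0 < (n:ℝ)*p := by positivity
  have ha2n : a ≤ 2*(n:ℝ) := by
    rw [ha_def]; nlinarith
  -- the normalized deviation
  set x : ℕ → ℝ := fun i => ((i:ℝ) - (N:ℝ)*p)/a with hx_def
  have h1x : ∀ i : ℕ, 1 + x i = ((i:ℝ)+1)/a := by
    intro i
    rw [hx_def]
    field_simp
    rw [haN]; ring
  have h1xpos : ∀ i : ℕ, 0 < 1 + x i := by
    intro i; rw [h1x i]; positivity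
  have hxn : ∀ i ∈ range n, |x i| ≤ (n:ℝ) := by
    intro i hi
    rw [Finset.mem_range] at hi
    have hi' : (i:ℝ) ≤ (n:ℝ) - 1 := by
      have : (i:ℝ) ≤ (N:ℝ) := by exact_mod_cast (by omega : i ≤ N)
      rw [hnN]; push_cast; linarith
    have hNp : 0 ≤ (N:ℝ)*p := by positivity
    have hNpn : (N:ℝ)*p ≤ (n:ℝ) := by
      have h1 : (N:ℝ) ≤ (n:ℝ) := by exact_mod_cast (by omega : N ≤ n)
      nlinarith
    rw [hx_def, abs_div, abs_of_pos ha0, div_le_iff₀ ha0]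
    have h2 : |(i:ℝ) - (N:ℝ)*p| ≤ (n:ℝ) := by
      rw [abs_le]; constructor <;> linarith [Nat.cast_nonneg (α := ℝ) i]
    exact h2.trans (le_mul_of_one_le_right hnpos.le ha1)
  -- step 1 : a^s * Σ w (i+1)^{-s} = Σ w (1+x)^{-s}
  have step1 : a ^ s * (∑ i ∈ range n, binw p q N i * ((i:ℝ)+1) ^ (-s))
      = ∑ i ∈ range n, binw p q N i * (1 + x i) ^ (-s) := by
    rw [Finset.mul_sum]
    apply Finset.sum_congr rfl
    intro i _
    rw [h1x i]
    have hip : (0:ℝ) < (i:ℝ)+1 := by positivity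
    rw [Real.div_rpow (by linarith) ha0.le]
    rw [Real.rpow_neg ha0.le s]
    rw [div_eq_mul_inv, inv_inv]
    ring
  -- step 2 : expansion with brem
  have step2 : ∑ i ∈ range n, binw p q N i * (1 + x i) ^ (-s)
      = (∑ i ∈ range n, binw p q N i * brem s M (x i))
        + ∑ k ∈ range M, (-1:ℝ)^k * cgen s k * bmu p q k N / a^k := by
    have hPt : ∀ i, (1 + x i) ^ (-s) = brem s M (x i) + ∑ k ∈ range M, (-1:ℝ)^k * cgen s k * (x i)^k := by
      intro i; rw [brem]; ring
    calc ∑ i ∈ range n, binw p q N i * (1 + x i) ^ (-s)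
        = ∑ i ∈ range n, (binw p q N i * brem s M (x i)
            + ∑ k ∈ range M, (-1:ℝ)^k * cgen s k * (binw p q N i * ((i:ℝ) - (N:ℝ)*p)^k) / a^k) := by
          apply Finset.sum_congr rfl
          intro i _
          rw [hPt i, mul_add, Finset.mul_sum]
          congr 1
          apply Finset.sum_congr rfl
          intro k _
          rw [hx_def, div_pow]
          ring
      _ = _ := by
          rw [Finset.sum_add_distrib]
          congr 1
          rw [Finset.sum_comm]
          apply Finset.sum_congr rfl
          intro k _
          rw [bmu, ← hnN, Finset.mul_sum, Finset.sum_div]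
          try (apply Finset.sum_congr rfl; intro i _; ring)
  -- bound on each brem term
  have hbrem_all : ∀ i ∈ range n, |brem s M (x i)|
      ≤ K * (x i)^M + ((2:ℝ)^s + Cg) * (n:ℝ)^(cs + M) * 2^M' * (x i)^M' := by
    intro i hi
    have hxabs := hxn i hi
    have hxM : (0:ℝ) ≤ (x i)^M := hMeven.pow_nonneg _
    have hxM' : (0:ℝ) ≤ (x i)^M' := hM'even.pow_nonneg _
    have h2s : (0:ℝ) < (2:ℝ)^s := Real.rpow_pos_of_pos (by norm_num) s
    have hncsM : (1:ℝ) ≤ (n:ℝ)^(cs+M) := one_le_pow₀ hn1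
    have hLam : |brem s M (x i)| ≤ ((2:ℝ)^s + Cg) * (n:ℝ)^(cs + M) := by
      have t1 : |brem s M (x i)| ≤ (1 + x i) ^ (-s) + ∑ k ∈ range M, cgen s k * |x i|^k := by
        rw [brem]
        refine (abs_sub _ _).trans ?_
        apply add_le_add
        · rw [abs_of_nonneg (Real.rpow_nonneg (h1xpos i).le _)]
        · refine (Finset.abs_sum_le_sum_abs _ _).trans ?_
          apply Finset.sum_le_sum
          intro k _
          rw [abs_mul, abs_mul, abs_pow, abs_pow, abs_neg, abs_one, one_pow, one_mul,
            abs_of_pos (hcgen_pos k)]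
      have t2 : (1 + x i) ^ (-s) ≤ (2:ℝ)^s * (n:ℝ)^s := by
        have e1 : (1 + x i) ^ (-s) = ((i:ℝ)+1) ^ (-s) * a ^ s := by
          rw [h1x i]
          have hip : (0:ℝ) < (i:ℝ)+1 := by positivity
          rw [Real.div_rpow (by linarith) ha0.le, Real.rpow_neg ha0.le s,
            div_eq_mul_inv, inv_inv]
        have e2 : ((i:ℝ)+1) ^ (-s) ≤ 1 := by
          apply Real.rpow_le_one_of_one_le_of_nonpos
          · have := Nat.cast_nonneg (α := ℝ) i; linarith
          · linarith
        have e3 : a ^ s ≤ (2:ℝ)^s * (n:ℝ)^s := by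
          rw [← Real.mul_rpow (by norm_num) hnpos.le]
          exact Real.rpow_le_rpow ha0.le ha2n hs.le
        have e4 : (0:ℝ) ≤ a ^ s := Real.rpow_nonneg ha0.le s
        calc (1 + x i) ^ (-s) = ((i:ℝ)+1) ^ (-s) * a ^ s := e1
          _ ≤ 1 * a ^ s := mul_le_mul_of_nonneg_right e2 e4
          _ = a ^ s := one_mul _
          _ ≤ (2:ℝ)^s * (n:ℝ)^s := e3
      have t3 : ∑ k ∈ range M, cgen s k * |x i|^k ≤ Cg * (n:ℝ)^M := by
        rw [hCg_def, Finset.sum_mul]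
        apply Finset.sum_le_sum
        intro k hk
        rw [Finset.mem_range] at hk
        apply mul_le_mul_of_nonneg_left _ (hcgen_pos k).le
        calc |x i|^k ≤ (n:ℝ)^k := pow_le_pow_left₀ (abs_nonneg _) hxabs k
          _ ≤ (n:ℝ)^M := pow_le_pow_right₀ hn1 (by omega)
      have t4 : (n:ℝ)^s ≤ (n:ℝ)^(cs+M) := by
        calc (n:ℝ)^s ≤ (n:ℝ)^((cs:ℕ):ℝ) :=
              Real.rpow_le_rpow_of_exponent_le hn1 (Nat.le_ceil s)
          _ = (n:ℝ)^(cs:ℕ) := Real.rpow_natCast _ _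
          _ ≤ (n:ℝ)^(cs+M) := pow_le_pow_right₀ hn1 (by omega)
      have t5 : ((n:ℝ))^M ≤ (n:ℝ)^(cs+M) := pow_le_pow_right₀ hn1 (by omega)
      calc |brem s M (x i)| ≤ (1 + x i) ^ (-s) + ∑ k ∈ range M, cgen s k * |x i|^k := t1
        _ ≤ (2:ℝ)^s * (n:ℝ)^s + Cg * (n:ℝ)^M := add_le_add t2 t3
        _ ≤ (2:ℝ)^s * (n:ℝ)^(cs+M) + Cg * (n:ℝ)^(cs+M) := by
            apply add_le_add
            · exact mul_le_mul_of_nonneg_left t4 h2s.le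
            · exact mul_le_mul_of_nonneg_left t5 hCg0
        _ = ((2:ℝ)^s + Cg) * (n:ℝ)^(cs + M) := by ring
    by_cases hxi : |x i| ≤ 1/2
    · have hb := brem_bound M s hs (x i) hxi
      have hKx : |brem s M (x i)| ≤ K * (x i)^M := by
        rw [hK_def]
        calc |brem s M (x i)| ≤ (∏ j ∈ range M, (s + (j:ℝ))) * (2:ℝ) ^ (s + (M:ℕ)) * |x i| ^ M := hb
          _ = (∏ j ∈ range M, (s + (j:ℝ))) * (2:ℝ) ^ (s + (M:ℕ)) * (x i) ^ M := by
              rw [hMeven.pow_abs]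
      refine hKx.trans ?_
      have : (0:ℝ) ≤ ((2:ℝ)^s + Cg) * (n:ℝ)^(cs + M) * 2^M' * (x i)^M' := by
        apply mul_nonneg (mul_nonneg (mul_nonneg (by linarith) (by positivity)) (by positivity)) hxM'
      linarith
    · push_neg at hxi
      have h1 : (1:ℝ) ≤ 2^M' * (x i)^M' := by
        have : (1:ℝ) ≤ 2 * |x i| := by linarith
        calc (1:ℝ) ≤ (2 * |x i|)^M' := one_le_pow₀ this
          _ = 2^M' * |x i|^M' := mul_pow _ _ _
          _ = 2^M' * (x i)^M' := by rw [hM'even.pow_abs]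
      have hLam0 : (0:ℝ) ≤ ((2:ℝ)^s + Cg) * (n:ℝ)^(cs + M) := by
        apply mul_nonneg (by linarith) (by positivity)
      have hKxnn : (0:ℝ) ≤ K * (x i)^M := mul_nonneg hKpos.le hxM
      calc |brem s M (x i)| ≤ ((2:ℝ)^s + Cg) * (n:ℝ)^(cs + M) := hLam
        _ = ((2:ℝ)^s + Cg) * (n:ℝ)^(cs + M) * 1 := (mul_one _).symm
        _ ≤ ((2:ℝ)^s + Cg) * (n:ℝ)^(cs + M) * (2^M' * (x i)^M') :=
            mul_le_mul_of_nonneg_left h1 hLam0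
        _ = ((2:ℝ)^s + Cg) * (n:ℝ)^(cs + M) * 2^M' * (x i)^M' := by ring
        _ ≤ K * (x i)^M + ((2:ℝ)^s + Cg) * (n:ℝ)^(cs + M) * 2^M' * (x i)^M' := by linarith
  -- sum the brem bounds
  have hw0 : ∀ i, 0 ≤ binw p q N i := by
    intro i
    apply mul_nonneg (mul_nonneg (by positivity) (by positivity))
    positivity
  have hS : ∀ L : ℕ, ∑ i ∈ range n, binw p q N i * (x i)^L = bmu p q L N / a^L := by
    intro L
    rw [bmu, ← hnN, Finset.sum_div]
    apply Finset.sum_congr rfl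
    intro i _
    rw [hx_def]
    simp only []
    rw [div_pow]
    ring
  have hbmu := bmu_bound p q hp0 hp1 hq
  have hNn : ((N:ℝ) + 1) = (n:ℝ) := by rw [hnN]; push_cast; ring
  have hnh0 : (0:ℝ) < (n:ℝ)^h := by positivity
  have hbrem_sum : |∑ i ∈ range n, binw p q N i * brem s M (x i)| ≤ C2 / (n:ℝ)^h + C3 / (n:ℝ)^h := by
    have hD2 : (0:ℝ) ≤ ((2:ℝ)^s + Cg) * (n:ℝ)^(cs + M) * 2^M' := by
      have h2s : (0:ℝ) < (2:ℝ)^s := Real.rpow_pos_of_pos (by norm_num) s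
      apply mul_nonneg (mul_nonneg (by linarith) (by positivity)) (by positivity)
    have step : |∑ i ∈ range n, binw p q N i * brem s M (x i)|
        ≤ K * (bmu p q M N / a^M)
          + ((2:ℝ)^s + Cg) * (n:ℝ)^(cs + M) * 2^M' * (bmu p q M' N / a^M') := by
      refine (Finset.abs_sum_le_sum_abs _ _).trans ?_
      have e : ∑ i ∈ range n, |binw p q N i * brem s M (x i)|
          ≤ ∑ i ∈ range n, (K * (binw p q N i * (x i)^M)
            + ((2:ℝ)^s + Cg) * (n:ℝ)^(cs + M) * 2^M' * (binw p q N i * (x i)^M')) := by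
        apply Finset.sum_le_sum
        intro i hi
        rw [abs_mul, abs_of_nonneg (hw0 i)]
        calc binw p q N i * |brem s M (x i)|
            ≤ binw p q N i * (K * (x i)^M + ((2:ℝ)^s + Cg) * (n:ℝ)^(cs + M) * 2^M' * (x i)^M') :=
              mul_le_mul_of_nonneg_left (hbrem_all i hi) (hw0 i)
          _ = K * (binw p q N i * (x i)^M)
              + ((2:ℝ)^s + Cg) * (n:ℝ)^(cs + M) * 2^M' * (binw p q N i * (x i)^M') := by ring
      refine e.trans (le_of_eq ?_)
      rw [Finset.sum_add_distrib, ← Finset.mul_sum, ← Finset.mul_sum, hS M, hS M']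
    refine step.trans ?_
    apply add_le_add
    · -- K * bmu M N / a^M ≤ C2 / n^h
      have hdenom : (0:ℝ) < ((n:ℝ)*p)^M := by positivity
      have e1 : bmu p q M N / a^M ≤ |bmu p q M N| / ((n:ℝ)*p)^M := by
        apply div_le_div₀ (abs_nonneg _) (le_abs_self _) hdenom
        exact pow_le_pow_left₀ hnp0.le hanp.le M
      have e2 : |bmu p q M N| ≤ 3 ^ (M^2) * (n:ℝ)^h := by
        have := hbmu N M
        rw [hNn] at this
        rw [show M / 2 = h by omega] at this
        exact this
      have e3 : bmu p q M N / a^M ≤ (3 ^ (M^2) * (n:ℝ)^h) / (p^M * (n:ℝ)^M) := by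
        refine e1.trans ?_
        rw [show ((n:ℝ)*p)^M = p^M * (n:ℝ)^M by rw [mul_pow]; ring]
        apply div_le_div₀ (by positivity) e2 (by positivity) (le_refl _)
      calc K * (bmu p q M N / a^M) ≤ K * ((3 ^ (M^2) * (n:ℝ)^h) / (p^M * (n:ℝ)^M)) :=
            mul_le_mul_of_nonneg_left e3 hKpos.le
        _ = C2 / (n:ℝ)^h := by
            rw [hC2_def, show (n:ℝ)^M = (n:ℝ)^h * (n:ℝ)^h by rw [← pow_add]; congr 1; omega]
            field_simp
    · -- second term
      have hdenom : (0:ℝ) < ((n:ℝ)*p)^M' := by positivity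
      have e1 : bmu p q M' N / a^M' ≤ |bmu p q M' N| / ((n:ℝ)*p)^M' := by
        apply div_le_div₀ (abs_nonneg _) (le_abs_self _) hdenom
        exact pow_le_pow_left₀ hnp0.le hanp.le M'
      have e2 : |bmu p q M' N| ≤ 3 ^ (M'^2) * (n:ℝ)^(h + M + cs) := by
        have := hbmu N M'
        rw [hNn] at this
        rw [show M' / 2 = h + M + cs by omega] at this
        exact this
      have e3 : bmu p q M' N / a^M' ≤ (3 ^ (M'^2) * (n:ℝ)^(h + M + cs)) / (p^M' * (n:ℝ)^M') := by
        refine e1.trans ?_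
        rw [show ((n:ℝ)*p)^M' = p^M' * (n:ℝ)^M' by rw [mul_pow]; ring]
        apply div_le_div₀ (by positivity) e2 (by positivity) (le_refl _)
      calc ((2:ℝ)^s + Cg) * (n:ℝ)^(cs + M) * 2^M' * (bmu p q M' N / a^M')
          ≤ ((2:ℝ)^s + Cg) * (n:ℝ)^(cs + M) * 2^M'
              * ((3 ^ (M'^2) * (n:ℝ)^(h + M + cs)) / (p^M' * (n:ℝ)^M')) :=
            mul_le_mul_of_nonneg_left e3 hD2
        _ = C3 / (n:ℝ)^h := by
            rw [hC3_def, show (n:ℝ)^M' = (n:ℝ)^(cs+M) * (n:ℝ)^(h+M+cs) * (n:ℝ)^h by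
              rw [← pow_add, ← pow_add]; congr 1; omega]
            field_simp
  -- tail term
  have htail : |∑ k ∈ range M, (-1:ℝ)^k * cgen s k * bmu p q k N / a^k
      - ∑ k ∈ range m, (-1:ℝ)^k * cgen s k * bmu p q k N / a^k| ≤ C1 / (n:ℝ)^h := by
    rcases hMm' with hc | hc
    · rw [hc, sub_self, abs_zero]
      positivity
    · rw [hc, Finset.sum_range_succ, add_sub_cancel_left]
      have hmodd : m / 2 + h = m := by omega
      have habs : |(-1:ℝ)^m * cgen s m * bmu p q m N / a^m|
          = cgen s m * |bmu p q m N| / a^m := by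
        rw [abs_div, abs_mul, abs_mul, abs_pow, abs_neg, abs_one, one_pow, one_mul,
          abs_of_pos (hcgen_pos m), abs_of_pos (pow_pos ha0 m)]
      rw [habs]
      have hdenom : (0:ℝ) < ((n:ℝ)*p)^m := by positivity
      have e1 : cgen s m * |bmu p q m N| / a^m ≤ cgen s m * |bmu p q m N| / ((n:ℝ)*p)^m := by
        apply div_le_div₀ (mul_nonneg (hcgen_pos m).le (abs_nonneg _)) (le_refl _) hdenom
        exact pow_le_pow_left₀ hnp0.le hanp.le m
      have e2 : |bmu p q m N| ≤ 3 ^ (m^2) * (n:ℝ)^(m/2) := by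
        have := hbmu N m
        rw [hNn] at this
        exact this
      refine e1.trans ?_
      calc cgen s m * |bmu p q m N| / ((n:ℝ)*p)^m
          ≤ cgen s m * (3 ^ (m^2) * (n:ℝ)^(m/2)) / ((n:ℝ)*p)^m := by
            apply div_le_div₀ (mul_nonneg (hcgen_pos m).le (by positivity))
              (mul_le_mul_of_nonneg_left e2 (hcgen_pos m).le) hdenom (le_refl _)
        _ = C1 / (n:ℝ)^h := by
            rw [hC1_def, show ((n:ℝ)*p)^m = p^m * ((n:ℝ)^(m/2) * (n:ℝ)^h) by
              rw [← pow_add, hmodd, mul_pow]; ring]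
            field_simp
  -- combine
  have hcomb : ((n:ℝ)*p + q) ^ (r+1) * (∑ i ∈ range n, binw p q (n-1) i * ((i:ℝ)+1) ^ (-(r+1)))
        - ∑ k ∈ range m, (-1:ℝ)^k * cgen (r+1) k * bmu p q k (n-1) / ((n:ℝ)*p+q)^k
      = (∑ i ∈ range n, binw p q N i * brem s M (x i))
        + (∑ k ∈ range M, (-1:ℝ)^k * cgen s k * bmu p q k N / a^k
           - ∑ k ∈ range m, (-1:ℝ)^k * cgen s k * bmu p q k N / a^k) := by
    rw [← hN_def, ← ha_def, ← hs_def, step1, step2]; ring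
  rw [hcomb]
  calc |(∑ i ∈ range n, binw p q N i * brem s M (x i))
        + (∑ k ∈ range M, (-1:ℝ)^k * cgen s k * bmu p q k N / a^k
           - ∑ k ∈ range m, (-1:ℝ)^k * cgen s k * bmu p q k N / a^k)|
      ≤ (C2 / (n:ℝ)^h + C3 / (n:ℝ)^h) + C1 / (n:ℝ)^h := by
        refine (abs_add_le _ _).trans (add_le_add hbrem_sum htail)
    _ = (C1 + C2 + C3) / (n:ℝ)^h := by ring

/-- Asymptotic expansion of the `r`-th inverse moment of the positive binomial
distribution: `f_r(n) = (np/(np+q)^{r+1}) { Σ_{k=0}^{m-1} (-1)^k C(r+k,k) μ_k(n-1)/(np+q)^k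
+ O(1/n^{⌈m/2⌉}) }`. -/
theorem inverse_moment_binomial_asymptotic_expansion
    (p q : ℝ) (hp : p ∈ Set.Ioo (0:ℝ) 1) (hq : q = 1 - p)
    (r : ℝ) (hr : 0 < r) (m : ℕ) (hm : 1 ≤ m) :
    ∃ C > (0:ℝ), ∃ N : ℕ, 0 < N ∧ ∀ n : ℕ, N ≤ n →
      |(∑ i ∈ Finset.Icc 1 n, (n.choose i : ℝ) * p ^ i * q ^ (n - i) / (i : ℝ) ^ r)
        - ((n : ℝ) * p / ((n : ℝ) * p + q) ^ (r + 1)) *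
            ∑ k ∈ Finset.range m, (-1 : ℝ) ^ k *
              ((∏ j ∈ Finset.range k, (r + (j : ℝ) + 1)) / (Nat.factorial k : ℝ)) *
              (∑ i ∈ Finset.range n,
                ((n - 1).choose i : ℝ) * p ^ i * q ^ (n - 1 - i)
                  * ((i : ℝ) - ((n : ℝ) - 1) * p) ^ k)
              / ((n : ℝ) * p + q) ^ k|
      ≤ C * ((n : ℝ) * p / ((n : ℝ) * p + q) ^ (r + 1)) / (n : ℝ) ^ ((m + 1) / 2) := by
  obtain ⟨hp0, hp1⟩ := hp
  have hq0 : 0 < q := by rw [hq]; linarith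
  obtain ⟨C, hC, hkey⟩ := key_est p q hp0 hp1 hq r hr m hm
  refine ⟨C, hC, 1, one_pos, ?_⟩
  intro n hn
  have hn1 : (1:ℝ) ≤ (n:ℝ) := by exact_mod_cast hn
  have hnp0 : (0:ℝ) < (n:ℝ)*p := by nlinarith
  have ha0 : (0:ℝ) < (n:ℝ)*p + q := by linarith
  have has : (0:ℝ) < ((n:ℝ)*p + q) ^ (r+1) := Real.rpow_pos_of_pos ha0 _
  have hstmtS : ∀ k ∈ range m, (-1 : ℝ) ^ k *
              ((∏ j ∈ Finset.range k, (r + (j : ℝ) + 1)) / (Nat.factorial k : ℝ)) *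
              (∑ i ∈ Finset.range n,
                ((n - 1).choose i : ℝ) * p ^ i * q ^ (n - 1 - i)
                  * ((i : ℝ) - ((n : ℝ) - 1) * p) ^ k)
              / ((n : ℝ) * p + q) ^ k
      = (-1:ℝ)^k * cgen (r+1) k * bmu p q k (n-1) / ((n:ℝ)*p+q)^k := by
    intro k _
    have hprod : ∏ j ∈ range k, (r + (j:ℝ) + 1) = ∏ j ∈ range k, ((r+1) + (j:ℝ)) :=
      Finset.prod_congr rfl (fun j _ => by ring)
    have hcast : ((n-1:ℕ):ℝ) = (n:ℝ) - 1 := by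
      have := Nat.cast_sub (R := ℝ) hn
      simpa using this
    have hbmu_eq : ∑ i ∈ Finset.range n,
          ((n - 1).choose i : ℝ) * p ^ i * q ^ (n - 1 - i) * ((i : ℝ) - ((n : ℝ) - 1) * p) ^ k
        = bmu p q k (n-1) := by
      rw [bmu, show n - 1 + 1 = n by omega]
      apply Finset.sum_congr rfl
      intro i _
      rw [binw, hcast]
    rw [hbmu_eq, cgen, hprod]
  rw [Finset.sum_congr rfl hstmtS]
  rw [step_a p q r n hn]
  have hfactor : (n:ℝ)*p * (∑ i ∈ range n, binw p q (n-1) i * ((i:ℝ)+1) ^ (-(r+1)))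
        - ((n:ℝ)*p/((n:ℝ)*p+q)^(r+1)) * ∑ k ∈ range m,
            (-1:ℝ)^k * cgen (r+1) k * bmu p q k (n-1) / ((n:ℝ)*p+q)^k
      = ((n:ℝ)*p/((n:ℝ)*p+q)^(r+1))
        * (((n:ℝ)*p + q) ^ (r+1) * (∑ i ∈ range n, binw p q (n-1) i * ((i:ℝ)+1) ^ (-(r+1)))
          - ∑ k ∈ range m, (-1:ℝ)^k * cgen (r+1) k * bmu p q k (n-1) / ((n:ℝ)*p+q)^k) := by
    field_simp
  rw [hfactor, abs_mul, abs_of_pos (div_pos hnp0 has)]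
  calc ((n:ℝ)*p/((n:ℝ)*p+q)^(r+1)) * |_| ≤ ((n:ℝ)*p/((n:ℝ)*p+q)^(r+1)) * (C / (n:ℝ)^((m+1)/2)) :=
        mul_le_mul_of_nonneg_left (hkey n hn) (div_pos hnp0 has).le
    _ = C * ((n:ℝ)*p/((n:ℝ)*p+q)^(r+1)) / (n:ℝ)^((m+1)/2) := by ring
end

section
/- For every p ∈ (0,1), q = 1−p, every positive integer n, and every real r > 0: f_r(n) = (np / (Γ(r+1)·(np+q)^{r+1})) · ∫₀^∞ y^r e^{−y} ( q·e^{yp/(np+q)} + p·e^{−yq/(np+q)} )^{n−1} dy. -/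
set_option maxRecDepth 8000


open MeasureTheory Real Finset

lemma integrableOn_rpow_mul_exp_neg_mul_aux {s b : ℝ} (hs : -1 < s) (hb : 0 < b) :
    IntegrableOn (fun x : ℝ => x ^ s * Real.exp (-(b * x))) (Set.Ioi 0) := by
  have := integrableOn_rpow_mul_exp_neg_mul_rpow hs (zero_lt_one' ℝ) hb
  simpa [Real.rpow_one, neg_mul] using this

/-- For `p ∈ (0,1)`, `q = 1 - p`, positive integer `n` and real `r > 0`,
`f_r(n) = (np/(Γ(r+1)(np+q)^{r+1})) ∫₀^∞ y^r e^{-y}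
(q e^{yp/(np+q)} + p e^{-yq/(np+q)})^{n-1} dy`. -/
theorem inverse_moment_binomial_integral_central_repr
    (p q : ℝ) (hp : p ∈ Set.Ioo (0:ℝ) 1) (hq : q = 1 - p)
    (n : ℕ) (hn : 0 < n) (r : ℝ) (hr : 0 < r) :
    ∑ i ∈ Finset.Icc 1 n, (n.choose i : ℝ) * p ^ i * q ^ (n - i) / (i : ℝ) ^ r
      = ((n : ℝ) * p / (Real.Gamma (r + 1) * ((n : ℝ) * p + q) ^ (r + 1))) *
        ∫ y in Set.Ioi (0:ℝ),
          y ^ r * Real.exp (-y) *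
            (q * Real.exp (y * p / ((n : ℝ) * p + q))
              + p * Real.exp (-(y * q) / ((n : ℝ) * p + q))) ^ (n - 1) := by
  obtain ⟨hp0, hp1⟩ := hp
  have hq0 : 0 < q := by rw [hq]; linarith
  have hn1 : (1:ℝ) ≤ (n:ℝ) := by exact_mod_cast hn
  have hnpos : (0:ℝ) < (n:ℝ) := by linarith
  set c : ℝ := (n:ℝ) * p + q with hc
  clear_value c
  have hcpos : 0 < c := by rw [hc]; positivity
  have hGpos : 0 < Real.Gamma (r + 1) := Real.Gamma_pos_of_pos (by linarith)
  -- rewrite the integrand as a finite sum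
  have key : ∀ y ∈ Set.Ioi (0:ℝ),
      y ^ r * Real.exp (-y) *
        (q * Real.exp (y * p / c) + p * Real.exp (-(y * q) / c)) ^ (n - 1)
      = ∑ k ∈ Finset.range n, ((n-1).choose k : ℝ) * p ^ k * q ^ (n-1-k) *
          (y ^ (r + 1 - 1) * Real.exp (-((((k:ℝ)+1)/c) * y))) := by
    intro y _
    rw [add_comm (q * _) (p * _), add_pow]
    have hrange : n - 1 + 1 = n := Nat.succ_pred_eq_of_pos hn
    rw [hrange, Finset.mul_sum]
    refine Finset.sum_congr rfl fun k hk => ?_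
    have hk' : k ≤ n - 1 := by
      have := Finset.mem_range.mp hk
      omega
    have hcast : ((n - 1 - k : ℕ) : ℝ) = (n:ℝ) - 1 - (k:ℝ) := by
      rw [Nat.cast_sub hk', Nat.cast_sub hn]
      push_cast
      ring
    rw [mul_pow, mul_pow, ← Real.exp_nat_mul, ← Real.exp_nat_mul]
    rw [show r + 1 - 1 = r by ring]
    have hexp : -y + ((k:ℝ) * (-(y * q) / c) + ((n - 1 - k : ℕ) : ℝ) * (y * p / c))
        = -((((k:ℝ)+1)/c) * y) := by
      rw [hcast]
      have hcne : c ≠ 0 := ne_of_gt hcpos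
      have h1 : (k:ℝ) * (-(y * q) / c) + ((n:ℝ) - 1 - (k:ℝ)) * (y * p / c)
          = ((((n:ℝ) - 1 - (k:ℝ)) * p - (k:ℝ) * q) * y) / c := by ring
      have h2 : -y = (-(y * c)) / c := by
        rw [neg_div, mul_div_cancel_right₀ _ hcne]
      rw [h1, h2, ← add_div]
      rw [show -((((k:ℝ)+1)/c) * y) = (-(((k:ℝ)+1) * y)) / c from by ring]
      congr 1
      rw [hc, hq]; ring
    have hexp2 : Real.exp (-y) * (Real.exp ((k:ℝ) * (-(y * q) / c)) *
        Real.exp (((n - 1 - k : ℕ) : ℝ) * (y * p / c)))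
        = Real.exp (-((((k:ℝ)+1)/c) * y)) := by
      rw [← Real.exp_add, ← Real.exp_add, hexp]
    rw [← hexp2]
    ring
  rw [setIntegral_congr_fun measurableSet_Ioi key]
  have hint : ∀ k ∈ Finset.range n,
      IntegrableOn (fun y : ℝ => ((n-1).choose k : ℝ) * p ^ k * q ^ (n-1-k) *
        (y ^ (r + 1 - 1) * Real.exp (-((((k:ℝ)+1)/c) * y)))) (Set.Ioi 0) := by
    intro k _
    have hb : (0:ℝ) < ((k:ℝ)+1)/c := by positivity
    exact (integrableOn_rpow_mul_exp_neg_mul_aux (by linarith : (-1:ℝ) < r + 1 - 1) hb).const_mul _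
  rw [MeasureTheory.integral_finset_sum _ hint]
  have hval : ∀ k ∈ Finset.range n,
      (∫ y in Set.Ioi (0:ℝ), ((n-1).choose k : ℝ) * p ^ k * q ^ (n-1-k) *
        (y ^ (r + 1 - 1) * Real.exp (-((((k:ℝ)+1)/c) * y))))
      = ((n-1).choose k : ℝ) * p ^ k * q ^ (n-1-k) *
          ((1 / (((k:ℝ)+1)/c)) ^ (r+1) * Real.Gamma (r+1)) := by
    intro k _
    rw [MeasureTheory.integral_const_mul]
    rw [integral_rpow_mul_exp_neg_mul_Ioi (by linarith : (0:ℝ) < r + 1)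
      (by positivity : (0:ℝ) < ((k:ℝ)+1)/c)]
  rw [Finset.sum_congr rfl hval]
  -- reindex the LHS
  rw [← Finset.Ico_add_one_right_eq_Icc, Finset.sum_Ico_eq_sum_range]
  rw [show n + 1 - 1 = n by omega]
  rw [Finset.mul_sum]
  refine Finset.sum_congr rfl fun k hk => ?_
  have hk' : k ≤ n - 1 := by
    have := Finset.mem_range.mp hk
    omega
  have hkpos : (0:ℝ) < (k:ℝ) + 1 := by positivity
  have hchoose : ((n:ℝ)) * ((n-1).choose k : ℝ) = (n.choose (k+1) : ℝ) * ((k:ℝ)+1) := by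
    have h := Nat.add_one_mul_choose_eq (n-1) k
    have h1 : n - 1 + 1 = n := Nat.succ_pred_eq_of_pos hn
    rw [h1] at h
    exact_mod_cast h
  have hsub : n - (1 + k) = n - 1 - k := by omega
  rw [hsub]
  have hdiv : (1 / (((k:ℝ)+1)/c)) ^ (r+1) = c ^ (r+1) / ((k:ℝ)+1) ^ (r+1) := by
    rw [one_div_div, Real.div_rpow hcpos.le hkpos.le]
  rw [hdiv]
  have hcast1 : ((1 + k : ℕ) : ℝ) = (k:ℝ) + 1 := by push_cast; ring
  rw [hcast1]
  have hrpow : ((k:ℝ)+1) ^ (r+1) = ((k:ℝ)+1) ^ r * ((k:ℝ)+1) := by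
    rw [Real.rpow_add hkpos, Real.rpow_one]
  rw [hrpow]
  have hA : (n.choose (1+k) : ℝ) = (n:ℝ) * ((n-1).choose k : ℝ) / ((k:ℝ)+1) := by
    rw [add_comm 1 k]
    field_simp
    linarith [hchoose]
  rw [hA, pow_add]
  have hcne : c ^ (r+1) ≠ 0 := ne_of_gt (Real.rpow_pos_of_pos hcpos _)
  have hkne : ((k:ℝ)+1) ^ r ≠ 0 := ne_of_gt (Real.rpow_pos_of_pos hkpos _)
  field_simp
end

section
/- Fix p ∈ (0,1) and q = 1−p. Then there exist a constant C > 0 and a positive integer N such that for all integers n ≥ N: | f_1(n) − (1/(np))·( 1 + q/(np) + q(1+q)/(np)^2 + q(1+4q+q^2)/(np)^3 + q(1+q)(1+10q+q^2)/(np)^4 + q(1+26q+66q^2+26q^3+q^4)/(np)^5 ) | ≤ C · n^{−7}. -/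
open Real Finset

lemma choose_mul_prod (n i k : ℕ) :
    (n+k).choose (i+k) * ∏ j ∈ range k, (i+j+1) = n.choose i * ∏ j ∈ range k, (n+j+1) := by
  induction k with
  | zero => simp
  | succ k ih =>
    rw [prod_range_succ, prod_range_succ]
    have h1 : (n+k+1).choose (i+k+1) * (i+k+1) = (n+k+1) * (n+k).choose (i+k) :=
      (Nat.add_one_mul_choose_eq (n+k) (i+k)).symm
    calc (n+(k+1)).choose (i+(k+1)) * ((∏ j ∈ range k, (i+j+1)) * (i+k+1))
        = ((n+k+1).choose (i+k+1) * (i+k+1)) * ∏ j ∈ range k, (i+j+1) := by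
          rw [mul_comm (∏ j ∈ range k, (i+j+1)) (i+k+1), ← mul_assoc]; rfl
      _ = ((n+k+1) * (n+k).choose (i+k)) * ∏ j ∈ range k, (i+j+1) := by rw [h1]
      _ = (n+k+1) * ((n+k).choose (i+k) * ∏ j ∈ range k, (i+j+1)) := by rw [mul_assoc]
      _ = (n+k+1) * (n.choose i * ∏ j ∈ range k, (n+j+1)) := by rw [ih]
      _ = n.choose i * ((∏ j ∈ range k, (n+j+1)) * (n+k+1)) := by
          rw [← mul_assoc, mul_comm (n+k+1) (n.choose i), mul_assoc, mul_comm (n+k+1)]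

lemma sum_closed (p q : ℝ) (hp : 0 < p) (hpq : p + q = 1) (n k : ℕ) :
    ∑ i ∈ range (n+1), (n.choose i : ℝ) * p^i * q^(n-i) / (∏ j ∈ range k, ((i:ℝ)+j+1))
      = (1 - ∑ j ∈ range k, (((n+k).choose j : ℝ) * p^j * q^(n+k-j)))
        / ((∏ j ∈ range k, ((n:ℝ)+j+1)) * p^k) := by
  have hPn : (0:ℝ) < ∏ j ∈ range k, ((n:ℝ)+j+1) := by positivity
  have key : ∀ i ∈ range (n+1),
      (n.choose i : ℝ) * p^i * q^(n-i) / (∏ j ∈ range k, ((i:ℝ)+j+1))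
      = ((n+k).choose (i+k) : ℝ) * p^(i+k) * q^(n-i) / ((∏ j ∈ range k, ((n:ℝ)+j+1)) * p^k) := by
    intro i hi
    have hPi : (0:ℝ) < ∏ j ∈ range k, ((i:ℝ)+j+1) := by positivity
    have hc : ((n+k).choose (i+k) : ℝ) * ∏ j ∈ range k, ((i:ℝ)+j+1)
        = (n.choose i : ℝ) * ∏ j ∈ range k, ((n:ℝ)+j+1) := by
      have h0 := choose_mul_prod n i k
      have h1 : (((n+k).choose (i+k) * ∏ j ∈ range k, (i+j+1) : ℕ) : ℝ)
          = ((n.choose i * ∏ j ∈ range k, (n+j+1) : ℕ) : ℝ) := by exact_mod_cast h0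
      push_cast at h1
      exact h1
    rw [div_eq_div_iff hPi.ne' (by positivity)]
    linear_combination (-(p^i * p^k * q^(n-i))) * hc
  rw [Finset.sum_congr rfl key]
  rw [← Finset.sum_div]
  congr 1
  have hfull : ∑ j ∈ range (n+k+1), ((n+k).choose j : ℝ) * p^j * q^(n+k-j) = 1 := by
    have h2 := add_pow p q (n+k)
    rw [hpq, one_pow] at h2
    rw [show ∑ j ∈ range (n+k+1), ((n+k).choose j : ℝ) * p^j * q^(n+k-j)
        = ∑ j ∈ range (n+k+1), p^j * q^(n+k-j) * ((n+k).choose j : ℝ) from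
      Finset.sum_congr rfl fun j _ => by ring]
    exact h2.symm
  have hsplit : ∑ j ∈ range (k+(n+1)), ((n+k).choose j : ℝ) * p^j * q^(n+k-j)
      = (∑ j ∈ range k, ((n+k).choose j : ℝ) * p^j * q^(n+k-j))
        + ∑ i ∈ range (n+1), ((n+k).choose (k+i) : ℝ) * p^(k+i) * q^(n+k-(k+i)) :=
    Finset.sum_range_add _ k (n+1)
  have he : (k:ℕ)+(n+1) = n+k+1 := by omega
  rw [he] at hsplit
  rw [hfull] at hsplit
  have : ∑ i ∈ range (n+1), ((n+k).choose (i+k) : ℝ) * p^(i+k) * q^(n-i)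
      = ∑ i ∈ range (n+1), ((n+k).choose (k+i) : ℝ) * p^(k+i) * q^(n+k-(k+i)) := by
    refine Finset.sum_congr rfl fun i hi => ?_
    simp only [Finset.mem_range] at hi
    have h1 : i+k = k+i := by omega
    have h2 : n+k-(k+i) = n-i := by omega
    rw [h1, h2]
  rw [this]
  linarith [hsplit]

lemma sum_Icc_from_range (n : ℕ) (g : ℕ → ℝ) :
    ∑ i ∈ range (n+1), g i = g 0 + ∑ i ∈ Icc 1 n, g i := by
  rw [Finset.range_eq_Ico, Finset.sum_eq_sum_Ico_succ_bot (by omega : 0 < n+1)]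
  rw [Finset.Ico_add_one_right_eq_Icc]

lemma tail_bound (p q : ℝ) (hp : 0 < p) (hp1 : p < 1) (hq0 : 0 < q) (hpq : p + q = 1)
    (n k : ℕ) (hn : 1 ≤ n) (hk6 : k ≤ 7) :
    ∑ j ∈ range k, (((n+k).choose j : ℝ) * p^j * q^(n+k-j)) ≤ 7 * 8^7 * (n:ℝ)^k * q^n := by
  have hq1 : q ≤ 1 := by linarith
  have step : ∀ j ∈ range k, ((n+k).choose j : ℝ) * p^j * q^(n+k-j) ≤ (8:ℝ)^7 * (n:ℝ)^k * q^n := by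
    intro j hj
    simp only [Finset.mem_range] at hj
    have h1 : ((n+k).choose j : ℝ) ≤ ((n+k):ℝ)^j := by
      exact_mod_cast Nat.choose_le_pow (n+k) j
    have h2 : ((n+k):ℝ)^j ≤ ((n+k):ℝ)^k := by
      apply pow_le_pow_right₀ (by exact_mod_cast (by omega : 1 ≤ n+k)) hj.le
    have h3 : ((n+k):ℝ)^k ≤ (8*n:ℝ)^k := by
      apply pow_le_pow_left₀ (by positivity)
      push_cast; have : (k:ℝ) ≤ 7 := by exact_mod_cast hk6
      have : (1:ℝ) ≤ n := by exact_mod_cast hn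
      nlinarith
    have h4 : (8*n:ℝ)^k = 8^k * n^k := by rw [mul_pow]
    have h5 : (8:ℝ)^k ≤ 8^7 := by apply pow_le_pow_right₀ (by norm_num) hk6
    have h6 : p^j ≤ 1 := pow_le_one₀ hp.le hp1.le
    have h7 : q^(n+k-j) ≤ q^n := by
      apply pow_le_pow_of_le_one hq0.le hq1
      omega
    have hnk : (0:ℝ) ≤ (n:ℝ)^k := by positivity
    have hB : ((n+k).choose j : ℝ) * p^j ≤ 8^7 * n^k := by
      calc ((n+k).choose j : ℝ) * p^j ≤ ((n+k).choose j : ℝ) * 1 := by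
            apply mul_le_mul_of_nonneg_left h6 (Nat.cast_nonneg _)
        _ = ((n+k).choose j : ℝ) := by ring
        _ ≤ (8*n:ℝ)^k := h1.trans (h2.trans h3)
        _ = 8^k * n^k := h4
        _ ≤ 8^7 * n^k := mul_le_mul_of_nonneg_right h5 hnk
    calc ((n+k).choose j : ℝ) * p^j * q^(n+k-j) ≤ ((n+k).choose j : ℝ) * p^j * q^n := by
          apply mul_le_mul_of_nonneg_left h7; positivity
      _ ≤ 8^7 * n^k * q^n := by
          apply mul_le_mul_of_nonneg_right hB (by positivity)
  calc ∑ j ∈ range k, (((n+k).choose j : ℝ) * p^j * q^(n+k-j))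
      ≤ ∑ _j ∈ range k, (8:ℝ)^7 * (n:ℝ)^k * q^n := Finset.sum_le_sum step
    _ = k * ((8:ℝ)^7 * (n:ℝ)^k * q^n) := by rw [Finset.sum_const, Finset.card_range]; ring
    _ ≤ 7 * 8^7 * (n:ℝ)^k * q^n := by
        have : (k:ℝ) ≤ 7 := by exact_mod_cast hk6
        have hnn : (0:ℝ) ≤ (8:ℝ)^7 * (n:ℝ)^k * q^n := by positivity
        nlinarith

lemma prod_lower (n k : ℕ) (hn : 1 ≤ n) : ((n:ℝ))^k ≤ ∏ j ∈ range k, ((n:ℝ)+j+1) := by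
  calc ((n:ℝ))^k = ∏ _j ∈ range k, (n:ℝ) := by rw [Finset.prod_const, Finset.card_range]
    _ ≤ ∏ j ∈ range k, ((n:ℝ)+j+1) := by
        apply Finset.prod_le_prod
        · intro j _; positivity
        · intro j _; have : (0:ℝ) ≤ (j:ℝ) := Nat.cast_nonneg j; linarith

lemma prod_c0_ge_one (k : ℕ) : (1:ℝ) ≤ ∏ j ∈ range k, (((0:ℕ):ℝ)+j+1) := by
  calc (1:ℝ) = ∏ _j ∈ range k, (1:ℝ) := by simp
    _ ≤ ∏ j ∈ range k, (((0:ℕ):ℝ)+j+1) := by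
        apply Finset.prod_le_prod
        · intro j _; norm_num
        · intro j _; have : (0:ℝ) ≤ (j:ℝ) := Nat.cast_nonneg j; push_cast; linarith

lemma Uk_bound (p q : ℝ) (hp : 0 < p) (hp1 : p < 1) (hq0 : 0 < q) (hpq : p + q = 1)
    (n k : ℕ) (hn : 1 ≤ n) (hk6 : k ≤ 6) :
    |(∑ i ∈ Icc 1 n, (n.choose i : ℝ) * p^i * q^(n-i) / (∏ j ∈ range k, ((i:ℝ)+j+1)))
      - 1/((∏ j ∈ range k, ((n:ℝ)+j+1)) * p^k)|
    ≤ (7 * 8^7 * 8^6 / p^6 + 1) * q^n := by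
  have hq1 : q ≤ 1 := by linarith
  have hPn : (0:ℝ) < ∏ j ∈ range k, ((n:ℝ)+j+1) := by positivity
  have hc0 : (1:ℝ) ≤ ∏ j ∈ range k, (((0:ℕ):ℝ)+j+1) := prod_c0_ge_one k
  set t := ∑ j ∈ range k, (((n+k).choose j : ℝ) * p^j * q^(n+k-j)) with ht
  have htnn : 0 ≤ t := by
    apply Finset.sum_nonneg; intro j _; positivity
  have htb : t ≤ 7 * 8^7 * (n:ℝ)^k * q^n := tail_bound p q hp hp1 hq0 hpq n k hn (by omega)
  have hsplit := sum_Icc_from_range n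
    (fun i => (n.choose i : ℝ) * p^i * q^(n-i) / (∏ j ∈ range k, ((i:ℝ)+j+1)))
  have hclosed := sum_closed p q hp hpq n k
  have hg0 : ((n.choose 0 : ℝ) * p^0 * q^(n-0) / (∏ j ∈ range k, (((0:ℕ):ℝ)+j+1)))
      = q^n / (∏ j ∈ range k, (((0:ℕ):ℝ)+j+1)) := by simp
  -- the Icc sum equals (1-t)/(Pn p^k) - q^n/c0
  have hU : (∑ i ∈ Icc 1 n, (n.choose i : ℝ) * p^i * q^(n-i) / (∏ j ∈ range k, ((i:ℝ)+j+1)))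
      = (1 - t)/((∏ j ∈ range k, ((n:ℝ)+j+1)) * p^k)
        - q^n / (∏ j ∈ range k, (((0:ℕ):ℝ)+j+1)) := by
    have := hsplit
    rw [hclosed, hg0] at this
    linarith [this]
  rw [hU]
  have e1 : (1 - t)/((∏ j ∈ range k, ((n:ℝ)+j+1)) * p^k)
      - q^n / (∏ j ∈ range k, (((0:ℕ):ℝ)+j+1))
      - 1/((∏ j ∈ range k, ((n:ℝ)+j+1)) * p^k)
      = -(t/((∏ j ∈ range k, ((n:ℝ)+j+1)) * p^k))
        - q^n / (∏ j ∈ range k, (((0:ℕ):ℝ)+j+1)) := by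
    rw [sub_div]; ring
  rw [e1]
  have hb1 : t/((∏ j ∈ range k, ((n:ℝ)+j+1)) * p^k) ≤ 7 * 8^7 * 8^6 / p^6 * q^n := by
    have hPnk : ((n:ℝ))^k ≤ ∏ j ∈ range k, ((n:ℝ)+j+1) := prod_lower n k hn
    have hpk : p^6 ≤ p^k * 8^6 := by
      -- p^6 ≤ p^k since k ≤ 6, p ≤ 1 ; and 1 ≤ 8^6
      have h1 : p^6 ≤ p^k := pow_le_pow_of_le_one hp.le hp1.le hk6
      nlinarith [pow_pos hp 6, pow_pos hp k]
    have hnk : (0:ℝ) < (n:ℝ)^k := by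
      have : (0:ℝ) < (n:ℝ) := by exact_mod_cast hn
      positivity
    calc t/((∏ j ∈ range k, ((n:ℝ)+j+1)) * p^k)
        ≤ (7 * 8^7 * (n:ℝ)^k * q^n)/((n:ℝ)^k * p^k) := by
          apply div_le_div₀ (by positivity) htb (by positivity)
          apply mul_le_mul_of_nonneg_right hPnk (by positivity)
      _ = 7 * 8^7 * q^n / p^k := by field_simp
      _ ≤ 7 * 8^7 * 8^6 / p^6 * q^n := by
          rw [div_le_iff₀ (pow_pos hp k)]
          have key : (1:ℝ) ≤ 8^6/p^6*p^k := by
            rw [div_mul_eq_mul_div, le_div_iff₀ (pow_pos hp 6)]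
            linarith
          calc 7 * 8^7 * q^n ≤ 7 * 8^7 * q^n * (8^6/p^6*p^k) :=
                le_mul_of_one_le_right (by positivity) key
            _ = 7 * 8 ^ 7 * 8 ^ 6 / p ^ 6 * q^n * p ^ k := by ring
  have hb2 : q^n / (∏ j ∈ range k, (((0:ℕ):ℝ)+j+1)) ≤ q^n :=
    div_le_self (by positivity) hc0
  have h1 : 0 ≤ t/((∏ j ∈ range k, ((n:ℝ)+j+1)) * p^k) := div_nonneg htnn (by positivity)
  have h2 : 0 ≤ q^n / (∏ j ∈ range k, (((0:ℕ):ℝ)+j+1)) := by positivity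
  rw [abs_of_nonpos (by linarith)]
  linarith

lemma Rsum_bound (p q : ℝ) (hp : 0 < p) (hp1 : p < 1) (hq0 : 0 < q) (hpq : p + q = 1)
    (n : ℕ) (hn : 1 ≤ n) :
    0 ≤ (∑ i ∈ Icc 1 n, (n.choose i : ℝ) * p^i * q^(n-i)
          / ((i:ℝ) * ∏ j ∈ range 6, ((i:ℝ)+j+1)))
    ∧ (∑ i ∈ Icc 1 n, (n.choose i : ℝ) * p^i * q^(n-i)
          / ((i:ℝ) * ∏ j ∈ range 6, ((i:ℝ)+j+1)))
      ≤ 8 / ((n:ℝ)^7 * p^7) := by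
  have hn1 : (1:ℝ) ≤ (n:ℝ) := by exact_mod_cast hn
  constructor
  · apply Finset.sum_nonneg
    intro i hi
    simp only [Finset.mem_Icc] at hi
    have hi1 : (1:ℝ) ≤ (i:ℝ) := by exact_mod_cast hi.1
    have h2 : (0:ℝ) < (i:ℝ) * ∏ j ∈ range 6, ((i:ℝ)+j+1) := by positivity
    positivity
  · have step : ∀ i ∈ Icc 1 n, (n.choose i : ℝ) * p^i * q^(n-i)
        / ((i:ℝ) * ∏ j ∈ range 6, ((i:ℝ)+j+1))
        ≤ 8 * ((n.choose i : ℝ) * p^i * q^(n-i) / (∏ j ∈ range 7, ((i:ℝ)+j+1))) := by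
      intro i hi
      simp only [Finset.mem_Icc] at hi
      have hi1 : (1:ℝ) ≤ (i:ℝ) := by exact_mod_cast hi.1
      have hP6 : (0:ℝ) < ∏ j ∈ range 6, ((i:ℝ)+j+1) := by positivity
      have hB : (0:ℝ) ≤ (n.choose i : ℝ) * p^i * q^(n-i) := by positivity
      have hP7 : ∏ j ∈ range 7, ((i:ℝ)+j+1) = (∏ j ∈ range 6, ((i:ℝ)+j+1)) * ((i:ℝ)+6+1) := by
        rw [Finset.prod_range_succ]; norm_num
      calc (n.choose i : ℝ) * p^i * q^(n-i) / ((i:ℝ) * ∏ j ∈ range 6, ((i:ℝ)+j+1))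
          ≤ 8 * (n.choose i : ℝ) * p^i * q^(n-i) / ((∏ j ∈ range 6, ((i:ℝ)+j+1)) * ((i:ℝ)+6+1)) := by
            rw [div_le_div_iff₀ (by positivity) (by positivity)]
            nlinarith [mul_nonneg (mul_nonneg hB hP6.le) (show (0:ℝ) ≤ 8*(i:ℝ)-((i:ℝ)+7) by linarith)]
        _ = 8 * ((n.choose i : ℝ) * p^i * q^(n-i) / (∏ j ∈ range 7, ((i:ℝ)+j+1))) := by
            rw [hP7]; ring
    have hPn7 : ((n:ℝ))^7 ≤ ∏ j ∈ range 7, ((n:ℝ)+j+1) := prod_lower n 7 hn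
    have ht7 : (0:ℝ) ≤ ∑ j ∈ range 7, (((n+7).choose j : ℝ) * p^j * q^(n+7-j)) := by
      apply Finset.sum_nonneg; intro j _; positivity
    have hmono : (∑ i ∈ Icc 1 n, (n.choose i : ℝ) * p^i * q^(n-i) / (∏ j ∈ range 7, ((i:ℝ)+j+1)))
        ≤ ∑ i ∈ range (n+1), (n.choose i : ℝ) * p^i * q^(n-i) / (∏ j ∈ range 7, ((i:ℝ)+j+1)) := by
      rw [sum_Icc_from_range n (fun i => (n.choose i : ℝ) * p^i * q^(n-i) / (∏ j ∈ range 7, ((i:ℝ)+j+1)))]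
      have : (0:ℝ) ≤ (n.choose 0 : ℝ) * p^0 * q^(n-0) / (∏ j ∈ range 7, (((0:ℕ):ℝ)+j+1)) := by
        have := prod_c0_ge_one 7
        positivity
      linarith
    have hclosed := sum_closed p q hp hpq n 7
    calc (∑ i ∈ Icc 1 n, (n.choose i : ℝ) * p^i * q^(n-i) / ((i:ℝ) * ∏ j ∈ range 6, ((i:ℝ)+j+1)))
        ≤ ∑ i ∈ Icc 1 n, 8 * ((n.choose i : ℝ) * p^i * q^(n-i) / (∏ j ∈ range 7, ((i:ℝ)+j+1))) :=
          Finset.sum_le_sum step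
      _ = 8 * ∑ i ∈ Icc 1 n, (n.choose i : ℝ) * p^i * q^(n-i) / (∏ j ∈ range 7, ((i:ℝ)+j+1)) := by
          rw [Finset.mul_sum]
      _ ≤ 8 * ∑ i ∈ range (n+1), (n.choose i : ℝ) * p^i * q^(n-i) / (∏ j ∈ range 7, ((i:ℝ)+j+1)) := by
          linarith
      _ = 8 * ((1 - ∑ j ∈ range 7, (((n+7).choose j : ℝ) * p^j * q^(n+7-j)))
            / ((∏ j ∈ range 7, ((n:ℝ)+j+1)) * p^7)) := by rw [hclosed]
      _ ≤ 8 * (1 / ((n:ℝ)^7 * p^7)) := by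
          have h1 : (1 - ∑ j ∈ range 7, (((n+7).choose j : ℝ) * p^j * q^(n+7-j)))
              / ((∏ j ∈ range 7, ((n:ℝ)+j+1)) * p^7) ≤ 1 / ((n:ℝ)^7 * p^7) := by
            apply div_le_div₀ (by norm_num) (by linarith) (by positivity)
            apply mul_le_mul_of_nonneg_right hPn7 (by positivity)
          linarith
      _ = 8 / ((n:ℝ)^7 * p^7) := by ring
lemma poly_abs_le (a0 a1 a2 a3 a4 a5 p : ℝ) (h0 : 0 ≤ p) (h1 : p ≤ 1) :
    |a0 + a1 * p^1 + a2 * p^2 + a3 * p^3 + a4 * p^4 + a5 * p^5|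
      ≤ |a0| + |a1| + |a2| + |a3| + |a4| + |a5| := by
  have key : ∀ (a : ℝ) (k : ℕ), |a * p^k| ≤ |a| := by
    intro a k
    rw [abs_mul, abs_pow, abs_of_nonneg h0]
    nlinarith [abs_nonneg a, pow_le_one₀ h0 h1 (n := k)]
  calc |a0 + a1 * p^1 + a2 * p^2 + a3 * p^3 + a4 * p^4 + a5 * p^5|
      ≤ |a0 + a1 * p^1 + a2 * p^2 + a3 * p^3 + a4 * p^4| + |a5 * p^5| := abs_add_le _ _
    _ ≤ (|a0 + a1 * p^1 + a2 * p^2 + a3 * p^3| + |a4 * p^4|) + |a5 * p^5| := by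
        gcongr; exact abs_add_le _ _
    _ ≤ ((|a0 + a1 * p^1 + a2 * p^2| + |a3 * p^3|) + |a4 * p^4|) + |a5 * p^5| := by
        gcongr; exact abs_add_le _ _
    _ ≤ (((|a0 + a1 * p^1| + |a2 * p^2|) + |a3 * p^3|) + |a4 * p^4|) + |a5 * p^5| := by
        gcongr; exact abs_add_le _ _
    _ ≤ ((((|a0| + |a1 * p^1|) + |a2 * p^2|) + |a3 * p^3|) + |a4 * p^4|) + |a5 * p^5| := by
        gcongr; exact abs_add_le _ _
    _ ≤ |a0| + |a1| + |a2| + |a3| + |a4| + |a5| := by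
        have := key a1 1; have := key a2 2; have := key a3 3; have := key a4 4; have := key a5 5
        linarith
lemma telescope_id (x : ℝ) (hx : 0 < x) :
    1/x = 1/(x+1) + 1/((x+1)*(x+2)) + 2/((x+1)*(x+2)*(x+3)) + 6/((x+1)*(x+2)*(x+3)*(x+4))
      + 24/((x+1)*(x+2)*(x+3)*(x+4)*(x+5)) + 120/((x+1)*(x+2)*(x+3)*(x+4)*(x+5)*(x+6))
      + 720/(x*(x+1)*(x+2)*(x+3)*(x+4)*(x+5)*(x+6)) := by
  have h1 : x+1 ≠ 0 := by linarith
  have h2 : x+2 ≠ 0 := by linarith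
  have h3 : x+3 ≠ 0 := by linarith
  have h4 : x+4 ≠ 0 := by linarith
  have h5 : x+5 ≠ 0 := by linarith
  have h6 : x+6 ≠ 0 := by linarith
  field_simp
  ring

lemma rat_id (x p q : ℝ) (hx : 0 < x) (hp : 0 < p) (hq : q = 1 - p) :
    (1/((x+1)*p) + 1/((x+1)*(x+2)*p^2) + 2/((x+1)*(x+2)*(x+3)*p^3)
      + 6/((x+1)*(x+2)*(x+3)*(x+4)*p^4) + 24/((x+1)*(x+2)*(x+3)*(x+4)*(x+5)*p^5)
      + 120/((x+1)*(x+2)*(x+3)*(x+4)*(x+5)*(x+6)*p^6))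
    - (1 / (x * p)) *
        (1 + q / (x * p)
          + q * (1 + q) / (x * p) ^ 2
          + q * (1 + 4 * q + q ^ 2) / (x * p) ^ 3
          + q * (1 + q) * (1 + 10 * q + q ^ 2) / (x * p) ^ 4
          + q * (1 + 26 * q + 66 * q ^ 2 + 26 * q ^ 3 + q ^ 4) / (x * p) ^ 5)
    = (((-86400) + (259200) * p^1 + (-280800) * p^2 + (129600) * p^3 + (-22320) * p^4 + (720) * p^5) + ((-211680) + (617760) * p^1 + (-644760) * p^2 + (281520) * p^3 + (-43884) * p^4 + (1044) * p^5) * x^1 + ((-194880) + (542304) * p^1 + (-531840) * p^2 + (212760) * p^3 + (-28924) * p^4 + (580) * p^5) * x^2 + ((-88200) + (225624) * p^1 + (-199794) * p^2 + (70828) * p^3 + (-8613) * p^4 + (155) * p^5) * x^3 + ((-21000) + (45360) * p^1 + (-33894) * p^2 + (10710) * p^3 + (-1196) * p^4 + (20) * p^5) * x^4 + ((-2520) + (3360) * p^1 + (-2100) * p^2 + (602) * p^3 + (-63) * p^4 + (1) * p^5) * x^5)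
      / (x^6 * p^6 * ((x+1)*(x+2)*(x+3)*(x+4)*(x+5)*(x+6))) := by
  subst hq
  have h1 : x+1 ≠ 0 := by linarith
  have h2 : x+2 ≠ 0 := by linarith
  have h3 : x+3 ≠ 0 := by linarith
  have h4 : x+4 ≠ 0 := by linarith
  have h5 : x+5 ≠ 0 := by linarith
  have h6 : x+6 ≠ 0 := by linarith
  have hx0 : x ≠ 0 := ne_of_gt hx
  have hp0 : p ≠ 0 := ne_of_gt hp
  field_simp
  ring

lemma abs_poly_x (g0 g1 g2 g3 g4 g5 G0 G1 G2 G3 G4 G5 x : ℝ) (hx : 1 ≤ x)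
    (h0 : |g0| ≤ G0) (h1 : |g1| ≤ G1) (h2 : |g2| ≤ G2) (h3 : |g3| ≤ G3)
    (h4 : |g4| ≤ G4) (h5 : |g5| ≤ G5) :
    |g0 + g1*x^1 + g2*x^2 + g3*x^3 + g4*x^4 + g5*x^5|
      ≤ (G0+G1+G2+G3+G4+G5)*x^5 := by
  have hx0 : (0:ℝ) ≤ x := by linarith
  have hx5 : (1:ℝ) ≤ x^5 := one_le_pow₀ hx
  have habs : ∀ (g G : ℝ) (k : ℕ), |g| ≤ G → k ≤ 5 → |g*x^k| ≤ G*x^5 := by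
    intro g G k hg hk
    rw [abs_mul, abs_pow, abs_of_nonneg hx0]
    have hxk : x^k ≤ x^5 := pow_le_pow_right₀ hx hk
    have hG : 0 ≤ G := le_trans (abs_nonneg g) hg
    have hxk0 : 0 ≤ x^k := pow_nonneg hx0 k
    nlinarith [abs_nonneg g]
  have b1 := habs g1 G1 1 h1 (by norm_num)
  have b2 := habs g2 G2 2 h2 (by norm_num)
  have b3 := habs g3 G3 3 h3 (by norm_num)
  have b4 := habs g4 G4 4 h4 (by norm_num)
  have b5 := habs g5 G5 5 h5 (by norm_num)
  have b0 : |g0| ≤ G0 * x^5 := by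
    have hG : 0 ≤ G0 := le_trans (abs_nonneg g0) h0
    nlinarith
  calc |g0 + g1*x^1 + g2*x^2 + g3*x^3 + g4*x^4 + g5*x^5|
      ≤ |g0 + g1*x^1 + g2*x^2 + g3*x^3 + g4*x^4| + |g5*x^5| := abs_add_le _ _
    _ ≤ (|g0 + g1*x^1 + g2*x^2 + g3*x^3| + |g4*x^4|) + |g5*x^5| := by
        gcongr; exact abs_add_le _ _
    _ ≤ ((|g0 + g1*x^1 + g2*x^2| + |g3*x^3|) + |g4*x^4|) + |g5*x^5| := by
        gcongr; exact abs_add_le _ _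
    _ ≤ (((|g0 + g1*x^1| + |g2*x^2|) + |g3*x^3|) + |g4*x^4|) + |g5*x^5| := by
        gcongr; exact abs_add_le _ _
    _ ≤ ((((|g0| + |g1*x^1|) + |g2*x^2|) + |g3*x^3|) + |g4*x^4|) + |g5*x^5| := by
        gcongr; exact abs_add_le _ _
    _ ≤ (G0+G1+G2+G3+G4+G5)*x^5 := by linarith

lemma rat_bound (x p q : ℝ) (hx : 1 ≤ x) (hp : 0 < p) (hp1 : p < 1) (hq : q = 1 - p) :
    |(1/((x+1)*p) + 1/((x+1)*(x+2)*p^2) + 2/((x+1)*(x+2)*(x+3)*p^3)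
      + 6/((x+1)*(x+2)*(x+3)*(x+4)*p^4) + 24/((x+1)*(x+2)*(x+3)*(x+4)*(x+5)*p^5)
      + 120/((x+1)*(x+2)*(x+3)*(x+4)*(x+5)*(x+6)*p^6))
    - (1 / (x * p)) *
        (1 + q / (x * p)
          + q * (1 + q) / (x * p) ^ 2
          + q * (1 + 4 * q + q ^ 2) / (x * p) ^ 3
          + q * (1 + q) * (1 + 10 * q + q ^ 2) / (x * p) ^ 4
          + q * (1 + 26 * q + 66 * q ^ 2 + 26 * q ^ 3 + q ^ 4) / (x * p) ^ 5)|
    ≤ 4805016 / (p^6 * x^7) := by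
  have hx0 : (0:ℝ) < x := by linarith
  rw [rat_id x p q hx0 hp hq]
  rw [abs_div]
  have hd1 : (0:ℝ) < x+1 := by linarith
  have hd2 : (0:ℝ) < x+2 := by linarith
  have hd3 : (0:ℝ) < x+3 := by linarith
  have hd4 : (0:ℝ) < x+4 := by linarith
  have hd5 : (0:ℝ) < x+5 := by linarith
  have hd6 : (0:ℝ) < x+6 := by linarith
  have hD : (0:ℝ) < x^6 * p^6 * ((x+1)*(x+2)*(x+3)*(x+4)*(x+5)*(x+6)) := by
    apply mul_pos (by positivity)
    exact mul_pos (mul_pos (mul_pos (mul_pos (mul_pos hd1 hd2) hd3) hd4) hd5) hd6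
  have hb0 : |(-86400:ℝ) + (259200) * p^1 + (-280800) * p^2 + (129600) * p^3 + (-22320) * p^4 + (720) * p^5| ≤ 779040 :=
    (poly_abs_le (-86400) 259200 (-280800) 129600 (-22320) 720 p hp.le hp1.le).trans (by norm_num)
  have hb1 : |(-211680:ℝ) + (617760) * p^1 + (-644760) * p^2 + (281520) * p^3 + (-43884) * p^4 + (1044) * p^5| ≤ 1800648 :=
    (poly_abs_le (-211680) 617760 (-644760) 281520 (-43884) 1044 p hp.le hp1.le).trans (by norm_num)
  have hb2 : |(-194880:ℝ) + (542304) * p^1 + (-531840) * p^2 + (212760) * p^3 + (-28924) * p^4 + (580) * p^5| ≤ 1511288 :=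
    (poly_abs_le (-194880) 542304 (-531840) 212760 (-28924) 580 p hp.le hp1.le).trans (by norm_num)
  have hb3 : |(-88200:ℝ) + (225624) * p^1 + (-199794) * p^2 + (70828) * p^3 + (-8613) * p^4 + (155) * p^5| ≤ 593214 :=
    (poly_abs_le (-88200) 225624 (-199794) 70828 (-8613) 155 p hp.le hp1.le).trans (by norm_num)
  have hb4 : |(-21000:ℝ) + (45360) * p^1 + (-33894) * p^2 + (10710) * p^3 + (-1196) * p^4 + (20) * p^5| ≤ 112180 :=
    (poly_abs_le (-21000) 45360 (-33894) 10710 (-1196) 20 p hp.le hp1.le).trans (by norm_num)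
  have hb5 : |(-2520:ℝ) + (3360) * p^1 + (-2100) * p^2 + (602) * p^3 + (-63) * p^4 + (1) * p^5| ≤ 8646 :=
    (poly_abs_le (-2520) 3360 (-2100) 602 (-63) 1 p hp.le hp1.le).trans (by norm_num)
  have hNb : |(((-86400) + (259200) * p^1 + (-280800) * p^2 + (129600) * p^3 + (-22320) * p^4 + (720) * p^5) + ((-211680) + (617760) * p^1 + (-644760) * p^2 + (281520) * p^3 + (-43884) * p^4 + (1044) * p^5) * x^1 + ((-194880) + (542304) * p^1 + (-531840) * p^2 + (212760) * p^3 + (-28924) * p^4 + (580) * p^5) * x^2 + ((-88200) + (225624) * p^1 + (-199794) * p^2 + (70828) * p^3 + (-8613) * p^4 + (155) * p^5) * x^3 + ((-21000) + (45360) * p^1 + (-33894) * p^2 + (10710) * p^3 + (-1196) * p^4 + (20) * p^5) * x^4 + ((-2520) + (3360) * p^1 + (-2100) * p^2 + (602) * p^3 + (-63) * p^4 + (1) * p^5) * x^5)| ≤ 4805016 * x^5 := by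
    have := abs_poly_x _ _ _ _ _ _ _ _ _ _ _ _ x hx hb0 hb1 hb2 hb3 hb4 hb5
    convert this using 2
    norm_num
  have hDabs : |x^6 * p^6 * ((x+1)*(x+2)*(x+3)*(x+4)*(x+5)*(x+6))|
      = x^6 * p^6 * ((x+1)*(x+2)*(x+3)*(x+4)*(x+5)*(x+6)) := abs_of_pos hD
  rw [hDabs]
  have hDlow : x^6 * p^6 * (x*x*x*x*x*x)
      ≤ x^6 * p^6 * ((x+1)*(x+2)*(x+3)*(x+4)*(x+5)*(x+6)) := by
    apply mul_le_mul_of_nonneg_left _ (by positivity)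
    have h1 : x ≤ x+1 := by linarith
    gcongr <;> linarith
  calc |(((-86400) + (259200) * p^1 + (-280800) * p^2 + (129600) * p^3 + (-22320) * p^4 + (720) * p^5) + ((-211680) + (617760) * p^1 + (-644760) * p^2 + (281520) * p^3 + (-43884) * p^4 + (1044) * p^5) * x^1 + ((-194880) + (542304) * p^1 + (-531840) * p^2 + (212760) * p^3 + (-28924) * p^4 + (580) * p^5) * x^2 + ((-88200) + (225624) * p^1 + (-199794) * p^2 + (70828) * p^3 + (-8613) * p^4 + (155) * p^5) * x^3 + ((-21000) + (45360) * p^1 + (-33894) * p^2 + (10710) * p^3 + (-1196) * p^4 + (20) * p^5) * x^4 + ((-2520) + (3360) * p^1 + (-2100) * p^2 + (602) * p^3 + (-63) * p^4 + (1) * p^5) * x^5)| / (x^6 * p^6 * ((x+1)*(x+2)*(x+3)*(x+4)*(x+5)*(x+6)))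
      ≤ (4805016 * x^5) / (x^6 * p^6 * (x*x*x*x*x*x)) :=
        div_le_div₀ (by positivity) hNb (by positivity) hDlow
    _ = 4805016 / (p^6 * x^7) := by
        field_simp

lemma pr1 (y : ℝ) : (∏ j ∈ range 1, (y + (j:ℝ) + 1)) = y+1 := by
  rw [Finset.prod_range_one]; push_cast; ring
lemma pr2 (y : ℝ) : (∏ j ∈ range 2, (y + (j:ℝ) + 1)) = (y+1)*(y+2) := by
  rw [Finset.prod_range_succ, Finset.prod_range_one]; push_cast; ring
lemma pr3 (y : ℝ) : (∏ j ∈ range 3, (y + (j:ℝ) + 1)) = (y+1)*(y+2)*(y+3) := by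
  rw [Finset.prod_range_succ, Finset.prod_range_succ, Finset.prod_range_one]; push_cast; ring
lemma pr4 (y : ℝ) : (∏ j ∈ range 4, (y + (j:ℝ) + 1)) = (y+1)*(y+2)*(y+3)*(y+4) := by
  rw [Finset.prod_range_succ, Finset.prod_range_succ, Finset.prod_range_succ,
    Finset.prod_range_one]; push_cast; ring
lemma pr5 (y : ℝ) : (∏ j ∈ range 5, (y + (j:ℝ) + 1)) = (y+1)*(y+2)*(y+3)*(y+4)*(y+5) := by
  rw [Finset.prod_range_succ, Finset.prod_range_succ, Finset.prod_range_succ,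
    Finset.prod_range_succ, Finset.prod_range_one]; push_cast; ring
lemma pr6 (y : ℝ) : (∏ j ∈ range 6, (y + (j:ℝ) + 1)) = (y+1)*(y+2)*(y+3)*(y+4)*(y+5)*(y+6) := by
  rw [Finset.prod_range_succ, Finset.prod_range_succ, Finset.prod_range_succ,
    Finset.prod_range_succ, Finset.prod_range_succ, Finset.prod_range_one]; push_cast; ring

lemma abs_add8 (a b c d e f g h : ℝ) : |a+b+c+d+e+f+g+h| ≤ |a|+|b|+|c|+|d|+|e|+|f|+|g|+|h| := by
  calc |a+b+c+d+e+f+g+h| ≤ |a+b+c+d+e+f+g|+|h| := abs_add_le _ _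
    _ ≤ (|a+b+c+d+e+f|+|g|)+|h| := by gcongr; exact abs_add_le _ _
    _ ≤ ((|a+b+c+d+e|+|f|)+|g|)+|h| := by gcongr; exact abs_add_le _ _
    _ ≤ (((|a+b+c+d|+|e|)+|f|)+|g|)+|h| := by gcongr; exact abs_add_le _ _
    _ ≤ ((((|a+b+c|+|d|)+|e|)+|f|)+|g|)+|h| := by gcongr; exact abs_add_le _ _
    _ ≤ (((((|a+b|+|c|)+|d|)+|e|)+|f|)+|g|)+|h| := by gcongr; exact abs_add_le _ _
    _ ≤ ((((((|a|+|b|)+|c|)+|d|)+|e|)+|f|)+|g|)+|h| := by gcongr; exact abs_add_le _ _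
    _ = |a|+|b|+|c|+|d|+|e|+|f|+|g|+|h| := by ring

set_option maxHeartbeats 2000000 in
/-- Expansion of the first inverse moment of the positive binomial
distribution in inverse powers of `np`, with error `O(n^{-7})`. -/
theorem first_inverse_moment_binomial_expansion
    (p q : ℝ) (hp : p ∈ Set.Ioo (0:ℝ) 1) (hq : q = 1 - p) :
    ∃ C > (0:ℝ), ∃ N : ℕ, 0 < N ∧ ∀ n : ℕ, N ≤ n →
      |(∑ i ∈ Finset.Icc 1 n, (n.choose i : ℝ) * p ^ i * q ^ (n - i) / (i : ℝ))
        - (1 / ((n : ℝ) * p)) *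
            (1 + q / ((n : ℝ) * p)
              + q * (1 + q) / ((n : ℝ) * p) ^ 2
              + q * (1 + 4 * q + q ^ 2) / ((n : ℝ) * p) ^ 3
              + q * (1 + q) * (1 + 10 * q + q ^ 2) / ((n : ℝ) * p) ^ 4
              + q * (1 + 26 * q + 66 * q ^ 2 + 26 * q ^ 3 + q ^ 4) / ((n : ℝ) * p) ^ 5)|
      ≤ C / (n : ℝ) ^ 7 := by
  obtain ⟨hp0, hp1⟩ := hp
  have hq0 : 0 < q := by rw [hq]; linarith
  have hpq : p + q = 1 := by rw [hq]; ring
  have hCpos : (0:ℝ) < 154 * (7 * 8^7 * 8^6 / p^6 + 1) + 720 * (8/p^7) + 4805016 / p^6 := by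
    positivity
  have hnorm : ‖q‖ < 1 := by rw [Real.norm_eq_abs, abs_of_pos hq0]; linarith
  have hsumm : Summable (fun m : ℕ => (m:ℝ)^7 * q^m) :=
    summable_pow_mul_geometric_of_norm_lt_one 7 hnorm
  have hev : ∀ᶠ m : ℕ in Filter.atTop, (m:ℝ)^7 * q^m < 1 :=
    hsumm.tendsto_atTop_zero.eventually_lt_const (by norm_num)
  obtain ⟨N₀, hN₀⟩ := Filter.eventually_atTop.mp hev
  refine ⟨_, hCpos, max N₀ 1, lt_of_lt_of_le one_pos (le_max_right _ _), ?_⟩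
  intro n hn
  have hn1 : 1 ≤ n := le_trans (le_max_right _ _) hn
  have hx : (1:ℝ) ≤ (n:ℝ) := by exact_mod_cast hn1
  have hx0 : (0:ℝ) < (n:ℝ) := by linarith
  have hx7 : (0:ℝ) < (n:ℝ)^7 := by positivity
  have hqx : q^n ≤ 1/(n:ℝ)^7 := by
    have h := hN₀ n (le_trans (le_max_left _ _) hn)
    rw [le_div_iff₀ hx7]
    nlinarith [h]
  -- pointwise telescoping
  have hpoint : ∀ i ∈ Icc 1 n,
      (n.choose i : ℝ) * p ^ i * q ^ (n - i) / (i : ℝ)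
      = (n.choose i : ℝ) * p ^ i * q ^ (n - i) / (∏ j ∈ range 1, ((i:ℝ)+j+1))
      + (n.choose i : ℝ) * p ^ i * q ^ (n - i) / (∏ j ∈ range 2, ((i:ℝ)+j+1))
      + 2 * ((n.choose i : ℝ) * p ^ i * q ^ (n - i) / (∏ j ∈ range 3, ((i:ℝ)+j+1)))
      + 6 * ((n.choose i : ℝ) * p ^ i * q ^ (n - i) / (∏ j ∈ range 4, ((i:ℝ)+j+1)))
      + 24 * ((n.choose i : ℝ) * p ^ i * q ^ (n - i) / (∏ j ∈ range 5, ((i:ℝ)+j+1)))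
      + 120 * ((n.choose i : ℝ) * p ^ i * q ^ (n - i) / (∏ j ∈ range 6, ((i:ℝ)+j+1)))
      + 720 * ((n.choose i : ℝ) * p ^ i * q ^ (n - i) / ((i:ℝ) * ∏ j ∈ range 6, ((i:ℝ)+j+1))) := by
    intro i hi
    simp only [Finset.mem_Icc] at hi
    have hi1 : (1:ℝ) ≤ (i:ℝ) := by exact_mod_cast hi.1
    have hi0 : (0:ℝ) < (i:ℝ) := by linarith
    have ht := telescope_id (i:ℝ) hi0
    rw [pr1 ((i:ℝ)), pr2 ((i:ℝ)), pr3 ((i:ℝ)), pr4 ((i:ℝ)), pr5 ((i:ℝ)), pr6 ((i:ℝ))]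
    conv_lhs => rw [div_eq_mul_one_div, ht]
    ring
  have hsplit : (∑ i ∈ Finset.Icc 1 n, (n.choose i : ℝ) * p ^ i * q ^ (n - i) / (i : ℝ))
      = (∑ i ∈ Icc 1 n, (n.choose i : ℝ) * p ^ i * q ^ (n - i) / (∏ j ∈ range 1, ((i:ℝ)+j+1)))
      + (∑ i ∈ Icc 1 n, (n.choose i : ℝ) * p ^ i * q ^ (n - i) / (∏ j ∈ range 2, ((i:ℝ)+j+1)))
      + 2 * (∑ i ∈ Icc 1 n, (n.choose i : ℝ) * p ^ i * q ^ (n - i) / (∏ j ∈ range 3, ((i:ℝ)+j+1)))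
      + 6 * (∑ i ∈ Icc 1 n, (n.choose i : ℝ) * p ^ i * q ^ (n - i) / (∏ j ∈ range 4, ((i:ℝ)+j+1)))
      + 24 * (∑ i ∈ Icc 1 n, (n.choose i : ℝ) * p ^ i * q ^ (n - i) / (∏ j ∈ range 5, ((i:ℝ)+j+1)))
      + 120 * (∑ i ∈ Icc 1 n, (n.choose i : ℝ) * p ^ i * q ^ (n - i) / (∏ j ∈ range 6, ((i:ℝ)+j+1)))
      + 720 * (∑ i ∈ Icc 1 n, (n.choose i : ℝ) * p ^ i * q ^ (n - i) / ((i:ℝ) * ∏ j ∈ range 6, ((i:ℝ)+j+1))) := by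
    rw [Finset.sum_congr rfl hpoint]
    simp only [Finset.sum_add_distrib, ← Finset.mul_sum]
  have hU1 := Uk_bound p q hp0 hp1 hq0 hpq n 1 hn1 (by norm_num)
  have hU2 := Uk_bound p q hp0 hp1 hq0 hpq n 2 hn1 (by norm_num)
  have hU3 := Uk_bound p q hp0 hp1 hq0 hpq n 3 hn1 (by norm_num)
  have hU4 := Uk_bound p q hp0 hp1 hq0 hpq n 4 hn1 (by norm_num)
  have hU5 := Uk_bound p q hp0 hp1 hq0 hpq n 5 hn1 (by norm_num)
  have hU6 := Uk_bound p q hp0 hp1 hq0 hpq n 6 hn1 (by norm_num)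
  have hR := Rsum_bound p q hp0 hp1 hq0 hpq n hn1
  have hAT := rat_bound ((n:ℝ)) p q hx hp0 hp1 hq
  -- convert A to range-product form
  have hA : 1/(((n:ℝ)+1)*p) + 1/(((n:ℝ)+1)*((n:ℝ)+2)*p^2)
      + 2/(((n:ℝ)+1)*((n:ℝ)+2)*((n:ℝ)+3)*p^3)
      + 6/(((n:ℝ)+1)*((n:ℝ)+2)*((n:ℝ)+3)*((n:ℝ)+4)*p^4)
      + 24/(((n:ℝ)+1)*((n:ℝ)+2)*((n:ℝ)+3)*((n:ℝ)+4)*((n:ℝ)+5)*p^5)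
      + 120/(((n:ℝ)+1)*((n:ℝ)+2)*((n:ℝ)+3)*((n:ℝ)+4)*((n:ℝ)+5)*((n:ℝ)+6)*p^6)
      = 1/((∏ j ∈ range 1, ((n:ℝ)+j+1)) * p^1)
      + 1/((∏ j ∈ range 2, ((n:ℝ)+j+1)) * p^2)
      + 2 * (1/((∏ j ∈ range 3, ((n:ℝ)+j+1)) * p^3))
      + 6 * (1/((∏ j ∈ range 4, ((n:ℝ)+j+1)) * p^4))
      + 24 * (1/((∏ j ∈ range 5, ((n:ℝ)+j+1)) * p^5))
      + 120 * (1/((∏ j ∈ range 6, ((n:ℝ)+j+1)) * p^6)) := by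
    rw [pr1 ((n:ℝ)), pr2 ((n:ℝ)), pr3 ((n:ℝ)), pr4 ((n:ℝ)), pr5 ((n:ℝ)), pr6 ((n:ℝ))]
    ring
  set T : ℝ := (1 / ((n : ℝ) * p)) *
            (1 + q / ((n : ℝ) * p)
              + q * (1 + q) / ((n : ℝ) * p) ^ 2
              + q * (1 + 4 * q + q ^ 2) / ((n : ℝ) * p) ^ 3
              + q * (1 + q) * (1 + 10 * q + q ^ 2) / ((n : ℝ) * p) ^ 4
              + q * (1 + 26 * q + 66 * q ^ 2 + 26 * q ^ 3 + q ^ 4) / ((n : ℝ) * p) ^ 5) with hT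
  have heq : (∑ i ∈ Finset.Icc 1 n, (n.choose i : ℝ) * p ^ i * q ^ (n - i) / (i : ℝ)) - T
      = ((∑ i ∈ Icc 1 n, (n.choose i : ℝ) * p ^ i * q ^ (n - i) / (∏ j ∈ range 1, ((i:ℝ)+j+1)))
          - 1/((∏ j ∈ range 1, ((n:ℝ)+j+1)) * p^1))
      + ((∑ i ∈ Icc 1 n, (n.choose i : ℝ) * p ^ i * q ^ (n - i) / (∏ j ∈ range 2, ((i:ℝ)+j+1)))
          - 1/((∏ j ∈ range 2, ((n:ℝ)+j+1)) * p^2))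
      + 2 * ((∑ i ∈ Icc 1 n, (n.choose i : ℝ) * p ^ i * q ^ (n - i) / (∏ j ∈ range 3, ((i:ℝ)+j+1)))
          - 1/((∏ j ∈ range 3, ((n:ℝ)+j+1)) * p^3))
      + 6 * ((∑ i ∈ Icc 1 n, (n.choose i : ℝ) * p ^ i * q ^ (n - i) / (∏ j ∈ range 4, ((i:ℝ)+j+1)))
          - 1/((∏ j ∈ range 4, ((n:ℝ)+j+1)) * p^4))
      + 24 * ((∑ i ∈ Icc 1 n, (n.choose i : ℝ) * p ^ i * q ^ (n - i) / (∏ j ∈ range 5, ((i:ℝ)+j+1)))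
          - 1/((∏ j ∈ range 5, ((n:ℝ)+j+1)) * p^5))
      + 120 * ((∑ i ∈ Icc 1 n, (n.choose i : ℝ) * p ^ i * q ^ (n - i) / (∏ j ∈ range 6, ((i:ℝ)+j+1)))
          - 1/((∏ j ∈ range 6, ((n:ℝ)+j+1)) * p^6))
      + 720 * (∑ i ∈ Icc 1 n, (n.choose i : ℝ) * p ^ i * q ^ (n - i) / ((i:ℝ) * ∏ j ∈ range 6, ((i:ℝ)+j+1)))
      + ((1/(((n:ℝ)+1)*p) + 1/(((n:ℝ)+1)*((n:ℝ)+2)*p^2)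
          + 2/(((n:ℝ)+1)*((n:ℝ)+2)*((n:ℝ)+3)*p^3)
          + 6/(((n:ℝ)+1)*((n:ℝ)+2)*((n:ℝ)+3)*((n:ℝ)+4)*p^4)
          + 24/(((n:ℝ)+1)*((n:ℝ)+2)*((n:ℝ)+3)*((n:ℝ)+4)*((n:ℝ)+5)*p^5)
          + 120/(((n:ℝ)+1)*((n:ℝ)+2)*((n:ℝ)+3)*((n:ℝ)+4)*((n:ℝ)+5)*((n:ℝ)+6)*p^6)) - T) := by
    rw [hsplit, hA]
    ring
  rw [heq]
  have habs := abs_add8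
    ((∑ i ∈ Icc 1 n, (n.choose i : ℝ) * p ^ i * q ^ (n - i) / (∏ j ∈ range 1, ((i:ℝ)+j+1)))
        - 1/((∏ j ∈ range 1, ((n:ℝ)+j+1)) * p^1))
    ((∑ i ∈ Icc 1 n, (n.choose i : ℝ) * p ^ i * q ^ (n - i) / (∏ j ∈ range 2, ((i:ℝ)+j+1)))
        - 1/((∏ j ∈ range 2, ((n:ℝ)+j+1)) * p^2))
    (2 * ((∑ i ∈ Icc 1 n, (n.choose i : ℝ) * p ^ i * q ^ (n - i) / (∏ j ∈ range 3, ((i:ℝ)+j+1)))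
        - 1/((∏ j ∈ range 3, ((n:ℝ)+j+1)) * p^3)))
    (6 * ((∑ i ∈ Icc 1 n, (n.choose i : ℝ) * p ^ i * q ^ (n - i) / (∏ j ∈ range 4, ((i:ℝ)+j+1)))
        - 1/((∏ j ∈ range 4, ((n:ℝ)+j+1)) * p^4)))
    (24 * ((∑ i ∈ Icc 1 n, (n.choose i : ℝ) * p ^ i * q ^ (n - i) / (∏ j ∈ range 5, ((i:ℝ)+j+1)))
        - 1/((∏ j ∈ range 5, ((n:ℝ)+j+1)) * p^5)))
    (120 * ((∑ i ∈ Icc 1 n, (n.choose i : ℝ) * p ^ i * q ^ (n - i) / (∏ j ∈ range 6, ((i:ℝ)+j+1)))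
        - 1/((∏ j ∈ range 6, ((n:ℝ)+j+1)) * p^6)))
    (720 * (∑ i ∈ Icc 1 n, (n.choose i : ℝ) * p ^ i * q ^ (n - i) / ((i:ℝ) * ∏ j ∈ range 6, ((i:ℝ)+j+1))))
    ((1/(((n:ℝ)+1)*p) + 1/(((n:ℝ)+1)*((n:ℝ)+2)*p^2)
        + 2/(((n:ℝ)+1)*((n:ℝ)+2)*((n:ℝ)+3)*p^3)
        + 6/(((n:ℝ)+1)*((n:ℝ)+2)*((n:ℝ)+3)*((n:ℝ)+4)*p^4)
        + 24/(((n:ℝ)+1)*((n:ℝ)+2)*((n:ℝ)+3)*((n:ℝ)+4)*((n:ℝ)+5)*p^5)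
        + 120/(((n:ℝ)+1)*((n:ℝ)+2)*((n:ℝ)+3)*((n:ℝ)+4)*((n:ℝ)+5)*((n:ℝ)+6)*p^6)) - T)
  -- scale the coefficient'd abs terms
  have e2 : ∀ (c z : ℝ), 0 < c → |c * z| = c * |z| := by
    intro c z hc; rw [abs_mul, abs_of_pos hc]
  rw [e2 2 _ (by norm_num), e2 6 _ (by norm_num), e2 24 _ (by norm_num),
    e2 120 _ (by norm_num), e2 720 _ (by norm_num)] at habs
  have hRabs : |(∑ i ∈ Icc 1 n, (n.choose i : ℝ) * p ^ i * q ^ (n - i) / ((i:ℝ) * ∏ j ∈ range 6, ((i:ℝ)+j+1)))|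
      ≤ 8 / ((n:ℝ)^7 * p^7) := by
    rw [abs_of_nonneg hR.1]; exact hR.2
  -- p^1 vs p in hU1
  rw [pow_one] at hU1 hA heq habs ⊢
  have hfin : 154 * (7 * 8^7 * 8^6 / p^6 + 1) * q^n + 720 * (8 / ((n:ℝ)^7 * p^7))
        + 4805016 / (p^6 * (n:ℝ)^7)
      ≤ (154 * (7 * 8^7 * 8^6 / p^6 + 1) + 720 * (8/p^7) + 4805016 / p^6) / (n:ℝ)^7 := by
    have e3 : (154 * (7 * 8^7 * 8^6 / p^6 + 1) + 720 * (8/p^7) + 4805016 / p^6) / (n:ℝ)^7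
        = 154 * (7 * 8^7 * 8^6 / p^6 + 1) * (1/(n:ℝ)^7) + 720 * (8 / ((n:ℝ)^7 * p^7))
          + 4805016 / (p^6 * (n:ℝ)^7) := by
      field_simp
    rw [e3]
    have h4 : 154 * (7 * 8^7 * 8^6 / p^6 + 1) * q^n
        ≤ 154 * (7 * 8^7 * 8^6 / p^6 + 1) * (1/(n:ℝ)^7) := by
      apply mul_le_mul_of_nonneg_left hqx (by positivity)
    linarith
  linarith [habs, hU1, hU2, hU3, hU4, hU5, hU6, hRabs, hAT, hfin]
end

section
/- Fix a real r > 0 and an integer P ≥ 1. Then there exist a constant C > 0 and a real M₀ > 0 such that for all m ≥ M₀: | g_r(m) − (m/(m+1)^{r+1}) · Σ_{k=0}^{P−1} (−1)^k · C(r+k,k) · μ̃_k(m)/(m+1)^k | ≤ C · (m/(m+1)^{r+1}) · m^{−⌈P/2⌉}. That is, g_r(m) admits the asymptotic expansion g_r = (m/(m+1)^{r+1}) { Σ_{k=0}^{P−1} (−1)^k C(r+k,k) μ̃_k/(m+1)^k + O(1/m^{⌈P/2⌉}) }. -/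
open Real Finset
open Filter

noncomputable def pois (m : ℝ) (s : ℕ) : ℝ := Real.exp (-m) * m ^ s / (Nat.factorial s : ℝ)

lemma pois_nonneg {m : ℝ} (hm : 0 < m) (s : ℕ) : 0 ≤ pois m s := by
  unfold pois
  positivity

-- ratio test summability
lemma summable_base {m : ℝ} (hm : 0 < m) (c : ℝ) (hc : 0 < c) (k : ℕ) :
    Summable (fun s : ℕ => m ^ s / (Nat.factorial s : ℝ) * ((s : ℝ) + c) ^ k) := by
  apply summable_of_ratio_test_tendsto_lt_one (l := 0) one_pos
  · filter_upwards with n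
    have h1 : (0:ℝ) < m ^ n / n.factorial * ((n : ℝ) + c) ^ k := by positivity
    exact ne_of_gt h1
  · have key : ∀ n : ℕ, ‖m ^ (n+1) / ((n+1).factorial : ℝ) * ((n+1 : ℕ) + c) ^ k‖ /
        ‖m ^ n / (n.factorial : ℝ) * ((n : ℝ) + c) ^ k‖
        = (m / ((n:ℝ)+1)) * ((((n:ℝ)+1+c))/((n:ℝ)+c)) ^ k := by
      intro n
      have h1 : (0:ℝ) < m ^ n / n.factorial * ((n : ℝ) + c) ^ k := by positivity
      have h2 : (0:ℝ) < m ^ (n+1) / (n+1).factorial * (((n:ℝ)+1) + c) ^ k := by positivity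
      rw [Real.norm_of_nonneg h1.le]
      push_cast
      rw [Real.norm_of_nonneg (by positivity)]
      rw [Nat.factorial_succ]
      push_cast
      rw [div_pow]
      field_simp
      ring
    simp only [key]
    have l1 : Tendsto (fun n : ℕ => m / ((n:ℝ)+1)) atTop (nhds 0) := by
      apply Tendsto.div_atTop tendsto_const_nhds
      exact tendsto_atTop_add_const_right _ 1 tendsto_natCast_atTop_atTop
    have l2 : Tendsto (fun n : ℕ => ((((n:ℝ)+1+c))/((n:ℝ)+c)) ^ k) atTop (nhds 1) := by
      have : Tendsto (fun n : ℕ => ((n:ℝ)+1+c)/((n:ℝ)+c)) atTop (nhds 1) := by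
        have h : ∀ᶠ n : ℕ in atTop, ((n:ℝ)+1+c)/((n:ℝ)+c) = 1 + 1/((n:ℝ)+c) := by
          filter_upwards with n
          have : (0:ℝ) < (n:ℝ) + c := by positivity
          field_simp; ring
        rw [tendsto_congr' h]
        have : Tendsto (fun n : ℕ => 1/((n:ℝ)+c)) atTop (nhds 0) := by
          apply Tendsto.div_atTop tendsto_const_nhds
          exact tendsto_atTop_add_const_right _ c tendsto_natCast_atTop_atTop
        simpa using (tendsto_const_nhds.add this)
      simpa using this.pow k
    simpa using l1.mul l2

lemma summable_pois_mul {m : ℝ} (hm : 0 < m) {f : ℕ → ℝ} {c A : ℝ} (hc : 0 < c) {k : ℕ}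
    (hf : ∀ s, |f s| ≤ A * ((s : ℝ) + c) ^ k) : Summable (fun s => pois m s * f s) := by
  apply Summable.of_abs
  apply Summable.of_nonneg_of_le (fun s => abs_nonneg _) (fun s => ?_)
    (((summable_base hm c hc k).mul_left (Real.exp (-m) * A)))
  have h1 : |pois m s * f s| = pois m s * |f s| := by
    rw [abs_mul, abs_of_nonneg (pois_nonneg hm s)]
  rw [h1]
  have h2 := mul_le_mul_of_nonneg_left (hf s) (pois_nonneg hm s)
  refine h2.trans (le_of_eq ?_)
  unfold pois
  ring

lemma tsum_pois {m : ℝ} (hm : 0 < m) : ∑' s : ℕ, pois m s = 1 := by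
  unfold pois
  have h : ∀ s : ℕ, Real.exp (-m) * m ^ s / (Nat.factorial s : ℝ)
      = Real.exp (-m) * (m ^ s / (Nat.factorial s : ℝ)) := fun s => by ring
  simp only [h]
  rw [tsum_mul_left]
  have : ∑' s : ℕ, m ^ s / (Nat.factorial s : ℝ) = Real.exp m := by
    rw [Real.exp_eq_exp_ℝ, NormedSpace.exp_eq_tsum_div]
  rw [this, ← Real.exp_add]
  simp

noncomputable def cmom (m : ℝ) (k : ℕ) : ℝ := ∑' s : ℕ, pois m s * ((s : ℝ) - m) ^ k

lemma summable_cmom {m : ℝ} (hm : 0 < m) (k : ℕ) :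
    Summable (fun s : ℕ => pois m s * ((s : ℝ) - m) ^ k) := by
  apply summable_pois_mul hm (c := m) (A := 1) hm (k := k)
  intro s
  rw [one_mul, abs_pow]
  apply pow_le_pow_left₀ (abs_nonneg _)
  rw [abs_sub_comm]
  refine (abs_sub _ _).trans ?_
  · simp [abs_of_nonneg hm.le, abs_of_nonneg (Nat.cast_nonneg s : (0:ℝ) ≤ s)]
    linarith [hm.le]

lemma summable_shift {m : ℝ} (hm : 0 < m) (k : ℕ) :
    Summable (fun t : ℕ => pois m t * ((t : ℝ) + 1 - m) ^ k) := by
  apply summable_pois_mul hm (c := m + 1) (A := 1) (by linarith) (k := k)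
  intro t
  rw [one_mul, abs_pow]
  apply pow_le_pow_left₀ (abs_nonneg _)
  have h0 : (0:ℝ) ≤ (t:ℝ) := Nat.cast_nonneg t
  rw [abs_le]; constructor <;> linarith

lemma summable_mul_s {m : ℝ} (hm : 0 < m) (k : ℕ) :
    Summable (fun s : ℕ => pois m s * ((s : ℝ) * ((s : ℝ) - m) ^ k)) := by
  apply summable_pois_mul hm (c := m) (A := 1) hm (k := k + 1)
  intro s
  rw [one_mul, abs_mul, abs_pow, pow_succ, mul_comm (((s:ℝ)+m)^k) _]
  have h0 : (0:ℝ) ≤ (s:ℝ) := Nat.cast_nonneg s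
  have h1 : |(s:ℝ)| ≤ (s:ℝ) + m := by rw [abs_of_nonneg h0]; linarith
  have h2 : |(s:ℝ) - m| ^ k ≤ ((s:ℝ) + m) ^ k := by
    apply pow_le_pow_left₀ (abs_nonneg _)
    rw [abs_le]; constructor <;> linarith
  exact mul_le_mul h1 h2 (by positivity) (by linarith)

lemma cmom_rec {m : ℝ} (hm : 0 < m) (k : ℕ) :
    cmom m (k + 1) = m * ∑ j ∈ Finset.range k, (Nat.choose k j : ℝ) * cmom m j := by
  have hsplit : ∀ s : ℕ, pois m s * ((s : ℝ) - m) ^ (k+1)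
      = pois m s * ((s : ℝ) * ((s : ℝ) - m) ^ k) - m * (pois m s * ((s : ℝ) - m) ^ k) := by
    intro s; rw [pow_succ]; ring
  have e1 : cmom m (k+1) = (∑' s : ℕ, pois m s * ((s : ℝ) * ((s : ℝ) - m) ^ k))
      - m * cmom m k := by
    unfold cmom
    simp only [hsplit]
    rw [Summable.tsum_sub (summable_mul_s hm k) ((summable_cmom hm k).mul_left m), tsum_mul_left]
  -- index shift for the first tsum
  have key : ∀ t : ℕ, pois m (t+1) * (((t:ℕ)+1 : ℝ) * (((t:ℕ)+1 : ℝ) - m) ^ k)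
      = m * (pois m t * ((t : ℝ) + 1 - m) ^ k) := by
    intro t
    unfold pois
    rw [Nat.factorial_succ]
    push_cast
    have h1 : ((t:ℝ) + 1) * (t.factorial : ℝ) ≠ 0 := by positivity
    field_simp
    ring
  have e2 : (∑' s : ℕ, pois m s * ((s : ℝ) * ((s : ℝ) - m) ^ k))
      = m * ∑' t : ℕ, pois m t * ((t : ℝ) + 1 - m) ^ k := by
    rw [Summable.tsum_eq_zero_add (summable_mul_s hm k)]
    push_cast
    simp only [key]
    rw [tsum_mul_left]
    simp
  have e3 : (∑' t : ℕ, pois m t * ((t : ℝ) + 1 - m) ^ k)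
      = ∑ j ∈ Finset.range (k+1), (Nat.choose k j : ℝ) * cmom m j := by
    have hb : ∀ t : ℕ, pois m t * ((t : ℝ) + 1 - m) ^ k
        = ∑ j ∈ Finset.range (k+1), (Nat.choose k j : ℝ) * (pois m t * ((t:ℝ) - m) ^ j) := by
      intro t
      have := add_pow ((t:ℝ) - m) 1 k
      simp only [one_pow, mul_one] at this
      have harg : (t:ℝ) + 1 - m = ((t:ℝ) - m) + 1 := by ring
      rw [harg, this, Finset.mul_sum]
      apply Finset.sum_congr rfl
      intro j hj
      ring
    simp only [hb]
    rw [Summable.tsum_finsetSum (fun j _ => ((summable_cmom hm j).mul_left _))]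
    apply Finset.sum_congr rfl
    intro j hj
    rw [tsum_mul_left]
    rfl
  rw [e1, e2, e3, Finset.sum_range_succ]
  simp only [Nat.choose_self, Nat.cast_one, one_mul]
  ring

lemma cmom_zero {m : ℝ} (hm : 0 < m) : cmom m 0 = 1 := by
  unfold cmom
  simp only [pow_zero, mul_one]
  exact tsum_pois hm

lemma cmom_bound (k : ℕ) : ∃ B > (0:ℝ), ∀ i ≤ k, ∀ m : ℝ, 1 ≤ m →
    |cmom m i| ≤ B * m ^ (i / 2) := by
  induction k with
  | zero =>
    refine ⟨1, one_pos, ?_⟩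
    intro i hi m hm
    interval_cases i
    rw [cmom_zero (by linarith : (0:ℝ) < m)]
    simp
  | succ k ih =>
    obtain ⟨B, hB, h⟩ := ih
    refine ⟨2 ^ k * B, by positivity, ?_⟩
    intro i hi m hm
    have hm0 : (0:ℝ) < m := by linarith
    have h2k : (1:ℝ) ≤ 2 ^ k := one_le_pow₀ (by norm_num)
    rcases Nat.lt_succ_iff_lt_or_eq.mp (Nat.lt_succ_of_le hi) with hlt | heq
    · calc |cmom m i| ≤ B * m ^ (i / 2) := h i (Nat.lt_succ_iff.mp hlt) m hm
        _ ≤ 2 ^ k * B * m ^ (i / 2) := by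
            apply mul_le_mul_of_nonneg_right _ (by positivity)
            nlinarith
    · subst heq
      rcases Nat.eq_zero_or_pos k with hk0 | hkpos
      · subst hk0
        rw [cmom_rec hm0 0]
        simp only [Finset.range_zero, Finset.sum_empty, mul_zero, abs_zero]
        positivity
      · rw [cmom_rec hm0 k]
        rw [abs_mul, abs_of_nonneg hm0.le]
        have hstep : |∑ j ∈ Finset.range k, (Nat.choose k j : ℝ) * cmom m j|
            ≤ (2 ^ k * B) * m ^ ((k-1) / 2) := by
          refine (Finset.abs_sum_le_sum_abs _ _).trans ?_
          have hterm : ∀ j ∈ Finset.range k, |(Nat.choose k j : ℝ) * cmom m j|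
              ≤ (Nat.choose k j : ℝ) * (B * m ^ ((k-1) / 2)) := by
            intro j hj
            rw [abs_mul, abs_of_nonneg (by positivity : (0:ℝ) ≤ (Nat.choose k j : ℝ))]
            apply mul_le_mul_of_nonneg_left _ (by positivity)
            refine (h j (by have := Finset.mem_range.mp hj; omega) m hm).trans ?_
            apply mul_le_mul_of_nonneg_left _ hB.le
            exact pow_le_pow_right₀ hm (by have := Finset.mem_range.mp hj; omega)
          refine (Finset.sum_le_sum hterm).trans ?_
          rw [← Finset.sum_mul, mul_assoc]
          apply mul_le_mul_of_nonneg_right _ (by positivity)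
          have : (∑ j ∈ Finset.range k, (Nat.choose k j : ℝ))
              ≤ ∑ j ∈ Finset.range (k+1), (Nat.choose k j : ℝ) := by
            apply Finset.sum_le_sum_of_subset_of_nonneg
            · exact Finset.range_subset_range.mpr (Nat.le_succ k)
            · intro j _ _; positivity
          refine this.trans (le_of_eq ?_)
          rw [← Nat.cast_sum]
          rw [Nat.sum_range_choose]
          push_cast
          ring
        calc m * |∑ j ∈ Finset.range k, (Nat.choose k j : ℝ) * cmom m j|
            ≤ m * ((2 ^ k * B) * m ^ ((k-1) / 2)) :=
              mul_le_mul_of_nonneg_left hstep hm0.le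
          _ = (2 ^ k * B) * m ^ ((k-1) / 2 + 1) := by rw [pow_succ]; ring
          _ ≤ (2 ^ k * B) * m ^ ((k+1) / 2) := by
              apply mul_le_mul_of_nonneg_left _ (by positivity)
              exact pow_le_pow_right₀ hm (by omega)

noncomputable def bc (a : ℝ) (k : ℕ) : ℝ :=
  (-1) ^ k * (∏ j ∈ Finset.range k, (a + j)) / (Nat.factorial k : ℝ)

noncomputable def Dfun (a : ℝ) (P : ℕ) (x : ℝ) : ℝ :=
  (1 + x) ^ (-a) - ∑ k ∈ Finset.range P, bc a k * x ^ k

lemma bc_zero (a : ℝ) : bc a 0 = 1 := by simp [bc]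

lemma bc_succ_id (a : ℝ) (k : ℕ) : ((k : ℝ) + 1) * bc a (k + 1) = -a * bc (a + 1) k := by
  unfold bc
  rw [Finset.prod_range_succ' (fun j => a + (j:ℝ)), Nat.factorial_succ]
  push_cast
  have h1 : (Nat.factorial k : ℝ) ≠ 0 := by positivity
  have h2 : ∏ j ∈ Finset.range k, (a + ((j:ℝ) + 1)) = ∏ j ∈ Finset.range k, (a + 1 + (j:ℝ)) := by
    apply Finset.prod_congr rfl; intro j _; ring
  rw [h2]
  field_simp
  ring

lemma hasDerivAt_Dfun (a : ℝ) (P : ℕ) {x : ℝ} (hx : -1 < x) :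
    HasDerivAt (Dfun a (P + 1)) (-a * Dfun (a + 1) P x) x := by
  have h1x : (0:ℝ) < 1 + x := by linarith
  have hrpow : HasDerivAt (fun y : ℝ => (1 + y) ^ (-a)) (-a * (1 + x) ^ (-a - 1)) x := by
    have hbase : HasDerivAt (fun y : ℝ => 1 + y) 1 x := by
      simpa using (hasDerivAt_id x).const_add 1
    have := (Real.hasDerivAt_rpow_const (p := -a) (Or.inl h1x.ne')).comp x hbase
    simpa [mul_comm, Function.comp_def] using this
  have hterm : ∀ k : ℕ, bc a (k+1) * (((k:ℝ) + 1) * x ^ k) = -a * (bc (a+1) k * x ^ k) := by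
    intro k
    rw [show -a * (bc (a+1) k * x ^ k) = (-a * bc (a+1) k) * x ^ k by ring, ← bc_succ_id a k]
    ring
  have hpoly : HasDerivAt (fun y : ℝ => ∑ k ∈ Finset.range (P+1), bc a k * y ^ k)
      (∑ k ∈ Finset.range P, -a * (bc (a+1) k * x ^ k)) x := by
    have h0 : HasDerivAt (fun y : ℝ => ∑ k ∈ Finset.range (P+1), bc a k * y ^ k)
        (∑ k ∈ Finset.range (P+1), bc a k * ((k : ℝ) * x ^ (k - 1))) x := by
      apply HasDerivAt.fun_sum
      intro k _
      exact (hasDerivAt_pow k x).const_mul (bc a k)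
    have hsum : (∑ k ∈ Finset.range (P+1), bc a k * ((k : ℝ) * x ^ (k - 1)))
        = ∑ k ∈ Finset.range P, -a * (bc (a+1) k * x ^ k) := by
      rw [Finset.sum_range_succ' (fun k => bc a k * ((k : ℝ) * x ^ (k - 1)))]
      simp only [Nat.cast_zero, zero_mul, mul_zero, add_zero, Nat.cast_add, Nat.cast_one,
        Nat.add_sub_cancel]
      exact Finset.sum_congr rfl (fun k _ => hterm k)
    rwa [hsum] at h0
  have := hrpow.sub hpoly
  have heq : -a * (1 + x) ^ (-a - 1) - (∑ k ∈ Finset.range P, -a * (bc (a+1) k * x ^ k))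
      = -a * Dfun (a + 1) P x := by
    unfold Dfun
    rw [← Finset.mul_sum, show -(a+1) = -a - 1 by ring]
    ring
  rw [heq] at this
  exact this

lemma Dfun_bound (P : ℕ) : ∀ a : ℝ, 0 < a → ∃ K > (0:ℝ), ∀ x : ℝ, -(1/2 : ℝ) ≤ x →
    |Dfun a P x| ≤ K * |x| ^ P := by
  induction P with
  | zero =>
    intro a ha
    refine ⟨(2:ℝ) ^ a, Real.rpow_pos_of_pos two_pos a, ?_⟩
    intro x hx
    have h1x : (0:ℝ) < 1 + x := by linarith
    have hD : Dfun a 0 x = (1 + x) ^ (-a) := by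
      unfold Dfun; simp
    rw [hD, pow_zero, mul_one, abs_of_nonneg (Real.rpow_nonneg h1x.le _)]
    have : (1 + x) ^ (-a) ≤ ((1:ℝ)/2) ^ (-a) :=
      Real.rpow_le_rpow_of_nonpos (by norm_num) (by linarith) (by linarith)
    refine this.trans (le_of_eq ?_)
    rw [one_div, Real.inv_rpow (by norm_num), ← Real.rpow_neg (by norm_num), neg_neg]
  | succ P ih =>
    intro a ha
    obtain ⟨K, hK, hKb⟩ := ih (a + 1) (by linarith)
    refine ⟨a * K, by positivity, ?_⟩
    intro x hx
    have hs : Set.uIcc (0:ℝ) x ⊆ {t : ℝ | -(1/2 : ℝ) ≤ t} := by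
      intro t ht
      rw [Set.mem_uIcc] at ht
      rcases ht with ⟨h1, h2⟩ | ⟨h1, h2⟩ <;> simp only [Set.mem_setOf_eq] <;> linarith
    have hderiv : ∀ t ∈ Set.uIcc (0:ℝ) x,
        HasDerivWithinAt (Dfun a (P+1)) (-a * Dfun (a+1) P t) (Set.uIcc (0:ℝ) x) t := by
      intro t ht
      have : -(1/2 : ℝ) ≤ t := hs ht
      exact (hasDerivAt_Dfun a P (by linarith)).hasDerivWithinAt
    have hbound : ∀ t ∈ Set.uIcc (0:ℝ) x, ‖-a * Dfun (a+1) P t‖ ≤ a * (K * |x| ^ P) := by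
      intro t ht
      rw [norm_mul, Real.norm_eq_abs, Real.norm_eq_abs, abs_neg, abs_of_pos ha]
      apply mul_le_mul_of_nonneg_left _ ha.le
      refine (hKb t (hs ht)).trans ?_
      apply mul_le_mul_of_nonneg_left _ hK.le
      apply pow_le_pow_left₀ (abs_nonneg _)
      rw [Set.mem_uIcc] at ht
      rcases ht with ⟨h1, h2⟩ | ⟨h1, h2⟩ <;> rw [abs_le] <;> constructor <;>
        simp only [le_abs, abs_le, neg_le] <;> first
          | (left; constructor <;> linarith)
          | (right; constructor <;> linarith)
          | (left; linarith)
          | (right; linarith)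
    have hmvt := (convex_uIcc (0:ℝ) x).norm_image_sub_le_of_norm_hasDerivWithin_le
      hderiv hbound (Set.left_mem_uIcc) (Set.right_mem_uIcc)
    have hD0 : Dfun a (P+1) 0 = 0 := by
      unfold Dfun
      rw [Finset.sum_range_succ' (fun k => bc a k * (0:ℝ) ^ k)]
      simp [bc_zero]
    rw [hD0, sub_zero, Real.norm_eq_abs, Real.norm_eq_abs, sub_zero] at hmvt
    refine hmvt.trans (le_of_eq ?_)
    rw [pow_succ]
    ring

lemma Dfun_global (a K : ℝ) (P N u v : ℕ) (hK : 0 < K) (huv : u + v = P + 1)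
    (hKb : ∀ x : ℝ, -(1/2 : ℝ) ≤ x → |Dfun a (P+1) x| ≤ K * |x| ^ (P+1)) :
    ∀ x : ℝ, -1 < x →
      |Dfun a (P+1) x| ≤ K / 2 * (x ^ (2*u) + x ^ (2*v))
        + 4 ^ N * x ^ (2*N) * ((1+x) ^ (-a) + ∑ k ∈ Finset.range (P+1), |bc a k|) := by
  intro x hx
  have h1x : (0:ℝ) < 1 + x := by linarith
  have hC₁ : (0:ℝ) ≤ ∑ k ∈ Finset.range (P+1), |bc a k| :=
    Finset.sum_nonneg (fun k _ => abs_nonneg _)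
  have hrpow_nonneg : (0:ℝ) ≤ (1+x) ^ (-a) := Real.rpow_nonneg h1x.le _
  have heven : ∀ j : ℕ, |x| ^ (2*j) = x ^ (2*j) := by
    intro j
    rw [pow_mul, pow_mul, sq_abs]
  have heven_nonneg : ∀ j : ℕ, (0:ℝ) ≤ x ^ (2*j) := by
    intro j; rw [← heven]; positivity
  rcases le_or_gt (-(1/2 : ℝ)) x with hcase | hcase
  · refine (hKb x hcase).trans ?_
    have key : K * |x| ^ (P+1) ≤ K / 2 * (x ^ (2*u) + x ^ (2*v)) := by
      have h1 : |x| ^ (P+1) = |x| ^ u * |x| ^ v := by rw [← pow_add, huv]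
      have h2 : 2 * (|x| ^ u * |x| ^ v) ≤ (|x| ^ u) ^ 2 + (|x| ^ v) ^ 2 := by
        nlinarith [sq_nonneg (|x| ^ u - |x| ^ v)]
      have h3 : (|x| ^ u) ^ 2 = x ^ (2*u) := by
        rw [← pow_mul, mul_comm u 2, heven]
      have h4 : (|x| ^ v) ^ 2 = x ^ (2*v) := by
        rw [← pow_mul, mul_comm v 2, heven]
      rw [h1]
      nlinarith [h2, h3, h4]
    refine key.trans ?_
    have : (0:ℝ) ≤ 4 ^ N * x ^ (2*N) * ((1+x) ^ (-a) + ∑ k ∈ Finset.range (P+1), |bc a k|) := by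
      have := heven_nonneg N
      positivity
    linarith
  · -- -1 < x < -1/2
    have hxabs : |x| ≤ 1 := by rw [abs_le]; constructor <;> linarith
    have hbig : (1:ℝ) ≤ 4 ^ N * x ^ (2*N) := by
      have h12 : (1/2 : ℝ) ≤ |x| := by rw [le_abs]; right; linarith
      have : ((1:ℝ)/2) ^ (2*N) ≤ |x| ^ (2*N) := pow_le_pow_left₀ (by norm_num) h12 _
      rw [heven] at this
      calc (1:ℝ) = 4 ^ N * ((1:ℝ)/2) ^ (2*N) := by
            rw [pow_mul]
            norm_num
            rw [← mul_pow]
            norm_num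
          _ ≤ 4 ^ N * x ^ (2*N) := by
            apply mul_le_mul_of_nonneg_left this (by positivity)
    have hD : |Dfun a (P+1) x| ≤ (1+x) ^ (-a) + ∑ k ∈ Finset.range (P+1), |bc a k| := by
      unfold Dfun
      refine (abs_sub _ _).trans ?_
      gcongr
      · rw [abs_of_nonneg hrpow_nonneg]
      · refine (Finset.abs_sum_le_sum_abs _ _).trans ?_
        apply Finset.sum_le_sum
        intro k _
        rw [abs_mul]
        calc |bc a k| * |x ^ k| ≤ |bc a k| * 1 := by
              apply mul_le_mul_of_nonneg_left _ (abs_nonneg _)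
              rw [abs_pow]
              exact pow_le_one₀ (abs_nonneg _) hxabs
          _ = |bc a k| := mul_one _
    refine hD.trans ?_
    have h2 : (1+x) ^ (-a) + ∑ k ∈ Finset.range (P+1), |bc a k|
        ≤ 4 ^ N * x ^ (2*N) * ((1+x) ^ (-a) + ∑ k ∈ Finset.range (P+1), |bc a k|) := by
      apply le_mul_of_one_le_left (by positivity) hbig
    have h3 : (0:ℝ) ≤ K / 2 * (x ^ (2*u) + x ^ (2*v)) := by
      have := heven_nonneg u
      have := heven_nonneg v
      positivity
    linarith

set_option maxHeartbeats 2000000 in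
/-- Asymptotic expansion of the `r`-th inverse moment of the positive Poisson
distribution: `g_r = (m/(m+1)^{r+1}) { Σ_{k=0}^{P-1} (-1)^k C(r+k,k) μ̃_k/(m+1)^k
+ O(1/m^{⌈P/2⌉}) }`. -/
theorem inverse_moment_poisson_asymptotic_expansion
    (r : ℝ) (hr : 0 < r) (P : ℕ) (hP : 1 ≤ P) :
    ∃ C > (0:ℝ), ∃ M₀ > (0:ℝ), ∀ m : ℝ, M₀ ≤ m →
      |(∑' s : ℕ, Real.exp (-m) * m ^ (s + 1) / (Nat.factorial (s + 1) : ℝ)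
            / ((s : ℝ) + 1) ^ r)
        - (m / (m + 1) ^ (r + 1)) *
            ∑ k ∈ Finset.range P, (-1 : ℝ) ^ k *
              ((∏ j ∈ Finset.range k, (r + (j : ℝ) + 1)) / (Nat.factorial k : ℝ)) *
              (∑' s : ℕ, Real.exp (-m) * m ^ s / (Nat.factorial s : ℝ) * ((s : ℝ) - m) ^ k)
              / (m + 1) ^ k|
      ≤ C * (m / (m + 1) ^ (r + 1)) / m ^ ((P + 1) / 2) := by
  have ha0 : (0:ℝ) < r + 1 := by linarith
  set a : ℝ := r + 1 with ha_def
  set q : ℕ := (P + 1) / 2 with hq_def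
  set u : ℕ := (P + 2) / 2 with hu_def
  set v : ℕ := (P + 1) / 2 with hv_def
  have huv : u + v = P + 1 := by omega
  set ca : ℕ := Nat.ceil a with hca_def
  set N : ℕ := ca + q with hN_def
  obtain ⟨K, hK, hKb⟩ := Dfun_bound (P + 1) a ha0
  obtain ⟨B, hB, hBb⟩ := cmom_bound (2*N + 2*u + P)
  set C₁ : ℝ := ∑ k ∈ Finset.range (P+1), |bc a k| with hC₁_def
  have hC₁ : (0:ℝ) ≤ C₁ := Finset.sum_nonneg (fun k _ => abs_nonneg _)
  have h2a : (0:ℝ) < (2:ℝ) ^ a := Real.rpow_pos_of_pos two_pos a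
  refine ⟨B * (|bc a P| + K + 4 ^ N * ((2:ℝ) ^ a + C₁)), ?_, 1, one_pos, ?_⟩
  · have h : (0:ℝ) < |bc a P| + K + 4 ^ N * ((2:ℝ) ^ a + C₁) := by positivity
    positivity
  intro m hm1
  have hm0 : (0:ℝ) < m := by linarith
  have hM : (0:ℝ) < m + 1 := by linarith
  have hMr : (0:ℝ) < (m + 1) ^ a := Real.rpow_pos_of_pos hM a
  set X : ℕ → ℝ := fun s => ((s:ℝ) - m) / (m + 1) with hX_def
  have h1X : ∀ s : ℕ, 1 + X s = ((s:ℝ) + 1) / (m + 1) := by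
    intro s; simp only [hX_def]; rw [one_add_div hM.ne']; congr 1; ring
  have h1Xpos : ∀ s : ℕ, 0 < 1 + X s := by
    intro s; rw [h1X]; positivity
  have hXgt : ∀ s : ℕ, -1 < X s := by
    intro s; have := h1Xpos s; linarith
  have hXeven : ∀ s (j : ℕ), (0:ℝ) ≤ X s ^ (2*j) := by
    intro s j; rw [pow_mul]; positivity
  have hXfun : ∀ k : ℕ, (fun s : ℕ => pois m s * X s ^ k)
      = fun s : ℕ => (pois m s * ((s:ℝ) - m) ^ k) * (((m+1):ℝ) ^ k)⁻¹ := by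
    intro k; funext s
    rw [hX_def, div_pow]; ring
  have Spow : ∀ k : ℕ, Summable (fun s : ℕ => pois m s * X s ^ k) := by
    intro k; rw [hXfun k]; exact (summable_cmom hm0 k).mul_right _
  have Stsum : ∀ k : ℕ, ∑' s : ℕ, pois m s * X s ^ k = cmom m k / (m+1) ^ k := by
    intro k; rw [hXfun k, tsum_mul_right]
    rw [div_eq_mul_inv]; rfl
  have hEb : ∀ s : ℕ, (1 + X s) ^ (-a) ≤ (m+1) ^ a := by
    intro s
    have hss : (0:ℝ) ≤ (s:ℝ) := Nat.cast_nonneg s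
    have h1 : (1:ℝ)/(m+1) ≤ 1 + X s := by
      rw [h1X]
      gcongr
      linarith
    have h2 : (1 + X s) ^ (-a) ≤ ((1:ℝ)/(m+1)) ^ (-a) :=
      Real.rpow_le_rpow_of_nonpos (by positivity) h1 (by linarith)
    refine h2.trans (le_of_eq ?_)
    rw [one_div, Real.inv_rpow hM.le, ← Real.rpow_neg hM.le, neg_neg]
  have hEnn : ∀ s : ℕ, (0:ℝ) ≤ (1 + X s) ^ (-a) := fun s => Real.rpow_nonneg (h1Xpos s).le _
  have Srpow : Summable (fun s : ℕ => pois m s * (1 + X s) ^ (-a)) := by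
    apply summable_pois_mul hm0 (c := 1) (A := (m+1) ^ a) one_pos (k := 0)
    intro s
    rw [pow_zero, mul_one, abs_of_nonneg (hEnn s)]
    exact hEb s
  have hpoint : ∀ s : ℕ, |Dfun a (P+1) (X s)|
      ≤ K/2 * (X s ^ (2*u) + X s ^ (2*v)) + 4 ^ N * X s ^ (2*N) * ((m+1) ^ a + C₁) := by
    intro s
    refine (Dfun_global a K P N u v hK huv hKb (X s) (hXgt s)).trans ?_
    have h2 : (1 + X s) ^ (-a) + C₁ ≤ (m+1) ^ a + C₁ := by linarith [hEb s]
    have h3 := mul_le_mul_of_nonneg_left h2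
      (mul_nonneg (by positivity : (0:ℝ) ≤ (4:ℝ)^N) (hXeven s N))
    rw [mul_assoc (4 ^ N : ℝ), mul_assoc (4 ^ N : ℝ)]
    linarith
  set gf : ℕ → ℝ := fun s => K/2 * (pois m s * X s ^ (2*u)) + K/2 * (pois m s * X s ^ (2*v))
      + (4 ^ N * ((m+1) ^ a + C₁)) * (pois m s * X s ^ (2*N)) with hgf_def
  have Sgf : Summable gf := by
    apply Summable.add
    apply Summable.add
    · exact (Spow (2*u)).mul_left _
    · exact (Spow (2*v)).mul_left _
    · exact (Spow (2*N)).mul_left _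
  have hgb : ∀ s : ℕ, |pois m s * Dfun a (P+1) (X s)| ≤ gf s := by
    intro s
    rw [abs_mul, abs_of_nonneg (pois_nonneg hm0 s)]
    refine (mul_le_mul_of_nonneg_left (hpoint s) (pois_nonneg hm0 s)).trans (le_of_eq ?_)
    rw [hgf_def]; ring
  have SD1abs : Summable (fun s : ℕ => |pois m s * Dfun a (P+1) (X s)|) :=
    Summable.of_nonneg_of_le (fun s => abs_nonneg _) hgb Sgf
  have SD1 : Summable (fun s : ℕ => pois m s * Dfun a (P+1) (X s)) :=
    Summable.of_abs SD1abs
  have hDsplit : ∀ x : ℝ, Dfun a P x = bc a P * x ^ P + Dfun a (P+1) x := by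
    intro x
    unfold Dfun
    rw [Finset.sum_range_succ]
    ring
  have SbcP : Summable (fun s : ℕ => pois m s * (bc a P * X s ^ P)) := by
    apply Summable.congr ((Spow P).mul_left (bc a P))
    intro s; ring
  have SD : Summable (fun s : ℕ => pois m s * Dfun a P (X s)) := by
    apply Summable.congr (SbcP.add SD1)
    intro s; rw [hDsplit]; ring
  have hA : ∀ s : ℕ, Real.exp (-m) * m ^ (s + 1) / (Nat.factorial (s + 1) : ℝ)
        / ((s : ℝ) + 1) ^ r
      = (m / (m + 1) ^ a) * (pois m s * (1 + X s) ^ (-a)) := by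
    intro s
    have hc : (0:ℝ) < (s:ℝ) + 1 := by positivity
    have hE : (1 + X s) ^ (-a) = (m+1) ^ a / ((s:ℝ)+1) ^ a := by
      rw [h1X, Real.rpow_neg (by positivity), Real.div_rpow hc.le hM.le, inv_div]
    rw [hE]
    have hcr : ((s:ℝ)+1) ^ a = ((s:ℝ)+1) ^ r * ((s:ℝ)+1) := by
      rw [ha_def, Real.rpow_add hc, Real.rpow_one]
    have hfac : ((Nat.factorial (s+1) : ℕ) : ℝ) = ((s:ℝ)+1) * (Nat.factorial s : ℝ) := by
      rw [Nat.factorial_succ]; push_cast; ring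
    have hmp : m ^ (s+1) = m ^ s * m := pow_succ m s
    unfold pois
    rw [hcr, hfac, hmp]
    have h1 : ((s:ℝ)+1) ^ r ≠ 0 := ne_of_gt (Real.rpow_pos_of_pos hc r)
    have h2 : (m+1) ^ a ≠ 0 := ne_of_gt hMr
    have h3 : (Nat.factorial s : ℝ) ≠ 0 := by positivity
    field_simp
  have hTerm1 : (∑' s : ℕ, Real.exp (-m) * m ^ (s + 1) / (Nat.factorial (s + 1) : ℝ)
        / ((s : ℝ) + 1) ^ r)
      = (m / (m + 1) ^ a) * ∑' s : ℕ, pois m s * (1 + X s) ^ (-a) := by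
    rw [← tsum_mul_left]
    exact tsum_congr hA
  have hbc : ∀ k : ℕ, (-1:ℝ) ^ k * ((∏ j ∈ Finset.range k, (r + (j:ℝ) + 1))
      / (Nat.factorial k : ℝ)) = bc a k := by
    intro k
    unfold bc
    rw [show (∏ j ∈ Finset.range k, (r + (j:ℝ) + 1)) = ∏ j ∈ Finset.range k, (a + (j:ℝ))
      from Finset.prod_congr rfl (fun j _ => by rw [ha_def]; ring)]
    ring
  have hSum : (∑ k ∈ Finset.range P, (-1 : ℝ) ^ k *
        ((∏ j ∈ Finset.range k, (r + (j : ℝ) + 1)) / (Nat.factorial k : ℝ)) *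
        (∑' s : ℕ, Real.exp (-m) * m ^ s / (Nat.factorial s : ℝ) * ((s : ℝ) - m) ^ k)
        / (m + 1) ^ k)
      = ∑' s : ℕ, pois m s * ∑ k ∈ Finset.range P, bc a k * X s ^ k := by
    have hstep1 : ∀ k : ℕ, (-1 : ℝ) ^ k *
        ((∏ j ∈ Finset.range k, (r + (j : ℝ) + 1)) / (Nat.factorial k : ℝ)) *
        (∑' s : ℕ, Real.exp (-m) * m ^ s / (Nat.factorial s : ℝ) * ((s : ℝ) - m) ^ k)
        / (m + 1) ^ k
        = ∑' s : ℕ, bc a k * (pois m s * X s ^ k) := by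
      intro k
      rw [tsum_mul_left]
      have hcm : (∑' s : ℕ, Real.exp (-m) * m ^ s / (Nat.factorial s : ℝ) * ((s : ℝ) - m) ^ k)
          = cmom m k := rfl
      rw [hcm, Stsum k, hbc k]
      ring
    simp only [hstep1]
    rw [← Summable.tsum_finsetSum (fun k _ => ((Spow k).mul_left (bc a k)))]
    apply tsum_congr
    intro s
    rw [Finset.mul_sum]
    exact Finset.sum_congr rfl (fun k _ => by ring)
  have SsumP : Summable (fun s : ℕ => pois m s * ∑ k ∈ Finset.range P, bc a k * X s ^ k) := by
    apply Summable.congr (summable_sum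
      (f := fun (k : ℕ) (s : ℕ) => bc a k * (pois m s * X s ^ k))
      (fun k (_ : k ∈ Finset.range P) => (Spow k).mul_left (bc a k)))
    intro s
    rw [Finset.mul_sum]
    exact Finset.sum_congr rfl (fun k _ => by ring)
  have hDiff : (∑' s : ℕ, Real.exp (-m) * m ^ (s + 1) / (Nat.factorial (s + 1) : ℝ)
        / ((s : ℝ) + 1) ^ r)
      - (m / (m + 1) ^ a) *
          (∑ k ∈ Finset.range P, (-1 : ℝ) ^ k *
            ((∏ j ∈ Finset.range k, (r + (j : ℝ) + 1)) / (Nat.factorial k : ℝ)) *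
            (∑' s : ℕ, Real.exp (-m) * m ^ s / (Nat.factorial s : ℝ) * ((s : ℝ) - m) ^ k)
            / (m + 1) ^ k)
      = (m / (m + 1) ^ a) * ∑' s : ℕ, pois m s * Dfun a P (X s) := by
    rw [hTerm1, hSum, ← mul_sub]
    congr 1
    rw [← Summable.tsum_sub Srpow SsumP]
    apply tsum_congr
    intro s
    unfold Dfun
    ring
  rw [hDiff]
  have hfrac : ∀ i l : ℕ, i + q ≤ l → m ^ i / (m+1) ^ l ≤ 1 / m ^ q := by
    intro i l hil
    rw [div_le_div_iff₀ (by positivity) (by positivity), one_mul, ← pow_add]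
    calc m ^ (i + q) ≤ m ^ l := pow_le_pow_right₀ hm1 hil
      _ ≤ (m+1) ^ l := pow_le_pow_left₀ hm0.le (by linarith) l
  have hcmom_le : ∀ i : ℕ, i ≤ 2*N + 2*u + P → |cmom m i| ≤ B * m ^ (i / 2) :=
    fun i hi => hBb i hi m hm1
  have hcm_nn : ∀ j : ℕ, (0:ℝ) ≤ cmom m (2*j) := by
    intro j
    apply tsum_nonneg
    intro s
    apply mul_nonneg (pois_nonneg hm0 s)
    rw [pow_mul]; positivity
  have hmom : ∀ j : ℕ, 2*j ≤ 2*N + 2*u + P →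
      cmom m (2*j) / (m+1) ^ (2*j) ≤ B * (m ^ j / (m+1) ^ (2*j)) := by
    intro j hj
    rw [show B * (m ^ j / (m+1) ^ (2*j)) = (B * m ^ j) / (m+1) ^ (2*j) by ring]
    gcongr
    refine (le_abs_self _).trans ?_
    have h := hcmom_le (2*j) hj
    have hj2 : (2*j) / 2 = j := by omega
    rwa [hj2] at h
  have hS : |∑' s : ℕ, pois m s * Dfun a P (X s)|
      ≤ B * (|bc a P| + K + 4 ^ N * ((2:ℝ) ^ a + C₁)) * (1 / m ^ q) := by
    have hsplit : (∑' s : ℕ, pois m s * Dfun a P (X s))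
        = bc a P * (cmom m P / (m+1) ^ P) + ∑' s : ℕ, pois m s * Dfun a (P+1) (X s) := by
      rw [← Stsum P, ← tsum_mul_left, ← Summable.tsum_add (SbcP.congr (fun s => by ring)) SD1]
      apply tsum_congr
      intro s
      rw [hDsplit]
      ring
    rw [hsplit]
    have hT0 : |bc a P * (cmom m P / (m+1) ^ P)| ≤ |bc a P| * B * (1 / m ^ q) := by
      rw [abs_mul, abs_div, abs_of_nonneg (by positivity : (0:ℝ) ≤ (m+1)^P), mul_assoc]
      apply mul_le_mul_of_nonneg_left _ (abs_nonneg _)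
      calc |cmom m P| / (m+1) ^ P ≤ (B * m ^ (P / 2)) / (m+1) ^ P := by
            gcongr
            exact hcmom_le P (by omega)
        _ = B * (m ^ (P / 2) / (m+1) ^ P) := by ring
        _ ≤ B * (1 / m ^ q) := by
            apply mul_le_mul_of_nonneg_left _ hB.le
            exact hfrac (P / 2) P (by omega)
    have hMa : (m+1) ^ a ≤ (2:ℝ) ^ a * m ^ ca := by
      have h1 : (m+1) ^ a ≤ ((2:ℝ)*m) ^ a := Real.rpow_le_rpow hM.le (by linarith) (by linarith)
      rw [Real.mul_rpow (by norm_num) hm0.le] at h1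
      refine h1.trans ?_
      apply mul_le_mul_of_nonneg_left _ h2a.le
      rw [← Real.rpow_natCast m ca]
      exact Real.rpow_le_rpow_of_exponent_le hm1 (Nat.le_ceil a)
    have hT1 : |∑' s : ℕ, pois m s * Dfun a (P+1) (X s)|
        ≤ (K * B + 4 ^ N * ((2:ℝ) ^ a + C₁) * B) * (1 / m ^ q) := by
      have h1 : |∑' s : ℕ, pois m s * Dfun a (P+1) (X s)|
          ≤ ∑' s : ℕ, |pois m s * Dfun a (P+1) (X s)| := by
        have hn : Summable (fun s : ℕ => ‖pois m s * Dfun a (P+1) (X s)‖) := by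
          simpa only [Real.norm_eq_abs] using SD1abs
        simpa only [Real.norm_eq_abs] using
          norm_tsum_le_tsum_norm (f := fun s : ℕ => pois m s * Dfun a (P+1) (X s)) hn
      refine h1.trans ((Summable.tsum_le_tsum hgb SD1abs Sgf).trans ?_)
      have h2 : (∑' s, gf s) = K/2 * (cmom m (2*u) / (m+1) ^ (2*u))
          + K/2 * (cmom m (2*v) / (m+1) ^ (2*v))
          + (4 ^ N * ((m+1) ^ a + C₁)) * (cmom m (2*N) / (m+1) ^ (2*N)) := by
        rw [hgf_def]
        rw [Summable.tsum_add (((Spow (2*u)).mul_left _).add ((Spow (2*v)).mul_left _))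
          ((Spow (2*N)).mul_left _)]
        rw [Summable.tsum_add ((Spow (2*u)).mul_left _) ((Spow (2*v)).mul_left _)]
        rw [tsum_mul_left, tsum_mul_left, tsum_mul_left, Stsum, Stsum, Stsum]
      rw [h2]
      have hu2 : cmom m (2*u) / (m+1) ^ (2*u) ≤ B * (1 / m ^ q) := by
        refine (hmom u (by omega)).trans ?_
        exact mul_le_mul_of_nonneg_left (hfrac u (2*u) (by omega)) hB.le
      have hv2 : cmom m (2*v) / (m+1) ^ (2*v) ≤ B * (1 / m ^ q) := by
        refine (hmom v (by omega)).trans ?_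
        exact mul_le_mul_of_nonneg_left (hfrac v (2*v) (by omega)) hB.le
      have hfr1 : m ^ ca * (m ^ N / (m+1) ^ (2*N)) ≤ 1 / m ^ q := by
        rw [show m ^ ca * (m ^ N / (m+1) ^ (2*N)) = m ^ (ca+N) / (m+1) ^ (2*N) by
          rw [pow_add]; ring]
        exact hfrac (ca+N) (2*N) (by omega)
      have hfr2 : m ^ N / (m+1) ^ (2*N) ≤ 1 / m ^ q := hfrac N (2*N) (by omega)
      have hT3 : (4 ^ N * ((m+1) ^ a + C₁)) * (cmom m (2*N) / (m+1) ^ (2*N))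
          ≤ 4 ^ N * ((2:ℝ) ^ a + C₁) * B * (1 / m ^ q) := by
        have hstep : (4 ^ N * ((m+1) ^ a + C₁)) * (cmom m (2*N) / (m+1) ^ (2*N))
            ≤ (4 ^ N * ((2:ℝ) ^ a * m ^ ca + C₁)) * (B * (m ^ N / (m+1) ^ (2*N))) := by
          apply mul_le_mul
          · apply mul_le_mul_of_nonneg_left _ (by positivity : (0:ℝ) ≤ (4:ℝ)^N)
            linarith
          · exact hmom N (by omega)
          · exact div_nonneg (hcm_nn N) (by positivity)
          · positivity
        refine hstep.trans ?_
        have e1 : (4 ^ N * ((2:ℝ) ^ a * m ^ ca + C₁)) * (B * (m ^ N / (m+1) ^ (2*N)))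
            = (4:ℝ) ^ N * B * ((2:ℝ) ^ a * (m ^ ca * (m ^ N / (m+1) ^ (2*N)))
              + C₁ * (m ^ N / (m+1) ^ (2*N))) := by ring
        rw [e1]
        have i1 := mul_le_mul_of_nonneg_left hfr1 h2a.le
        have i2 := mul_le_mul_of_nonneg_left hfr2 hC₁
        have i3 : (2:ℝ) ^ a * (m ^ ca * (m ^ N / (m+1) ^ (2*N)))
            + C₁ * (m ^ N / (m+1) ^ (2*N))
            ≤ (2:ℝ) ^ a * (1 / m ^ q) + C₁ * (1 / m ^ q) := add_le_add i1 i2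
        calc (4:ℝ) ^ N * B * ((2:ℝ) ^ a * (m ^ ca * (m ^ N / (m+1) ^ (2*N)))
              + C₁ * (m ^ N / (m+1) ^ (2*N)))
            ≤ (4:ℝ) ^ N * B * ((2:ℝ) ^ a * (1 / m ^ q) + C₁ * (1 / m ^ q)) := by
              apply mul_le_mul_of_nonneg_left i3 (by positivity)
          _ = 4 ^ N * ((2:ℝ) ^ a + C₁) * B * (1 / m ^ q) := by ring
      calc K/2 * (cmom m (2*u) / (m+1) ^ (2*u)) + K/2 * (cmom m (2*v) / (m+1) ^ (2*v))
            + (4 ^ N * ((m+1) ^ a + C₁)) * (cmom m (2*N) / (m+1) ^ (2*N))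
          ≤ K/2 * (B * (1 / m ^ q)) + K/2 * (B * (1 / m ^ q))
            + 4 ^ N * ((2:ℝ) ^ a + C₁) * B * (1 / m ^ q) := by
            have j1 := mul_le_mul_of_nonneg_left hu2 (by positivity : (0:ℝ) ≤ K/2)
            have j2 := mul_le_mul_of_nonneg_left hv2 (by positivity : (0:ℝ) ≤ K/2)
            linarith
        _ = (K * B + 4 ^ N * ((2:ℝ) ^ a + C₁) * B) * (1 / m ^ q) := by ring
    calc |bc a P * (cmom m P / (m+1) ^ P) + ∑' s : ℕ, pois m s * Dfun a (P+1) (X s)|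
        ≤ |bc a P * (cmom m P / (m+1) ^ P)| + |∑' s : ℕ, pois m s * Dfun a (P+1) (X s)| :=
          abs_add_le _ _
      _ ≤ |bc a P| * B * (1 / m ^ q) + (K * B + 4 ^ N * ((2:ℝ) ^ a + C₁) * B) * (1 / m ^ q) :=
          add_le_add hT0 hT1
      _ = B * (|bc a P| + K + 4 ^ N * ((2:ℝ) ^ a + C₁)) * (1 / m ^ q) := by ring
  rw [abs_mul, abs_of_nonneg (by positivity : (0:ℝ) ≤ m / (m+1) ^ a)]
  calc m / (m+1) ^ a * |∑' s : ℕ, pois m s * Dfun a P (X s)|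
      ≤ m / (m+1) ^ a * (B * (|bc a P| + K + 4 ^ N * ((2:ℝ) ^ a + C₁)) * (1 / m ^ q)) :=
        mul_le_mul_of_nonneg_left hS (by positivity)
    _ = B * (|bc a P| + K + 4 ^ N * ((2:ℝ) ^ a + C₁)) * (m / (m+1) ^ a) / m ^ q := by
        ring
end
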